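/- arXiv:1702.04678 — 7 statements merged into one kernel-verified Lean document; each statement's English description precedes it below -/
import Mathlib

section
/- Let 0 < ν ≤ 1 and N ∈ ℕ. There exists a constant C = C(ν, N) > 0 with the following property: for every N × N complex matrix 𝖠 with spectrum {λ₁, …, λ_r} ordered so that Re λ₁ ≤ … ≤ Re λ_r, with V_j ⊆ ℂ^N the generalized eigenspace of 𝖠 for λ_j and, for 1 ≤ k ≤ r, 𝖯_k : ℂ^N → ⊕_{j≤k} V_j the projection along ⊕_{j>k} V_j, if 1 ≤ k ≤ r − 1 and Re λ_{k+1} − Re λ_k ≥ ν, then ‖𝖯_k‖ ≤ C (1 + ‖𝖠‖)^N. -/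
open Polynomial

namespace SpectralProjBound

/-- contiguity of equal values -/
def Contig (a : ℕ → ℂ) : Prop := ∀ p q r : ℕ, p ≤ q → q ≤ r → a p = a r → a q = a p

/-- divided differences of the data `y ∘ a` with nodes `a`, where the data is "flat"
(all prescribed derivatives vanish at repeated nodes). -/
noncomputable def dd (a : ℕ → ℂ) (y : ℂ → ℂ) : ℕ → ℕ → ℂ
  | i, j =>
    if _h : j ≤ i then y (a i)
    else if a i = a j then 0
    else (dd a y (i+1) j - dd a y i (j-1)) / (a j - a i)
  termination_by i j => j - i
  decreasing_by all_goals omega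

lemma dd_of_le (a : ℕ → ℂ) (y : ℂ → ℂ) {i j : ℕ} (h : j ≤ i) : dd a y i j = y (a i) := by
  rw [dd]; simp [h]

lemma dd_diag (a : ℕ → ℂ) (y : ℂ → ℂ) (i : ℕ) : dd a y i i = y (a i) := dd_of_le a y le_rfl

lemma dd_of_eq (a : ℕ → ℂ) (y : ℂ → ℂ) {i j : ℕ} (h : i < j) (he : a i = a j) :
    dd a y i j = 0 := by
  rw [dd, dif_neg (by omega), if_pos he]

lemma dd_of_ne (a : ℕ → ℂ) (y : ℂ → ℂ) {i j : ℕ} (h : i < j) (he : a i ≠ a j) :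
    dd a y i j = (dd a y (i+1) j - dd a y i (j-1)) / (a j - a i) := by
  rw [dd, dif_neg (by omega), if_neg he]

lemma dd_star (a : ℕ → ℂ) (y : ℂ → ℂ) (hc : Contig a) {i j : ℕ} (h : i < j) :
    dd a y (i+1) j - dd a y i (j-1) = (a j - a i) * dd a y i j := by
  by_cases he : a i = a j
  · rw [dd_of_eq a y h he, mul_zero]
    rcases eq_or_lt_of_le (Nat.succ_le_of_lt h) with h1 | h1
    · subst h1
      rw [dd_diag, dd_of_le a y (by omega)]
      rw [show a (i+1) = a i from he.symm, sub_self]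
    · rw [dd_of_eq a y h1 (by rw [← he]; exact hc i (i+1) j (by omega) (by omega) he),
        dd_of_eq a y (by omega) ((hc i (j-1) j (by omega) (by omega) he).symm), sub_self]
  · rw [dd_of_ne a y h he, mul_div_cancel₀ _ (sub_ne_zero.mpr (Ne.symm he))]

/-- Newton basis polynomial -/
noncomputable def om (a : ℕ → ℂ) (i j : ℕ) : Polynomial ℂ :=
  ∏ l ∈ Finset.Ico i j, (X - C (a l))

/-- Newton form of the Hermite interpolation polynomial on nodes `a i, …, a j`. -/
noncomputable def NP (a : ℕ → ℂ) (y : ℂ → ℂ) (i j : ℕ) : Polynomial ℂ :=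
  ∑ m ∈ Finset.Icc i j, C (dd a y i m) * om a i m

lemma om_nil (a : ℕ → ℂ) {i j : ℕ} (h : j ≤ i) : om a i j = 1 := by
  rw [om, Finset.Ico_eq_empty (by omega), Finset.prod_empty]

lemma om_succ (a : ℕ → ℂ) {i j : ℕ} (h : i ≤ j) :
    om a i (j+1) = om a i j * (X - C (a j)) := Finset.prod_Ico_succ_top h _

lemma om_bot (a : ℕ → ℂ) {i j : ℕ} (h : i < j) :
    om a i j = (X - C (a i)) * om a (i+1) j := Finset.prod_eq_prod_Ico_succ_bot h _

lemma NP_diag (a : ℕ → ℂ) (y : ℂ → ℂ) (i : ℕ) : NP a y i i = C (y (a i)) := by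
  rw [NP, Finset.Icc_self, Finset.sum_singleton, om_nil a le_rfl, dd_diag, mul_one]

lemma NP_succ (a : ℕ → ℂ) (y : ℂ → ℂ) {i j : ℕ} (h : i ≤ j + 1) :
    NP a y i (j+1) = NP a y i j + C (dd a y i (j+1)) * om a i (j+1) :=
  Finset.sum_Icc_succ_top h _

lemma NP_const (a : ℕ → ℂ) (y : ℂ → ℂ) (hc : Contig a) {i j : ℕ} (h : i ≤ j)
    (he : a i = a j) : NP a y i j = C (y (a i)) := by
  rw [NP]
  rw [Finset.sum_eq_single_of_mem i (by simp [Finset.mem_Icc, h])]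
  · rw [dd_diag, om_nil a le_rfl, mul_one]
  · intro m hm hmi
    rw [Finset.mem_Icc] at hm
    rw [dd_of_eq a y (by omega) ((hc i m j hm.1 hm.2 he).symm), map_zero, zero_mul]

lemma Mlem (a : ℕ → ℂ) (y : ℂ → ℂ) (hc : Contig a) :
    ∀ k i : ℕ, (X - C (a i)) * (NP a y (i+1) (i+k+1) - NP a y i (i+k)) =
      C (dd a y (i+1) (i+k+1) - dd a y i (i+k)) * om a i (i+k+1) := by
  intro k
  induction k with
  | zero =>
    intro i
    simp only [Nat.add_zero]
    rw [NP_diag, NP_diag, dd_diag, dd_diag, om_succ a le_rfl, om_nil a le_rfl, one_mul,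
      map_sub]
    ring
  | succ k ih =>
    intro i
    have hIH := ih i
    have h1 : NP a y (i+1) (i+k+1+1) = NP a y (i+1) (i+k+1) +
        C (dd a y (i+1) (i+k+1+1)) * om a (i+1) (i+k+1+1) := NP_succ a y (by omega)
    have h2 : NP a y i (i+k+1) = NP a y i (i+k) +
        C (dd a y i (i+k+1)) * om a i (i+k+1) := NP_succ a y (by omega)
    have hstar := dd_star a y hc (show i < i+k+1 by omega)
    simp only [Nat.add_sub_cancel] at hstar
    have hstarC : C (dd a y (i+1) (i+k+1)) - C (dd a y i (i+k)) =
        (C (a (i+k+1)) - C (a i)) * C (dd a y i (i+k+1)) := by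
      rw [← C_sub, ← C_sub, ← C_mul]
      exact congrArg C hstar
    have hb : om a i (i+k+1+1) = (X - C (a i)) * om a (i+1) (i+k+1+1) := om_bot a (by omega)
    have ht : om a i (i+k+1+1) = om a i (i+k+1) * (X - C (a (i+k+1))) := om_succ a (by omega)
    have goal2 : (X - C (a i)) * (NP a y (i+1) (i+k+1+1) - NP a y i (i+k+1)) =
        C (dd a y (i+1) (i+k+1+1) - dd a y i (i+k+1)) * om a i (i+k+1+1) := by
      rw [map_sub] at hIH
      rw [h1, h2, map_sub]
      linear_combination hIH - C (dd a y (i+1) (i+k+1+1)) * hb +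
        C (dd a y i (i+k+1)) * ht + om a i (i+k+1) * hstarC
    exact goal2

lemma Glem (a : ℕ → ℂ) (y : ℂ → ℂ) (hc : Contig a) {i j : ℕ} (h : i < j) :
    C (a j - a i) * NP a y i j =
      (X - C (a i)) * NP a y (i+1) j - (X - C (a j)) * NP a y i (j-1) := by
  obtain ⟨k, rfl⟩ : ∃ k, j = i + k + 1 := ⟨j - i - 1, by omega⟩
  have hM := Mlem a y hc k i
  rw [map_sub] at hM
  have hstar := dd_star a y hc (show i < i+k+1 by omega)
  simp only [Nat.add_sub_cancel] at hstar
  have hstarC : C (dd a y (i+1) (i+k+1)) - C (dd a y i (i+k)) =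
      (C (a (i+k+1)) - C (a i)) * C (dd a y i (i+k+1)) := by
    rw [← C_sub, ← C_sub, ← C_mul]
    exact congrArg C hstar
  have hNP : NP a y i (i+k+1) = NP a y i (i+k) +
      C (dd a y i (i+k+1)) * om a i (i+k+1) := NP_succ a y (by omega)
  have hCs : C (a (i+k+1) - a i) = C (a (i+k+1)) - C (a i) := map_sub _ _ _
  simp only [Nat.add_sub_cancel]
  rw [hNP, hCs]
  linear_combination -hM - om a i (i+k+1) * hstarC

/-- number of nodes in `a i, …, a j` equal to `z` -/
noncomputable def cnt (a : ℕ → ℂ) (z : ℂ) (i j : ℕ) : ℕ :=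
  (@Finset.filter _ (fun l => a l = z) (Classical.decPred _) (Finset.Icc i j)).card

lemma cnt_diag (a : ℕ → ℂ) (z : ℂ) (i : ℕ) :
    cnt a z i i = if a i = z then 1 else 0 := by
  classical
  rw [cnt]
  by_cases h : a i = z <;> simp [Finset.Icc_self, Finset.filter_singleton, h]

lemma Icc_split_left {i j : ℕ} (h : i < j) :
    Finset.Icc i j = insert i (Finset.Icc (i+1) j) := by
  ext x; simp only [Finset.mem_Icc, Finset.mem_insert]; omega

lemma Icc_split_right {i j : ℕ} (h : i < j) :
    Finset.Icc i j = insert j (Finset.Icc i (j-1)) := by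
  ext x; simp only [Finset.mem_Icc, Finset.mem_insert]; omega

lemma cnt_left (a : ℕ → ℂ) (z : ℂ) {i j : ℕ} (h : i < j) :
    cnt a z i j = (if a i = z then 1 else 0) + cnt a z (i+1) j := by
  classical
  rw [cnt, cnt, Icc_split_left h, Finset.filter_insert]
  by_cases hz : a i = z
  · rw [if_pos hz, if_pos hz, Finset.card_insert_of_notMem (by simp [Finset.mem_Icc])]
    try omega
  · rw [if_neg hz, if_neg hz, zero_add]
    try congr 1

lemma cnt_right (a : ℕ → ℂ) (z : ℂ) {i j : ℕ} (h : i < j) :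
    cnt a z i j = cnt a z i (j-1) + (if a j = z then 1 else 0) := by
  classical
  rw [cnt, cnt, Icc_split_right h, Finset.filter_insert]
  by_cases hz : a j = z
  · rw [if_pos hz, if_pos hz, Finset.card_insert_of_notMem (by simp [Finset.mem_Icc]; omega)]
    try omega
  · rw [if_neg hz, if_neg hz, add_zero]
    try congr 1

lemma cnt_zero (a : ℕ → ℂ) (z : ℂ) {i j : ℕ} (h : ∀ l, i ≤ l → l ≤ j → a l ≠ z) :
    cnt a z i j = 0 := by
  classical
  rw [cnt, Finset.card_eq_zero, Finset.filter_eq_empty_iff]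
  intro l hl
  rw [Finset.mem_Icc] at hl
  exact h l hl.1 hl.2

lemma hermite_diag (a : ℕ → ℂ) (y : ℂ → ℂ) (i : ℕ) (z : ℂ) :
    (X - C z) ^ (cnt a z i i) ∣ NP a y i i - C (y z) := by
  rw [NP_diag, cnt_diag]
  by_cases h : a i = z
  · rw [h, sub_self]; exact dvd_zero _
  · rw [if_neg h, pow_zero]; exact one_dvd _

theorem hermite (a : ℕ → ℂ) (y : ℂ → ℂ) (hc : Contig a) :
    ∀ d i j : ℕ, j - i ≤ d → i ≤ j → ∀ z : ℂ,
      (X - C z) ^ (cnt a z i j) ∣ NP a y i j - C (y z) := by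
  intro d
  induction d with
  | zero =>
    intro i j hd hij z
    obtain rfl : i = j := by omega
    exact hermite_diag a y i z
  | succ d ih =>
    intro i j hd hij z
    rcases eq_or_lt_of_le hij with rfl | hlt
    · exact hermite_diag a y i z
    by_cases he : a i = a j
    · rw [NP_const a y hc hij he]
      by_cases hz : a i = z
      · rw [hz, sub_self]; exact dvd_zero _
      · rw [cnt_zero a z (fun l hl1 hl2 => by
          rw [hc i l j hl1 hl2 he]; exact hz), pow_zero]
        exact one_dvd _
    · have hG := Glem a y hc hlt
      have key : C (a j - a i) * (NP a y i j - C (y z)) =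
          (X - C (a i)) * (NP a y (i+1) j - C (y z)) -
          (X - C (a j)) * (NP a y i (j-1) - C (y z)) := by
        rw [map_sub] at hG ⊢
        linear_combination hG
      have h1 := ih (i+1) j (by omega) (by omega) z
      have h2 := ih i (j-1) (by omega) (by omega) z
      have hdvd : (X - C z) ^ cnt a z i j ∣ C (a j - a i) * (NP a y i j - C (y z)) := by
        rw [key]
        refine dvd_sub ?_ ?_
        · by_cases hz : a i = z
          · rw [cnt_left a z hlt, if_pos hz, add_comm, pow_succ']
            exact mul_dvd_mul (dvd_of_eq (by rw [hz])) h1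
          · rw [cnt_left a z hlt, if_neg hz, zero_add]
            exact h1.mul_left _
        · by_cases hz : a j = z
          · rw [cnt_right a z hlt, if_pos hz, pow_succ']
            exact mul_dvd_mul (dvd_of_eq (by rw [hz])) h2
          · rw [cnt_right a z hlt, if_neg hz, add_zero]
            exact h2.mul_left _
      have hu : IsUnit (C (a j - a i)) :=
        isUnit_C.mpr (isUnit_iff_ne_zero.mpr (sub_ne_zero.mpr (Ne.symm he)))
      exact (hu.dvd_mul_left).mp hdvd

section Bounds

variable (a : ℕ → ℂ) (y : ℂ → ℂ) (t : ℕ)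

lemma dd_same_side (hyL : ∀ p q, p < t → q < t → y (a p) = y (a q))
    (hyR : ∀ p q, t ≤ p → t ≤ q → y (a p) = y (a q)) :
    ∀ d i j : ℕ, j - i ≤ d → i < j → (j < t ∨ t ≤ i) → dd a y i j = 0 := by
  intro d
  induction d with
  | zero => intro i j hd hij _; omega
  | succ d ih =>
    intro i j hd hij hside
    by_cases he : a i = a j
    · exact dd_of_eq a y hij he
    · rw [dd_of_ne a y hij he]
      rcases eq_or_lt_of_le (Nat.succ_le_of_lt hij) with h1 | h1
      · obtain rfl : j = i + 1 := by omega
        have hy : y (a i) = y (a (i+1)) := by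
          rcases hside with hs | hs
          · exact hyL i (i+1) (by omega) hs
          · exact hyR i (i+1) hs (by omega)
        rw [show (i+1) - 1 = i from rfl, dd_diag, dd_diag, ← hy, sub_self, zero_div]
      · rw [ih (i+1) j (by omega) (by omega) (by omega),
          ih i (j-1) (by omega) (by omega) (by omega), sub_self, zero_div]

lemma dd_bound {ν : ℝ} (hν : 0 < ν)
    (hyL : ∀ p q, p < t → q < t → y (a p) = y (a q))
    (hyR : ∀ p q, t ≤ p → t ≤ q → y (a p) = y (a q))
    (hy1 : ∀ l, ‖y (a l)‖ ≤ 1)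
    (hcross : ∀ p q, p < t → t ≤ q → ν ≤ ‖a q - a p‖) :
    ∀ d i j : ℕ, j - i ≤ d → ‖dd a y i j‖ ≤ (2/ν) ^ (j - i) := by
  have hb : (0:ℝ) < 2/ν := by positivity
  intro d
  induction d with
  | zero =>
    intro i j hd
    have hij : j ≤ i := by omega
    rw [dd_of_le a y hij, show j - i = 0 by omega, pow_zero]
    exact hy1 i
  | succ d ih =>
    intro i j hd
    by_cases hij : j ≤ i
    · rw [dd_of_le a y hij, show j - i = 0 by omega, pow_zero]
      exact hy1 i
    · push_neg at hij
      by_cases hside : j < t ∨ t ≤ i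
      · rw [dd_same_side a y t hyL hyR (j-i) i j le_rfl hij hside]
        simpa using (pow_pos hb (j-i)).le
      · have hcr : i < t ∧ t ≤ j := by omega
        have hgap : ν ≤ ‖a j - a i‖ := hcross i j hcr.1 hcr.2
        have hne : a i ≠ a j := by
          intro h
          rw [h, sub_self] at hgap
          simp at hgap
          linarith
        rw [dd_of_ne a y hij hne, norm_div]
        have h1 : ‖dd a y (i+1) j‖ ≤ (2/ν) ^ (j - i - 1) := by
          have := ih (i+1) j (by omega)
          rwa [show j - (i+1) = j - i - 1 by omega] at this
        have h2 : ‖dd a y i (j-1)‖ ≤ (2/ν) ^ (j - i - 1) := by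
          have := ih i (j-1) (by omega)
          rwa [show j - 1 - i = j - i - 1 by omega] at this
        have hnum : ‖dd a y (i+1) j - dd a y i (j-1)‖ ≤ 2 * (2/ν) ^ (j-i-1) := by
          calc ‖dd a y (i+1) j - dd a y i (j-1)‖
              ≤ ‖dd a y (i+1) j‖ + ‖dd a y i (j-1)‖ :=
                norm_sub_le _ _
            _ ≤ 2 * (2/ν) ^ (j-i-1) := by linarith
        calc ‖dd a y (i+1) j - dd a y i (j-1)‖ / ‖a j - a i‖
            ≤ (2 * (2/ν) ^ (j-i-1)) / ν := by
              apply div_le_div₀ (by positivity) hnum hν hgap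
          _ = (2/ν) ^ (j - i) := by
              rw [show j - i = (j-i-1) + 1 by omega, pow_succ']
              field_simp
              rw [Nat.add_sub_cancel]

end Bounds

section EndHelpers

variable {E : Type} [NormedAddCommGroup E] [NormedSpace ℂ E] [FiniteDimensional ℂ E]

lemma isUnit_clm_iff (B : E →L[ℂ] E) :
    IsUnit B ↔ IsUnit (B : Module.End ℂ E) := by
  constructor
  · rintro ⟨u, rfl⟩
    refine isUnit_iff_exists.mpr ⟨((↑u⁻¹ : E →L[ℂ] E) : Module.End ℂ E), ?_, ?_⟩
    · refine LinearMap.ext fun v => ?_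
      show (↑u : E →L[ℂ] E) ((↑u⁻¹ : E →L[ℂ] E) v) = v
      rw [← ContinuousLinearMap.mul_apply, u.mul_inv, ContinuousLinearMap.one_apply]
    · refine LinearMap.ext fun v => ?_
      show (↑u⁻¹ : E →L[ℂ] E) ((↑u : E →L[ℂ] E) v) = v
      rw [← ContinuousLinearMap.mul_apply, u.inv_mul, ContinuousLinearMap.one_apply]
  · intro h
    have hbij : Function.Bijective ⇑(B : Module.End ℂ E) := (Module.End.isUnit_iff _).mp h
    have hbij' : Function.Bijective ⇑B := hbij
    let e : E ≃ₗ[ℂ] E := LinearEquiv.ofBijective (B : E →ₗ[ℂ] E) hbij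
    let Cinv : E →L[ℂ] E := LinearMap.toContinuousLinearMap (e.symm : E →ₗ[ℂ] E)
    refine isUnit_iff_exists.mpr ⟨Cinv, ?_, ?_⟩
    · refine ContinuousLinearMap.ext fun v => ?_
      show B (Cinv v) = v
      have h1 : Cinv v = e.symm v := rfl
      rw [h1]
      have h2 : B (e.symm v) = e (e.symm v) := rfl
      rw [h2, e.apply_symm_apply]
    · refine ContinuousLinearMap.ext fun v => ?_
      show Cinv (B v) = v
      have h2 : B v = e v := rfl
      rw [show Cinv (B v) = e.symm (B v) from rfl, h2, e.symm_apply_apply]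

lemma spectrum_transfer (A : E →L[ℂ] E) :
    spectrum ℂ A = spectrum ℂ (A : Module.End ℂ E) := by
  ext z
  rw [spectrum.mem_iff, spectrum.mem_iff, not_iff_not]
  have hco : ((algebraMap ℂ (E →L[ℂ] E) z - A : E →L[ℂ] E) : Module.End ℂ E) =
      algebraMap ℂ (Module.End ℂ E) z - (A : Module.End ℂ E) := by
    refine LinearMap.ext fun v => ?_
    simp [Algebra.algebraMap_eq_smul_one, ContinuousLinearMap.coe_sub,
      ContinuousLinearMap.sub_apply, ContinuousLinearMap.smul_apply,
      ContinuousLinearMap.one_apply]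
  rw [isUnit_clm_iff, hco]

/-- coercion as an algebra homomorphism -/
noncomputable def coeAlgHom : (E →L[ℂ] E) →ₐ[ℂ] Module.End ℂ E where
  toFun f := f
  map_one' := rfl
  map_mul' f g := rfl
  map_zero' := rfl
  map_add' f g := rfl
  commutes' c := by
    refine LinearMap.ext fun v => ?_
    simp [Algebra.algebraMap_eq_smul_one]

end EndHelpers

section PolyAction

variable {E : Type} [AddCommGroup E] [Module ℂ E]

lemma action_of_dvd (f : Module.End ℂ E) {q : Polynomial ℂ} {lamv cv : ℂ} {m : ℕ}
    (hdvd : (X - C lamv) ^ m ∣ q - C cv) (v : E) (hv : ((f - lamv • 1) ^ m) v = 0) :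
    (aeval f q) v = cv • v := by
  obtain ⟨h, hh⟩ := hdvd
  have hq : q = h * (X - C lamv) ^ m + C cv := by linear_combination hh
  have haev : aeval f (X - C lamv) = f - lamv • 1 := by
    rw [map_sub, aeval_X, aeval_C, Module.algebraMap_end_eq_smul_id]
    rfl
  rw [hq, map_add, map_mul, map_pow, haev, aeval_C, Module.algebraMap_end_eq_smul_id]
  show (aeval f h) (((f - lamv • 1) ^ m) v) + (cv • LinearMap.id) v = cv • v
  rw [hv, map_zero, zero_add]
  rfl

lemma pow_rootMultiplicity_eval_zero [Module.Finite ℂ E] [Module.Free ℂ E]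
    (f : Module.End ℂ E) (lamv : ℂ) {M : ℕ} {v : E} (hv : ((f - lamv • 1) ^ M) v = 0) :
    ((f - lamv • 1) ^ ((LinearMap.charpoly f).rootMultiplicity lamv)) v = 0 := by
  set χ := LinearMap.charpoly f with hχdef
  have hχ : χ ≠ 0 := (LinearMap.charpoly_monic f).ne_zero
  obtain ⟨g, hg, hnd⟩ := χ.exists_eq_pow_rootMultiplicity_mul_and_not_dvd hχ lamv
  set dm := χ.rootMultiplicity lamv with hdm
  set B := f - lamv • 1 with hB
  have haev : aeval f (X - C lamv) = B := by
    rw [map_sub, aeval_X, aeval_C, Module.algebraMap_end_eq_smul_id]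
    rfl
  have hgx : (aeval f g) ((B ^ dm) v) = 0 := by
    have hg' : χ = g * (X - C lamv) ^ dm := by rw [hg]; ring
    have : (aeval f g) ((B ^ dm) v) = (aeval f χ) v := by
      rw [hg', map_mul, map_pow, haev]
      rfl
    rw [this, LinearMap.aeval_self_charpoly]
    rfl
  have hBx : (B ^ M) ((B ^ dm) v) = 0 := by
    have : (B ^ M) ((B ^ dm) v) = (B ^ dm) ((B ^ M) v) := by
      have h1 : B ^ M * B ^ dm = B ^ dm * B ^ M := by
        rw [← pow_add, ← pow_add, Nat.add_comm]
      exact congrArg (fun g : Module.End ℂ E => g v) h1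
    rw [this, hv, map_zero]
  have hcop : IsCoprime ((X - C lamv) ^ M) g :=
    ((irreducible_X_sub_C lamv).coprime_iff_not_dvd.mpr hnd).pow_left
  obtain ⟨u, w, huw⟩ := hcop
  show (B ^ dm) v = 0
  have h1 : (aeval f (u * (X - C lamv) ^ M + w * g)) ((B ^ dm) v) = (B ^ dm) v := by
    rw [huw, map_one]
    rfl
  calc (B ^ dm) v = (aeval f (u * (X - C lamv) ^ M + w * g)) ((B ^ dm) v) := h1.symm
    _ = (aeval f u) ((B ^ M) ((B ^ dm) v)) + (aeval f w) ((aeval f g) ((B ^ dm) v)) := by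
        rw [map_add, map_mul, map_mul, map_pow, haev]
        rfl
    _ = 0 := by rw [hBx, hgx, map_zero, map_zero, add_zero]

end PolyAction

set_option maxHeartbeats 1600000 in
theorem aux (ν : ℝ) (hν0 : 0 < ν) (hν1 : ν ≤ 1) (N : ℕ)
    {E : Type} [NormedAddCommGroup E] [NormedSpace ℂ E] [Nontrivial E] [FiniteDimensional ℂ E]
    (hfr : Module.finrank ℂ E = N)
    (A : E →L[ℂ] E) (r : ℕ) (lam : Fin r → ℂ)
    (hinj : Function.Injective lam)
    (hran : Set.range lam = spectrum ℂ A)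
    (hmono : Monotone (fun j : Fin r => (lam j).re))
    (k : ℕ) (hk1 : 1 ≤ k) (hkr : k ≤ r - 1)
    (hgap : ∀ (hk : k < r) (hk' : k - 1 < r), ν ≤ (lam ⟨k, hk⟩).re - (lam ⟨k - 1, hk'⟩).re)
    (P : E →L[ℂ] E)
    (hPL : ∀ v ∈ ⨆ j : Fin r, ⨆ _ : (j : ℕ) < k,
        LinearMap.ker (((A - lam j • (1 : E →L[ℂ] E)) ^ N : E →L[ℂ] E) : E →ₗ[ℂ] E), P v = v)
    (hPR : ∀ v ∈ ⨆ j : Fin r, ⨆ _ : k ≤ (j : ℕ),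
        LinearMap.ker (((A - lam j • (1 : E →L[ℂ] E)) ^ N : E →L[ℂ] E) : E →ₗ[ℂ] E), P v = 0) :
    ‖P‖ ≤ ((N:ℝ) * (4/ν)^N + 1) * (1 + ‖A‖) ^ N := by
  classical
  have hr2 : 2 ≤ r := by omega
  have hkr' : k < r := by omega
  have hk1' : k - 1 < r := by omega
  set A' : Module.End ℂ E := (A : E →ₗ[ℂ] E) with hA'
  set χ : Polynomial ℂ := LinearMap.charpoly A' with hχdef
  have hχ0 : χ ≠ 0 := (LinearMap.charpoly_monic A').ne_zero
  have hspec : spectrum ℂ A = spectrum ℂ A' := spectrum_transfer A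
  have hroot : ∀ j : Fin r, χ.IsRoot (lam j) := by
    intro j
    have h1 : lam j ∈ spectrum ℂ A' := by rw [← hspec, ← hran]; exact ⟨j, rfl⟩
    have h2 : A'.HasEigenvalue (lam j) := Module.End.hasEigenvalue_iff_mem_spectrum.mpr h1
    exact (Module.End.hasEigenvalue_iff_isRoot.mp h2).dvd (LinearMap.minpoly_dvd_charpoly A')
  -- nodes with multiplicities
  set c : ℕ → ℂ := fun l => if h : l < r then lam ⟨l, h⟩ else 0 with hc
  set d : ℕ → ℕ := fun l => χ.rootMultiplicity (c l) with hd
  have hd1 : ∀ l, l < r → 1 ≤ d l := by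
    intro l hl
    have : χ.rootMultiplicity (c l) > 0 := by
      rw [hc]; simp only [dif_pos hl]
      exact (rootMultiplicity_pos hχ0).mpr (hroot ⟨l, hl⟩)
    exact this
  set s : ℕ → ℕ := fun m => ∑ l ∈ Finset.range m, d l with hs
  have hsmono : Monotone s := fun m m' h =>
    Finset.sum_le_sum_of_subset (Finset.range_subset_range.mpr h)
  have hssucc : ∀ m, s (m+1) = s m + d m := fun m => Finset.sum_range_succ d m
  have hs0 : s 0 = 0 := by simp [hs]
  set n : ℕ := s r with hn
  have hcinj : ∀ l l', l < r → l' < r → c l = c l' → l = l' := by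
    intro l l' hl hl' he
    rw [hc] at he
    simp only [dif_pos hl, dif_pos hl'] at he
    have := hinj he
    exact congrArg Fin.val this
  -- n ≤ N
  have hnN : n ≤ N := by
    have hsum : ∀ l ∈ Finset.range r, d l = χ.roots.count (c l) := by
      intro l _
      rw [hd]; simp only [count_roots]
    calc n = ∑ l ∈ Finset.range r, d l := rfl
      _ = ∑ l ∈ Finset.range r, χ.roots.count (c l) := Finset.sum_congr rfl hsum
      _ = ∑ z ∈ (Finset.range r).image c, χ.roots.count z := by
          rw [Finset.sum_image (fun x hx y hy h =>
            hcinj x y (Finset.mem_range.mp hx) (Finset.mem_range.mp hy) h)]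
      _ ≤ ∑ z ∈ χ.roots.toFinset, χ.roots.count z := by
          apply Finset.sum_le_sum_of_ne_zero
          intro z _ hz
          exact Multiset.mem_toFinset.mpr (Multiset.count_pos.mp (Nat.pos_of_ne_zero hz))
      _ = Multiset.card χ.roots := Multiset.toFinset_sum_count_eq _
      _ ≤ χ.natDegree := χ.card_roots'
      _ = N := by rw [hχdef, LinearMap.charpoly_natDegree, hfr]
  -- indexing
  set idx : ℕ → ℕ := fun i => Nat.findGreatest (fun m => s m ≤ i) (r-1) with hidx
  have hidxeq : ∀ i, idx i = Nat.findGreatest (fun m => s m ≤ i) (r-1) := by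
    intro i; simp only [hidx]
  have hidxle : ∀ i, idx i ≤ r - 1 := by
    intro i; rw [hidxeq]; exact Nat.findGreatest_le _
  have hidxr : ∀ i, idx i < r := fun i => by have := hidxle i; omega
  have hidxlow : ∀ i, s (idx i) ≤ i := by
    intro i
    rw [hidxeq]
    exact Nat.findGreatest_spec (P := fun m => s m ≤ i) (Nat.zero_le _)
      (show s 0 ≤ i by rw [hs0]; exact Nat.zero_le _)
  have hidxmono : Monotone idx := by
    intro i i' h
    rw [hidxeq, hidxeq]
    exact Nat.findGreatest_mono (fun m hm => le_trans hm h) le_rfl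
  have hidxup : ∀ i, i < n → i < s (idx i + 1) := by
    intro i hi
    by_cases hlast : idx i = r - 1
    · rw [hlast, show r - 1 + 1 = r by omega]
      exact hi
    · by_contra hcon
      push_neg at hcon
      have hle : idx i + 1 ≤ r - 1 := by have := hidxle i; omega
      have hlt : Nat.findGreatest (fun m => s m ≤ i) (r - 1) < idx i + 1 := by
        rw [← hidxeq]; omega
      exact Nat.findGreatest_is_greatest (P := fun m => s m ≤ i) hlt hle hcon
  have hidxuniq : ∀ i m, m < r → s m ≤ i → i < s (m+1) → idx i = m := by
    intro i m hm hl hu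
    have h1 : m ≤ idx i := by
      rw [hidxeq]
      exact Nat.le_findGreatest (by omega) hl
    by_contra hne
    have h2 : m + 1 ≤ idx i := by omega
    have h3 := hsmono h2
    have h4 := hidxlow i
    omega
  set a : ℕ → ℂ := fun i => c (idx i) with ha
  have hcont : Contig a := by
    intro p q rr hpq hqr he
    rw [ha] at he ⊢
    simp only at he ⊢
    have h1 : idx p = idx rr := hcinj _ _ (hidxr p) (hidxr rr) he
    have h2 := hidxmono hpq
    have h3 := hidxmono hqr
    have : idx q = idx p := by omega
    rw [this]
  -- indicator data
  set y : ℂ → ℂ := fun z => if z.re ≤ (lam ⟨k-1, hk1'⟩).re then 1 else 0 with hy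
  have haval : ∀ l, a l = lam ⟨idx l, hidxr l⟩ := by
    intro l
    rw [ha, hc]
    simp only [dif_pos (hidxr l)]
  have hidxleft : ∀ l, l < s k → idx l < k := by
    intro l hl
    by_contra hcon
    push_neg at hcon
    have h1 := hsmono hcon
    have h2 := hidxlow l
    omega
  have hidxright : ∀ l, s k ≤ l → k ≤ idx l := by
    intro l hl
    rw [hidxeq]
    exact Nat.le_findGreatest (by omega) hl
  have hyleft : ∀ l, idx l < k → y (a l) = 1 := by
    intro l hl
    have hle : (lam ⟨idx l, hidxr l⟩).re ≤ (lam ⟨k-1, hk1'⟩).re := by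
      refine hmono ?_
      show (⟨idx l, hidxr l⟩ : Fin r) ≤ ⟨k-1, hk1'⟩
      rw [Fin.mk_le_mk]
      omega
    rw [haval l]
    simp only [hy, if_pos hle]
  have hyright : ∀ l, k ≤ idx l → y (a l) = 0 := by
    intro l hl
    have hgt : (lam ⟨k-1, hk1'⟩).re < (lam ⟨idx l, hidxr l⟩).re := by
      have h1 : (lam ⟨k, hkr'⟩).re ≤ (lam ⟨idx l, hidxr l⟩).re := by
        refine hmono ?_
        show (⟨k, hkr'⟩ : Fin r) ≤ ⟨idx l, hidxr l⟩
        rw [Fin.mk_le_mk]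
        omega
      have h2 := hgap hkr' hk1'
      linarith
    rw [haval l]
    simp only [hy, if_neg (not_le.mpr hgt)]
  have hyL : ∀ p q, p < s k → q < s k → y (a p) = y (a q) := fun p q hp hq => by
    rw [hyleft p (hidxleft p hp), hyleft q (hidxleft q hq)]
  have hyR : ∀ p q, s k ≤ p → s k ≤ q → y (a p) = y (a q) := fun p q hp hq => by
    rw [hyright p (hidxright p hp), hyright q (hidxright q hq)]
  have hy1 : ∀ l, ‖y (a l)‖ ≤ 1 := by
    intro l
    rcases lt_or_ge (idx l) k with h | h
    · rw [hyleft l h]; simp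
    · rw [hyright l h]; simp
  have hcross : ∀ p q, p < s k → s k ≤ q → ν ≤ ‖a q - a p‖ := by
    intro p q hp hq
    have h1 : idx p < k := hidxleft p hp
    have h2 : k ≤ idx q := hidxright q hq
    have g1 : (lam ⟨idx p, hidxr p⟩).re ≤ (lam ⟨k-1, hk1'⟩).re := by
      refine hmono ?_
      show (⟨idx p, hidxr p⟩ : Fin r) ≤ ⟨k-1, hk1'⟩
      rw [Fin.mk_le_mk]; omega
    have g2 : (lam ⟨k, hkr'⟩).re ≤ (lam ⟨idx q, hidxr q⟩).re := by
      refine hmono ?_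
      show (⟨k, hkr'⟩ : Fin r) ≤ ⟨idx q, hidxr q⟩
      rw [Fin.mk_le_mk]; omega
    have g3 := hgap hkr' hk1'
    have hre : ν ≤ (a q).re - (a p).re := by
      rw [haval p, haval q]
      linarith
    calc ν ≤ (a q).re - (a p).re := hre
      _ ≤ |(a q - a p).re| := by rw [Complex.sub_re]; exact le_abs_self _
      _ ≤ ‖a q - a p‖ := Complex.abs_re_le_norm _
  -- positivity of n
  have hn1 : 1 ≤ n := by
    have h1 := hd1 0 (by omega)
    have h2 : s 1 ≤ s r := hsmono (by omega)
    have h3 : s 1 = s 0 + d 0 := hssucc 0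
    omega
  -- node counts
  have hcnt : ∀ j : Fin r, cnt a (lam j) 0 (n-1) = d (j : ℕ) := by
    intro j
    rw [cnt]
    have hIcc : Finset.Icc 0 (n-1) = Finset.range n := by
      ext x; simp only [Finset.mem_Icc, Finset.mem_range]; omega
    rw [hIcc]
    have hflt : (@Finset.filter _ (fun l => a l = lam j) (Classical.decPred _)
        (Finset.range n)) = Finset.Ico (s (j : ℕ)) (s ((j : ℕ)+1)) := by
      ext l
      simp only [Finset.mem_filter, Finset.mem_range, Finset.mem_Ico]
      have hca : a l = c (idx l) := by rw [ha]
      have hcj : c ((j : ℕ)) = lam j := by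
        rw [hc]
        simp only [dif_pos j.isLt, Fin.eta]
        all_goals exact congrArg lam (Fin.eta j j.isLt)
      constructor
      · rintro ⟨hln, hal⟩
        have hcl : c (idx l) = c (j : ℕ) := by rw [← hca, hal, hcj]
        have hidxl : idx l = (j : ℕ) := hcinj _ _ (hidxr l) j.isLt hcl
        have hu := hidxup l hln
        have hlo := hidxlow l
        rw [hidxl] at hu hlo
        exact ⟨hlo, hu⟩
      · rintro ⟨h1, h2⟩
        have hjr : (j : ℕ) + 1 ≤ r := j.isLt
        have hln : l < n := lt_of_lt_of_le h2 (hsmono hjr)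
        have hidxl : idx l = (j : ℕ) := hidxuniq l (j : ℕ) j.isLt h1 h2
        refine ⟨hln, ?_⟩
        rw [hca, hidxl, hcj]
    rw [hflt, Nat.card_Ico, hssucc]
    omega
  -- the interpolation polynomial
  set qpoly : Polynomial ℂ := NP a y 0 (n-1) with hqdef
  have hdvd : ∀ j : Fin r, (X - C (lam j)) ^ (d (j : ℕ)) ∣ qpoly - C (y (lam j)) := by
    intro j
    have := hermite a y hcont (n-1) 0 (n-1) (by omega) (by omega) (lam j)
    rwa [hcnt j] at this
  have hylam : ∀ j : Fin r, y (lam j) = if (j : ℕ) < k then 1 else 0 := by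
    intro j
    by_cases hj : (j : ℕ) < k
    · have hle : (lam j).re ≤ (lam ⟨k-1, hk1'⟩).re := by
        refine hmono ?_
        show j ≤ (⟨k-1, hk1'⟩ : Fin r)
        rw [Fin.le_def]
        simp only
        omega
      simp only [hy, if_pos hle, if_pos hj]
    · have h2 : (lam ⟨k, hkr'⟩).re ≤ (lam j).re := by
        refine hmono ?_
        show (⟨k, hkr'⟩ : Fin r) ≤ j
        rw [Fin.le_def]
        simp only
        omega
      have h3 := hgap hkr' hk1'
      have h4 : ¬ (lam j).re ≤ (lam ⟨k-1, hk1'⟩).re := by linarith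
      simp only [hy, if_neg h4, if_neg hj]
  -- kernels coincide
  have hkerEq : ∀ j : Fin r, (LinearMap.ker (((A - lam j • (1 : E →L[ℂ] E)) ^ N : E →L[ℂ] E) : E →ₗ[ℂ] E)
      : Submodule ℂ E) = LinearMap.ker ((A' - lam j • 1) ^ N) := by
    intro j
    have hco : (((A - lam j • (1 : E →L[ℂ] E)) ^ N : E →L[ℂ] E) : E →ₗ[ℂ] E)
        = (A' - lam j • 1) ^ N := by
      have h1 : (((A - lam j • (1 : E →L[ℂ] E)) ^ N : E →L[ℂ] E) : E →ₗ[ℂ] E)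
          = (coeAlgHom (E := E)) ((A - lam j • (1 : E →L[ℂ] E)) ^ N) := rfl
      have h2 : (coeAlgHom (E := E)) (A - lam j • (1 : E →L[ℂ] E)) = A' - lam j • 1 := by
        rw [map_sub, ← Algebra.algebraMap_eq_smul_one, AlgHom.commutes,
          Algebra.algebraMap_eq_smul_one]
        rfl
      rw [h1, map_pow, h2]
    ext v
    constructor
    · intro hv
      rw [LinearMap.mem_ker] at hv ⊢
      rw [← hco]
      exact hv
    · intro hv
      rw [LinearMap.mem_ker] at hv ⊢
      rw [← hco] at hv
      exact hv
  -- multiplicities: d at Fin coercion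
  have hdj : ∀ j : Fin r, d (j : ℕ) = χ.rootMultiplicity (lam j) := by
    intro j
    rw [hd, hc]
    simp only [dif_pos j.isLt, Fin.eta]
    all_goals exact congrArg (fun z => χ.rootMultiplicity z) (congrArg lam (Fin.eta j j.isLt))
  -- action of polynomial
  have hQL : ∀ j : Fin r, (j : ℕ) < k → ∀ v, ((A' - lam j • 1) ^ N) v = 0 →
      (aeval A' qpoly) v = v := by
    intro j hj v hv
    have h5 : ((A' - lam j • 1) ^ (χ.rootMultiplicity (lam j))) v = 0 :=
      pow_rootMultiplicity_eval_zero A' (lam j) hv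
    have h6 : ((A' - lam j • 1) ^ (d (j : ℕ))) v = 0 := by rw [hdj j]; exact h5
    have h7 := hdvd j
    rw [hylam j, if_pos hj] at h7
    have := action_of_dvd A' h7 v h6
    simpa using this
  have hQR : ∀ j : Fin r, k ≤ (j : ℕ) → ∀ v, ((A' - lam j • 1) ^ N) v = 0 →
      (aeval A' qpoly) v = 0 := by
    intro j hj v hv
    have h5 : ((A' - lam j • 1) ^ (χ.rootMultiplicity (lam j))) v = 0 :=
      pow_rootMultiplicity_eval_zero A' (lam j) hv
    have h6 : ((A' - lam j • 1) ^ (d (j : ℕ))) v = 0 := by rw [hdj j]; exact h5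
    have h7 := hdvd j
    rw [hylam j, if_neg (by omega)] at h7
    have := action_of_dvd A' h7 v h6
    simpa using this
  -- Q on the two subspaces
  have hQSL : ∀ v ∈ ⨆ j : Fin r, ⨆ _ : (j : ℕ) < k,
      LinearMap.ker (((A - lam j • (1 : E →L[ℂ] E)) ^ N : E →L[ℂ] E) : E →ₗ[ℂ] E), (aeval A' qpoly) v = v := by
    intro v hv
    have hle : (⨆ j : Fin r, ⨆ _ : (j : ℕ) < k,
        LinearMap.ker (((A - lam j • (1 : E →L[ℂ] E)) ^ N : E →L[ℂ] E) : E →ₗ[ℂ] E))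
        ≤ LinearMap.ker ((aeval A' qpoly) - LinearMap.id) := by
      refine iSup_le fun j => iSup_le fun hj => ?_
      intro w hw
      rw [hkerEq j, LinearMap.mem_ker] at hw
      rw [LinearMap.mem_ker, LinearMap.sub_apply, LinearMap.id_apply, sub_eq_zero]
      exact hQL j hj w hw
    have := hle hv
    rw [LinearMap.mem_ker, LinearMap.sub_apply, LinearMap.id_apply, sub_eq_zero] at this
    exact this
  have hQSR : ∀ v ∈ ⨆ j : Fin r, ⨆ _ : k ≤ (j : ℕ),
      LinearMap.ker (((A - lam j • (1 : E →L[ℂ] E)) ^ N : E →L[ℂ] E) : E →ₗ[ℂ] E), (aeval A' qpoly) v = 0 := by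
    intro v hv
    have hle : (⨆ j : Fin r, ⨆ _ : k ≤ (j : ℕ),
        LinearMap.ker (((A - lam j • (1 : E →L[ℂ] E)) ^ N : E →L[ℂ] E) : E →ₗ[ℂ] E))
        ≤ LinearMap.ker (aeval A' qpoly) := by
      refine iSup_le fun j => iSup_le fun hj => ?_
      intro w hw
      rw [hkerEq j, LinearMap.mem_ker] at hw
      rw [LinearMap.mem_ker]
      exact hQR j hj w hw
    have := hle hv
    rw [LinearMap.mem_ker] at this
    exact this
  -- top decomposition
  have htop : (⊤ : Submodule ℂ E) ≤
      (⨆ j : Fin r, ⨆ _ : (j : ℕ) < k,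
        LinearMap.ker (((A - lam j • (1 : E →L[ℂ] E)) ^ N : E →L[ℂ] E) : E →ₗ[ℂ] E)) ⊔
      (⨆ j : Fin r, ⨆ _ : k ≤ (j : ℕ),
        LinearMap.ker (((A - lam j • (1 : E →L[ℂ] E)) ^ N : E →L[ℂ] E) : E →ₗ[ℂ] E)) := by
    rw [← Module.End.iSup_maxGenEigenspace_eq_top A']
    refine iSup_le fun μ => ?_
    by_cases hμ : A'.maxGenEigenspace μ = ⊥
    · rw [hμ]; exact bot_le
    · have hev : A'.HasEigenvalue μ := by
        refine Module.End.hasEigenvalue_of_hasGenEigenvalue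
          (k := Module.finrank ℂ E) ?_
        rw [Module.End.hasGenEigenvalue_iff]
        rw [← Module.End.maxGenEigenspace_eq_genEigenspace_finrank]
        exact hμ
      have hμs : μ ∈ spectrum ℂ A' := Module.End.hasEigenvalue_iff_mem_spectrum.mp hev
      rw [← hspec, ← hran] at hμs
      obtain ⟨j, rfl⟩ := hμs
      have hVj : A'.maxGenEigenspace (lam j) =
          LinearMap.ker (((A - lam j • (1 : E →L[ℂ] E)) ^ N : E →L[ℂ] E) : E →ₗ[ℂ] E) := by
        rw [Module.End.maxGenEigenspace_eq_genEigenspace_finrank, hfr,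
          Module.End.genEigenspace_nat, hkerEq j]
      rw [hVj]
      rcases lt_or_ge ((j : ℕ)) k with hj | hj
      · refine le_trans (le_trans ?_ (le_iSup (fun j : Fin r => ⨆ _ : (j : ℕ) < k,
            LinearMap.ker (((A - lam j • (1 : E →L[ℂ] E)) ^ N : E →L[ℂ] E) : E →ₗ[ℂ] E)) j)) le_sup_left
        exact le_iSup (fun _ : (j : ℕ) < k =>
          LinearMap.ker (((A - lam j • (1 : E →L[ℂ] E)) ^ N : E →L[ℂ] E) : E →ₗ[ℂ] E)) hj
      · refine le_trans (le_trans ?_ (le_iSup (fun j : Fin r => ⨆ _ : k ≤ (j : ℕ),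
            LinearMap.ker (((A - lam j • (1 : E →L[ℂ] E)) ^ N : E →L[ℂ] E) : E →ₗ[ℂ] E)) j)) le_sup_right
        exact le_iSup (fun _ : k ≤ (j : ℕ) =>
          LinearMap.ker (((A - lam j • (1 : E →L[ℂ] E)) ^ N : E →L[ℂ] E) : E →ₗ[ℂ] E)) hj
  -- P equals the continuous functional calculus of qpoly
  set QC : E →L[ℂ] E := aeval A qpoly with hQCdef
  have hcoeQC : (QC : E →ₗ[ℂ] E) = aeval A' qpoly := by
    have := Polynomial.aeval_algHom_apply (coeAlgHom (E := E)) A qpoly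
    exact this.symm
  have hPQ : P = QC := by
    ext v
    have hv : v ∈ (⨆ j : Fin r, ⨆ _ : (j : ℕ) < k,
        LinearMap.ker (((A - lam j • (1 : E →L[ℂ] E)) ^ N : E →L[ℂ] E) : E →ₗ[ℂ] E)) ⊔
      (⨆ j : Fin r, ⨆ _ : k ≤ (j : ℕ),
        LinearMap.ker (((A - lam j • (1 : E →L[ℂ] E)) ^ N : E →L[ℂ] E) : E →ₗ[ℂ] E)) := htop Submodule.mem_top
    obtain ⟨vl, hvl, vr, hvr, rfl⟩ := Submodule.mem_sup.mp hv
    rw [map_add, map_add, hPL vl hvl, hPR vr hvr, add_zero]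
    have hql : QC vl = vl := by
      have h1 : QC vl = (aeval A' qpoly) vl := by rw [← hcoeQC]; rfl
      rw [h1]
      exact hQSL vl hvl
    have hqr : QC vr = 0 := by
      have h1 : QC vr = (aeval A' qpoly) vr := by rw [← hcoeQC]; rfl
      rw [h1]
      exact hQSR vr hvr
    rw [hql, hqr, add_zero]
  -- norm estimate
  have habs : ∀ l, ‖a l‖ ≤ ‖A‖ := by
    intro l
    have : a l ∈ spectrum ℂ A := by
      rw [← hran]
      exact ⟨⟨idx l, hidxr l⟩, (haval l).symm⟩
    exact spectrum.norm_le_norm_of_mem this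
  have hnormom : ∀ m : ℕ, ‖(aeval A (om a 0 m) : E →L[ℂ] E)‖ ≤ (2*(1+‖A‖))^m := by
    intro m
    induction m with
    | zero =>
      rw [om_nil a le_rfl, map_one, pow_zero]
      exact le_of_eq norm_one
    | succ m ih =>
      rw [om_succ a (Nat.zero_le m), map_mul]
      have h1 : ‖(aeval A (X - C (a m)) : E →L[ℂ] E)‖ ≤ 2*(1+‖A‖) := by
        have he : (aeval A (X - C (a m)) : E →L[ℂ] E) = A - a m • 1 := by
          rw [map_sub, aeval_X, aeval_C, Algebra.algebraMap_eq_smul_one]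
        rw [he]
        calc ‖A - a m • (1 : E →L[ℂ] E)‖ ≤ ‖A‖ + ‖a m • (1 : E →L[ℂ] E)‖ := norm_sub_le _ _
          _ ≤ ‖A‖ + ‖a m‖ * ‖(1 : E →L[ℂ] E)‖ := by
              have := norm_smul_le (a m) (1 : E →L[ℂ] E)
              linarith
          _ = ‖A‖ + ‖a m‖ := by rw [norm_one, mul_one]
          _ ≤ 2*(1+‖A‖) := by have := habs m; have := norm_nonneg A; linarith
      calc ‖(aeval A (om a 0 m) : E →L[ℂ] E) * aeval A (X - C (a m))‖
          ≤ ‖(aeval A (om a 0 m) : E →L[ℂ] E)‖ * ‖(aeval A (X - C (a m)) : E →L[ℂ] E)‖ :=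
            norm_mul_le _ _
        _ ≤ (2*(1+‖A‖))^m * (2*(1+‖A‖)) :=
            mul_le_mul ih h1 (norm_nonneg _) (by positivity)
        _ = (2*(1+‖A‖))^(m+1) := (pow_succ _ _).symm
  have hQCsum : QC = ∑ m ∈ Finset.Icc 0 (n-1),
      dd a y 0 m • (aeval A (om a 0 m) : E →L[ℂ] E) := by
    rw [hQCdef, hqdef, NP, map_sum]
    refine Finset.sum_congr rfl fun m _ => ?_
    rw [map_mul, aeval_C, ← Algebra.smul_def]
  have hbase1 : (1:ℝ) ≤ (4/ν) * (1+‖A‖) := by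
    have h1 : (4:ℝ)/ν ≥ 4 := by
      rw [ge_iff_le, le_div_iff₀ hν0]
      linarith
    have h2 : (1:ℝ) ≤ 1+‖A‖ := by have := norm_nonneg A; linarith
    nlinarith
  have hterm : ∀ m ∈ Finset.Icc 0 (n-1),
      ‖dd a y 0 m • (aeval A (om a 0 m) : E →L[ℂ] E)‖ ≤ (4/ν)^N * (1+‖A‖)^N := by
    intro m hm
    have hmN : m ≤ N := by
      rw [Finset.mem_Icc] at hm
      omega
    have hd0 : ‖dd a y 0 m‖ ≤ (2/ν)^m := by
      have := dd_bound a y (s k) hν0 hyL hyR hy1 hcross m 0 m le_rfl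
      simpa using this
    calc ‖dd a y 0 m • (aeval A (om a 0 m) : E →L[ℂ] E)‖
        ≤ ‖dd a y 0 m‖ * ‖(aeval A (om a 0 m) : E →L[ℂ] E)‖ := by
          have := norm_smul_le (dd a y 0 m) (aeval A (om a 0 m) : E →L[ℂ] E)
          simpa using this
      _ ≤ (2/ν)^m * (2*(1+‖A‖))^m := by
          refine mul_le_mul hd0 (hnormom m) (norm_nonneg _) ?_
          positivity
      _ = ((4/ν) * (1+‖A‖))^m := by
          rw [← mul_pow]
          congr 1
          field_simp
          ring
      _ ≤ ((4/ν) * (1+‖A‖))^N := pow_le_pow_right₀ hbase1 hmN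
      _ = (4/ν)^N * (1+‖A‖)^N := mul_pow _ _ _
  have hcard : (Finset.Icc 0 (n-1)).card = n := by
    rw [Nat.card_Icc]
    omega
  have hfinal : ‖QC‖ ≤ (n:ℝ) * ((4/ν)^N * (1+‖A‖)^N) := by
    calc ‖QC‖ ≤ ∑ m ∈ Finset.Icc 0 (n-1),
        ‖dd a y 0 m • (aeval A (om a 0 m) : E →L[ℂ] E)‖ := by
          rw [hQCsum]
          exact norm_sum_le _ _
      _ ≤ ∑ _m ∈ Finset.Icc 0 (n-1), (4/ν)^N * (1+‖A‖)^N := Finset.sum_le_sum hterm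
      _ = (n:ℝ) * ((4/ν)^N * (1+‖A‖)^N) := by
          rw [Finset.sum_const, hcard, nsmul_eq_mul]
  rw [hPQ]
  have hpow : (0:ℝ) ≤ (1+‖A‖)^N := by positivity
  have hpow2 : (0:ℝ) ≤ (4/ν)^N := by positivity
  have hnN' : (n:ℝ) ≤ (N:ℝ) := Nat.cast_le.mpr hnN
  calc ‖QC‖ ≤ (n:ℝ) * ((4/ν)^N * (1+‖A‖)^N) := hfinal
    _ ≤ (N:ℝ) * ((4/ν)^N * (1+‖A‖)^N) := by
        refine mul_le_mul_of_nonneg_right hnN' (by positivity)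
    _ ≤ ((N:ℝ) * (4/ν)^N + 1) * (1 + ‖A‖) ^ N := by nlinarith

end SpectralProjBound


open SpectralProjBound in
/-- Harish-Chandra style uniform bound for spectral projections (cf. [geoc, Lemma 6.4]).
For `0 < ν ≤ 1` and `N ∈ ℕ` there is a constant `C > 0` such that for every endomorphism `𝖠`
of the Hermitian space `ℂ^N` with eigenvalues `λ₁, …, λ_r` ordered by increasing real part,
if `Re λ_{k+1} − Re λ_k ≥ ν` for some `1 ≤ k ≤ r − 1`, then the projection onto the sum of the
generalized eigenspaces of `λ₁, …, λ_k` along the sum of the remaining generalized eigenspaces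
has operator norm at most `C (1 + ‖𝖠‖)^N`. -/
theorem spectral_projection_uniform_bound (ν : ℝ) (hν0 : 0 < ν) (hν1 : ν ≤ 1) (N : ℕ) :
    ∃ C > (0 : ℝ),
      ∀ (A : EuclideanSpace ℂ (Fin N) →L[ℂ] EuclideanSpace ℂ (Fin N))
        (r : ℕ) (lam : Fin r → ℂ),
        Function.Injective lam →
        Set.range lam = spectrum ℂ A →
        Monotone (fun j : Fin r => (lam j).re) →
        ∀ k : ℕ, 1 ≤ k → k ≤ r - 1 →
        (∀ (hk : k < r) (hk' : k - 1 < r), ν ≤ (lam ⟨k, hk⟩).re - (lam ⟨k - 1, hk'⟩).re) →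
        ∀ P : EuclideanSpace ℂ (Fin N) →L[ℂ] EuclideanSpace ℂ (Fin N),
          (∀ v ∈ ⨆ j : Fin r, ⨆ _ : (j : ℕ) < k,
              LinearMap.ker (((A - lam j • (1 : EuclideanSpace ℂ (Fin N) →L[ℂ] EuclideanSpace ℂ (Fin N))) ^ N :
                EuclideanSpace ℂ (Fin N) →L[ℂ] EuclideanSpace ℂ (Fin N)) : EuclideanSpace ℂ (Fin N) →ₗ[ℂ] EuclideanSpace ℂ (Fin N)),
            P v = v) →
          (∀ v ∈ ⨆ j : Fin r, ⨆ _ : k ≤ (j : ℕ),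
              LinearMap.ker (((A - lam j • (1 : EuclideanSpace ℂ (Fin N) →L[ℂ] EuclideanSpace ℂ (Fin N))) ^ N :
                EuclideanSpace ℂ (Fin N) →L[ℂ] EuclideanSpace ℂ (Fin N)) : EuclideanSpace ℂ (Fin N) →ₗ[ℂ] EuclideanSpace ℂ (Fin N)),
            P v = 0) →
          ‖P‖ ≤ C * (1 + ‖A‖) ^ N := by
  refine ⟨(N:ℝ) * (4/ν)^N + 1, by positivity, ?_⟩
  intro A r lam hinj hran hmono k hk1 hkr hgap P hPL hPR
  have hr2 : 2 ≤ r := by omega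
  rcases Nat.eq_zero_or_pos N with hN0 | hN1
  · exfalso
    subst hN0
    haveI : Subsingleton (EuclideanSpace ℂ (Fin 0)) :=
      ⟨fun a b => PiLp.ext fun i => i.elim0⟩
    haveI : Subsingleton (EuclideanSpace ℂ (Fin 0) →L[ℂ] EuclideanSpace ℂ (Fin 0)) :=
      ⟨fun f g => ContinuousLinearMap.ext fun v => Subsingleton.elim _ _⟩
    have hmem : lam ⟨0, by omega⟩ ∈ spectrum ℂ A := by
      rw [← hran]; exact ⟨_, rfl⟩
    rw [spectrum.mem_iff] at hmem
    exact hmem (isUnit_of_subsingleton _)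
  · haveI : Nontrivial (EuclideanSpace ℂ (Fin N)) := by
      refine nontrivial_of_ne (EuclideanSpace.single ⟨0, hN1⟩ (1:ℂ)) 0 ?_
      intro h
      exact (one_ne_zero : (1:ℂ) ≠ 0)
        (by simpa [EuclideanSpace.single_apply] using congrArg (fun w => w ⟨0, hN1⟩) h)
    exact aux ν hν0 hν1 N finrank_euclideanSpace_fin A r lam hinj hran hmono
      k hk1 hkr hgap P hPL hPR
end

section
/- Let n ∈ ℕ, let p₁, …, p_n : ℝ → ℂ be polynomial functions, and let ν₁, …, ν_n be pairwise distinct real numbers. If the exponential polynomial P(t) = Σ_{j=1}^n p_j(t) e^{i ν_j t} satisfies lim_{t→+∞} P(t) = 0, then P is identically zero; equivalently, every polynomial p_j is the zero polynomial. -/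
open Filter Polynomial

lemma key_discrete : ∀ (n : ℕ) (q : Fin n → ℂ[X]) (l : Fin n → ℂ),
    (∀ j, ‖l j‖ = 1) → Function.Injective l →
    Tendsto (fun N : ℕ => ∑ j, (q j).eval (N : ℂ) * l j ^ N) atTop (nhds 0) →
    ∀ j, q j = 0 := by
  intro n
  induction n with
  | zero => intro q l _ _ _ j; exact j.elim0
  | succ n IH =>
    intro q l hnorm hinj hlim
    suffices H : ∀ d : ℕ, ∀ q : Fin (n+1) → ℂ[X], (q 0).natDegree ≤ d →
        Tendsto (fun N : ℕ => ∑ j, (q j).eval (N : ℂ) * l j ^ N) atTop (nhds 0) →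
        ∀ j, q j = 0 from H _ q le_rfl hlim
    intro d
    induction d using Nat.strong_induction_on with
    | _ d IHd =>
      intro q hdeg hlim
      set q' : Fin (n+1) → ℂ[X] := fun j => l j • (q j).comp (X + 1) - l 0 • q j with hq'
      have hXdeg : (X + 1 : ℂ[X]).natDegree = 1 := by
        simpa using natDegree_X_add_C (1 : ℂ)
      have hXlc : (X + 1 : ℂ[X]).leadingCoeff = 1 := by
        simpa using (monic_X_add_C (1 : ℂ)).leadingCoeff
      have hcomp_deg : ∀ r : ℂ[X], (r.comp (X + 1)).natDegree = r.natDegree := by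
        intro r; simp [natDegree_comp, hXdeg]
      have hcomp_coeff : ∀ r : ℂ[X], (r.comp (X + 1)).coeff r.natDegree = r.leadingCoeff := by
        intro r
        by_cases hr : r.natDegree = 0
        · obtain ⟨c, rfl⟩ := natDegree_eq_zero.mp hr
          simp
        · rw [← hcomp_deg r, coeff_natDegree,
            leadingCoeff_comp (by rw [hXdeg]; norm_num), hXlc, one_pow, mul_one]
      have h1 : Tendsto (fun N : ℕ => (∑ j, (q j).eval (((N+1 : ℕ)) : ℂ) * l j ^ (N+1)) -
          l 0 * ∑ j, (q j).eval (N : ℂ) * l j ^ N) atTop (nhds 0) := by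
        have := (hlim.comp (tendsto_add_atTop_nat 1)).sub (hlim.const_mul (l 0))
        simpa using this
      have hb : ∀ N : ℕ, ∑ j, (q' j).eval (N : ℂ) * l j ^ N
          = (∑ j, (q j).eval (((N+1 : ℕ)) : ℂ) * l j ^ (N+1)) - l 0 * ∑ j, (q j).eval (N : ℂ) * l j ^ N := by
        intro N
        rw [Finset.mul_sum, ← Finset.sum_sub_distrib]
        refine Finset.sum_congr rfl fun j _ => ?_
        simp only [hq', eval_sub, eval_smul, eval_comp, eval_add, eval_X, eval_one, smul_eq_mul]
        push_cast
        ring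
      have hlim' : Tendsto (fun N : ℕ => ∑ j, (q' j).eval (N : ℂ) * l j ^ N) atTop (nhds 0) :=
        h1.congr (fun N => (hb N).symm)
      by_cases hc : (q 0).comp (X + 1) = q 0
      · have hq'0 : q' 0 = 0 := by simp [hq', hc]
        have htail : Tendsto (fun N : ℕ => ∑ j : Fin n, (q' j.succ).eval (N : ℂ) * l j.succ ^ N)
            atTop (nhds 0) := by
          refine hlim'.congr (fun N => ?_)
          rw [Fin.sum_univ_succ, hq'0]; simp
        have hz : ∀ j : Fin n, q' j.succ = 0 :=
          IH (fun j => q' j.succ) (fun j => l j.succ) (fun j => hnorm _)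
            (hinj.comp (Fin.succ_injective n)) htail
        have hqsucc : ∀ j : Fin n, q j.succ = 0 := by
          intro j
          by_contra hne
          have h0 : q' j.succ = 0 := hz j
          have heq : l j.succ • (q j.succ).comp (X + 1) = l 0 • q j.succ := by
            rw [hq'] at h0; rwa [sub_eq_zero] at h0
          have hco := congrArg (fun r : ℂ[X] => r.coeff (q j.succ).natDegree) heq
          simp only [coeff_smul, smul_eq_mul, hcomp_coeff, coeff_natDegree] at hco
          have hlcne : (q j.succ).leadingCoeff ≠ 0 := leadingCoeff_ne_zero.mpr hne
          have : l j.succ = l 0 := mul_right_cancel₀ hlcne hco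
          exact (Fin.succ_ne_zero j) (hinj this)
        have hval : ∀ N : ℕ, (q 0).eval (N : ℂ) = (q 0).eval 0 := by
          intro N
          induction N with
          | zero => simp
          | succ N ih =>
            have h2 := congrArg (fun r : ℂ[X] => r.eval (N : ℂ)) hc
            simp only [eval_comp, eval_add, eval_X, eval_one] at h2
            push_cast
            rw [h2, ih]
        have hsum : ∀ N : ℕ, ∑ j, (q j).eval (N : ℂ) * l j ^ N = (q 0).eval 0 * l 0 ^ N := by
          intro N; rw [Fin.sum_univ_succ, hval N]; simp [hqsucc]
        have hl0 : Tendsto (fun N : ℕ => (q 0).eval 0 * l 0 ^ N) atTop (nhds 0) :=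
          hlim.congr hsum
        have hnorm0 : Tendsto (fun N : ℕ => ‖(q 0).eval 0 * l 0 ^ N‖) atTop (nhds 0) := by
          simpa using hl0.norm
        have habs : ∀ N : ℕ, ‖(q 0).eval 0 * l 0 ^ N‖ = ‖(q 0).eval 0‖ := by
          intro N; rw [norm_mul, norm_pow, hnorm 0, one_pow, mul_one]
        have he0 : (q 0).eval 0 = 0 := by
          have := tendsto_nhds_unique
            (tendsto_const_nhds : Tendsto (fun _ : ℕ => ‖(q 0).eval 0‖) atTop _)
            (hnorm0.congr habs)
          simpa using this
        have hq0 : q 0 = 0 := by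
          apply eq_zero_of_infinite_isRoot
          refine Set.Infinite.mono ?_ (Set.infinite_range_of_injective Nat.cast_injective)
          rintro x ⟨N, rfl⟩
          simp [IsRoot, hval N, he0]
        intro j
        rcases Fin.eq_zero_or_eq_succ j with rfl | ⟨i, rfl⟩
        · exact hq0
        · exact hqsucc i
      · exfalso
        have hsubne : (q 0).comp (X + 1) - q 0 ≠ 0 := sub_ne_zero.mpr hc
        have hle : ((q 0).comp (X + 1) - q 0).natDegree ≤ (q 0).natDegree :=
          le_trans (natDegree_sub_le _ _) (by simp [hcomp_deg])
        have hco : ((q 0).comp (X + 1) - q 0).coeff ((q 0).natDegree) = 0 := by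
          rw [coeff_sub, hcomp_coeff, coeff_natDegree, sub_self]
        have hne : ((q 0).comp (X + 1) - q 0).natDegree ≠ (q 0).natDegree := by
          intro he
          apply hsubne
          apply leadingCoeff_eq_zero.mp
          rw [leadingCoeff, he, hco]
        have hlt : ((q 0).comp (X + 1) - q 0).natDegree < (q 0).natDegree := lt_of_le_of_ne hle hne
        have hl0ne : l 0 ≠ 0 := by
          intro h0
          have := hnorm 0
          rw [h0] at this; simp at this
        have h0eq : q' 0 = l 0 • ((q 0).comp (X + 1) - q 0) := by
          rw [hq', smul_sub]
        have hdq' : (q' 0).natDegree < (q 0).natDegree := by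
          rw [h0eq]
          exact lt_of_le_of_lt (natDegree_smul_le _ _) hlt
        have hall := IHd ((q' 0).natDegree) (lt_of_lt_of_le hdq' hdeg) q' le_rfl hlim'
        have h00 : q' 0 = 0 := hall 0
        rw [h0eq] at h00
        rcases smul_eq_zero.mp h00 with h | h
        · exact hl0ne h
        · exact hsubne h

/-- If an exponential polynomial `P(t) = Σ_j p_j(t) e^{i ν_j t}` with unitary characters
(pairwise distinct real `ν_j`) tends to `0` as `t → +∞`, then it vanishes identically;
equivalently, every polynomial `p_j` is zero. -/
theorem exppoly_unitary_tendsto_zero_eq_zero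
    (n : ℕ) (p : Fin n → Polynomial ℂ) (ν : Fin n → ℝ)
    (hν : Function.Injective ν)
    (hlim : Tendsto
      (fun t : ℝ => ∑ j : Fin n, (p j).eval (t : ℂ) * Complex.exp (Complex.I * (ν j : ℂ) * (t : ℂ)))
      atTop (nhds 0)) :
    (∀ t : ℝ, ∑ j : Fin n, (p j).eval (t : ℂ) * Complex.exp (Complex.I * (ν j : ℂ) * (t : ℂ)) = 0)
      ∧ ∀ j, p j = 0 := by
  have hp : ∀ j, p j = 0 := by
    set S : ℝ := ∑ j, |ν j| with hS
    have hS0 : 0 ≤ S := Finset.sum_nonneg fun j _ => abs_nonneg _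
    have hSj : ∀ j, |ν j| ≤ S := fun j =>
      Finset.single_le_sum (fun i _ => abs_nonneg (ν i)) (Finset.mem_univ j)
    have hden : (0:ℝ) < 1 + S := by linarith
    set h : ℝ := Real.pi / (1 + S) with hh
    have hpos : 0 < h := div_pos Real.pi_pos hden
    set l : Fin n → ℂ := fun j => Complex.exp (Complex.I * (ν j : ℂ) * (h : ℂ)) with hl
    have hnorml : ∀ j, ‖l j‖ = 1 := by
      intro j
      rw [hl]
      simp only [Complex.norm_exp]
      have : (Complex.I * (ν j : ℂ) * (h : ℂ)).re = 0 := by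
        simp [Complex.mul_re, Complex.mul_im]
      rw [this, Real.exp_zero]
    have hlinj : Function.Injective l := by
      intro j k hjk
      apply hν
      simp only [hl] at hjk
      rw [Complex.exp_eq_exp_iff_exists_int] at hjk
      obtain ⟨m, hm⟩ := hjk
      have hre : ν j * h = ν k * h + m * (2 * Real.pi) := by
        have him := congrArg Complex.im hm
        simpa [Complex.mul_im, Complex.mul_re] using him
      have hmb : |(m : ℝ)| * (2 * Real.pi) < 2 * Real.pi := by
        have h1 : |(m : ℝ)| * (2 * Real.pi) = |ν j * h - ν k * h| := by
          rw [hre]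
          rw [show ν k * h + ↑m * (2 * Real.pi) - ν k * h = ↑m * (2 * Real.pi) by ring]
          rw [abs_mul, abs_of_pos (by positivity : (0:ℝ) < 2 * Real.pi)]
        rw [h1, ← sub_mul, abs_mul, abs_of_pos hpos]
        have h2 : |ν j - ν k| ≤ 2 * S := by
          calc |ν j - ν k| ≤ |ν j| + |ν k| := abs_sub _ _
            _ ≤ S + S := add_le_add (hSj j) (hSj k)
            _ = 2 * S := by ring
        have hkey : 2 * S * h < 2 * Real.pi := by
          rw [hh, ← mul_div_assoc, div_lt_iff₀ hden]
          nlinarith [Real.pi_pos]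
        calc |ν j - ν k| * h ≤ 2 * S * h := mul_le_mul_of_nonneg_right h2 hpos.le
          _ < 2 * Real.pi := hkey
      have hm0 : m = 0 := by
        by_contra hm0
        have : (1:ℝ) ≤ |(m : ℝ)| := by
          rw [← Int.cast_abs]
          exact_mod_cast Int.one_le_abs (by omega)
        nlinarith [Real.pi_pos]
      rw [hm0] at hre
      simp at hre
      rcases hre with hre | hre
      · exact hre
      · exact absurd hre hpos.ne'
    intro j
    apply Polynomial.eq_zero_of_infinite_isRoot
    refine Set.Infinite.mono ?_ (Set.infinite_range_of_injective Complex.ofReal_injective)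
    rintro x ⟨t₀, rfl⟩
    set q : Fin n → Polynomial ℂ := fun i =>
      Complex.exp (Complex.I * (ν i : ℂ) * (t₀ : ℂ)) •
        ((p i).comp (Polynomial.C (t₀ : ℂ) + Polynomial.C (h : ℂ) * Polynomial.X)) with hq
    have ht : Tendsto (fun N : ℕ => t₀ + N * h) atTop atTop := by
      apply tendsto_atTop_add_const_left
      exact (tendsto_natCast_atTop_atTop (R := ℝ)).atTop_mul_const hpos
    have hseq : Tendsto (fun N : ℕ => ∑ i, (q i).eval (N : ℂ) * l i ^ N) atTop (nhds 0) := by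
      refine (hlim.comp ht).congr fun N => ?_
      refine Finset.sum_congr rfl fun i _ => ?_
      rw [hq, hl]
      simp only [Polynomial.eval_smul, Polynomial.eval_comp, Polynomial.eval_add,
        Polynomial.eval_mul, Polynomial.eval_C, Polynomial.eval_X, smul_eq_mul]
      rw [← Complex.exp_nat_mul]
      conv_rhs => rw [mul_right_comm, ← Complex.exp_add]
      push_cast
      ring_nf
    have hq0 := key_discrete n q l hnorml hlinj hseq j
    have he := congrArg (fun r : Polynomial ℂ => r.eval 0) hq0
    simp only [hq, Polynomial.eval_smul, Polynomial.eval_comp, Polynomial.eval_add,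
      Polynomial.eval_mul, Polynomial.eval_C, Polynomial.eval_X, mul_zero, add_zero,
      Polynomial.eval_zero, smul_eq_mul] at he
    rcases mul_eq_zero.mp he with h' | h'
    · exact absurd h' (Complex.exp_ne_zero _)
    · exact h'
  refine ⟨fun t => ?_, hp⟩
  simp [hp]
end

section
/- Let U be a finite-dimensional complex normed vector space, A ∈ End(U) and ρ ∈ ℝ. Let w ∈ U belong to the sum of the generalized eigenspaces ker(A − μ)^{dim U} of A taken over the eigenvalues μ of A with Re μ = ρ. If e^{−ρ t} e^{tA} w → 0 as t → +∞, then w = 0. -/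
open Filter
open scoped Nat

lemma exists_proj_of_disjoint {U : Type*} [AddCommGroup U] [Module ℂ U]
    (p q : Submodule ℂ U) (h : Disjoint p q) :
    ∃ π : U →ₗ[ℂ] U, (∀ x ∈ p, π x = x) ∧ (∀ y ∈ q, π y = 0) := by
  let L : (p × q) →ₗ[ℂ] U := p.subtype.coprod q.subtype
  have hinj : LinearMap.ker L = ⊥ := by
    rw [LinearMap.ker_eq_bot']
    rintro ⟨x, y⟩ hxy
    have hxy' : (x : U) + (y : U) = 0 := hxy
    have hx : (x : U) ∈ q := by
      have hxq : (x : U) = -(y : U) := by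
        rw [eq_neg_iff_add_eq_zero]; exact hxy'
      rw [hxq]; exact q.neg_mem y.2
    have hx0 : (x : U) = 0 := Submodule.disjoint_def.mp h _ x.2 hx
    have hy0 : (y : U) = 0 := by
      have := hxy'; rw [hx0, zero_add] at this; exact this
    exact Prod.ext (Subtype.ext hx0) (Subtype.ext hy0)
  obtain ⟨g, hg⟩ := L.exists_leftInverse_of_injective hinj
  have hg' : ∀ z : p × q, g (L z) = z := fun z => by
    have := LinearMap.ext_iff.mp hg z
    simpa using this
  refine ⟨p.subtype ∘ₗ (LinearMap.fst ℂ p q) ∘ₗ g, ?_, ?_⟩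
  · intro x hx
    have h1 : L (⟨x, hx⟩, 0) = x := by simp [L]
    have h2 : g x = (⟨x, hx⟩, 0) := by have := hg' (⟨x, hx⟩, 0); rwa [h1] at this
    simp [h2]
  · intro y hy
    have h1 : L (0, ⟨y, hy⟩) = y := by simp [L]
    have h2 : g y = (0, ⟨y, hy⟩) := by have := hg' (0, ⟨y, hy⟩); rwa [h1] at this
    simp [h2]

lemma poly_coeff_eq_zero {U : Type*} [NormedAddCommGroup U] [NormedSpace ℂ U] :
    ∀ (n : ℕ) (b : ℕ → U),
      Tendsto (fun t : ℝ => ∑ k ∈ Finset.range n, ((t : ℂ) ^ k) • b k) atTop (nhds 0) →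
      ∀ k < n, b k = 0 := by
  intro n
  induction n with
  | zero => intro b _ k hk; exact absurd hk (Nat.not_lt_zero k)
  | succ n ih =>
    intro b h
    have hfac0 : (0 : ℤ) < n → Tendsto (fun t : ℝ => ((t : ℂ) ^ (-(n : ℤ)))) atTop (nhds 0) := by
      intro hn
      have h2 : Tendsto (fun t : ℝ => (t ^ (-(n : ℤ)) : ℝ)) atTop (nhds 0) :=
        tendsto_zpow_atTop_zero (by omega)
      have h3 := (Complex.continuous_ofReal.tendsto 0).comp h2
      simpa [Function.comp_def, Complex.ofReal_zpow] using h3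
    have hterm : ∀ k : ℕ, k ≤ n →
        Tendsto (fun t : ℝ => ((t : ℂ) ^ ((k : ℤ) - n)) • b k) atTop
          (nhds (if k = n then b k else 0)) := by
      intro k hk
      rcases eq_or_lt_of_le hk with rfl | hk'
      · simp only [sub_self, if_pos rfl, zpow_zero, one_smul]
        exact tendsto_const_nhds
      · rw [if_neg hk'.ne]
        have h1 : Tendsto (fun t : ℝ => ((t : ℂ) ^ ((k : ℤ) - n))) atTop (nhds 0) := by
          have h2 : Tendsto (fun t : ℝ => (t ^ ((k : ℤ) - n) : ℝ)) atTop (nhds 0) :=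
            tendsto_zpow_atTop_zero (by omega)
          have h3 := (Complex.continuous_ofReal.tendsto 0).comp h2
          simpa [Function.comp_def, Complex.ofReal_zpow] using h3
        simpa using h1.smul_const (b k)
    have hsum : Tendsto
        (fun t : ℝ => ∑ k ∈ Finset.range (n + 1), ((t : ℂ) ^ ((k : ℤ) - n)) • b k) atTop
        (nhds (b n)) := by
      have := tendsto_finset_sum (Finset.range (n + 1))
        (fun k hk => hterm k (Nat.lt_succ_iff.mp (Finset.mem_range.mp hk)))
      have hval : ∑ k ∈ Finset.range (n + 1), (if k = n then b k else 0) = b n := by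
        rw [Finset.sum_ite_eq' (Finset.range (n + 1)) n b]
        simp
      rwa [hval] at this
    have heq : ∀ᶠ t : ℝ in atTop,
        ((t : ℂ) ^ (-(n : ℤ))) • ∑ k ∈ Finset.range (n + 1), ((t : ℂ) ^ k) • b k
          = ∑ k ∈ Finset.range (n + 1), ((t : ℂ) ^ ((k : ℤ) - n)) • b k := by
      filter_upwards [eventually_gt_atTop (0 : ℝ)] with t ht
      rw [Finset.smul_sum]
      refine Finset.sum_congr rfl fun k _ => ?_
      have htne : (t : ℂ) ≠ 0 := by exact_mod_cast ht.ne'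
      rw [smul_smul, ← zpow_natCast (t : ℂ) k, ← zpow_add₀ htne,
        show -(n : ℤ) + (k : ℤ) = (k : ℤ) - n from by ring]
    have hzero : Tendsto
        (fun t : ℝ => ((t : ℂ) ^ (-(n : ℤ))) • ∑ k ∈ Finset.range (n + 1), ((t : ℂ) ^ k) • b k)
        atTop (nhds 0) := by
      rcases Nat.eq_zero_or_pos n with rfl | hn
      · simpa using h
      · simpa using (hfac0 (by exact_mod_cast hn)).smul h
    have hbn : b n = 0 := tendsto_nhds_unique hsum (hzero.congr' heq)
    have h' : Tendsto (fun t : ℝ => ∑ k ∈ Finset.range n, ((t : ℂ) ^ k) • b k) atTop (nhds 0) := by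
      refine h.congr fun t => ?_
      rw [Finset.sum_range_succ, hbn, smul_zero, add_zero]
    intro k hk
    rcases Nat.lt_succ_iff_lt_or_eq.mp hk with hk' | rfl
    · exact ih b h' k hk'
    · exact hbn

lemma exp_apply_of_pow_eq_zero {U : Type*} [NormedAddCommGroup U] [NormedSpace ℂ U]
    [CompleteSpace U] (N : U →L[ℂ] U) (n : ℕ) (v : U) (hv : (N ^ n) v = 0) (t : ℂ) :
    NormedSpace.exp (t • N) v
      = ∑ k ∈ Finset.range n, (((k)! : ℂ)⁻¹ * t ^ k) • (N ^ k) v := by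
  have hNk : ∀ k : ℕ, n ≤ k → (N ^ k) v = 0 := by
    intro k hk
    obtain ⟨m, rfl⟩ := Nat.exists_eq_add_of_le hk
    rw [add_comm, pow_add, ContinuousLinearMap.mul_apply, hv, map_zero]
  have hsum : Summable (fun k : ℕ => (((k)! : ℂ)⁻¹) • (t • N) ^ k) :=
    NormedSpace.expSeries_summable' (𝕂 := ℂ) (t • N)
  have h1 : NormedSpace.exp (t • N) v
      = ∑' k : ℕ, ((((k)! : ℂ)⁻¹) • (t • N) ^ k) v := by
    rw [NormedSpace.exp_eq_tsum ℂ]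
    exact ((ContinuousLinearMap.apply ℂ U v).map_tsum hsum)
  rw [h1]
  have h2 : ∀ k : ℕ, ((((k)! : ℂ)⁻¹) • (t • N) ^ k) v
      = (((k)! : ℂ)⁻¹ * t ^ k) • (N ^ k) v := by
    intro k
    rw [smul_pow]
    simp [smul_smul]
  rw [tsum_congr h2]
  exact tsum_eq_sum (fun k hk => by
    rw [hNk k (by simpa using hk), smul_zero])

lemma exp_smul_split {U : Type*} [NormedAddCommGroup U] [NormedSpace ℂ U]
    [CompleteSpace U] (A : U →L[ℂ] U) (t μ : ℂ) :
    NormedSpace.exp (t • A)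
      = Complex.exp (t * μ) • NormedSpace.exp (t • (A - μ • (1 : U →L[ℂ] U))) := by
  have hadd : t • A = (t * μ) • (1 : U →L[ℂ] U) + t • (A - μ • (1 : U →L[ℂ] U)) := by
    rw [smul_sub, mul_smul, ← smul_assoc]
    abel_nf
  have hcomm : Commute ((t * μ) • (1 : U →L[ℂ] U)) (t • (A - μ • (1 : U →L[ℂ] U))) :=
    ((Commute.one_left _).smul_left _).smul_right _
  letI : NormedAlgebra ℚ (U →L[ℂ] U) := .restrictScalars ℚ ℂ (U →L[ℂ] U)
  rw [hadd, NormedSpace.exp_add_of_commute hcomm]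
  have h1 : (t * μ) • (1 : U →L[ℂ] U) = algebraMap ℂ (U →L[ℂ] U) (t * μ) :=
    (Algebra.algebraMap_eq_smul_one _).symm
  rw [h1, ← NormedSpace.algebraMap_exp_comm, ← Complex.exp_eq_exp_ℂ, ← Algebra.smul_def]

/-- Let `U` be a finite-dimensional complex normed space, `A ∈ End(U)`, `ρ ∈ ℝ`, and let `w`
belong to the sum of the generalized eigenspaces `ker (A − μ)^{dim U}` of `A` over the
eigenvalues `μ` of `A` with `Re μ = ρ`.  If `e^{−ρt} e^{tA} w → 0` as `t → +∞`, then `w = 0`. -/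
theorem eq_zero_of_unitary_part_tendsto_zero
    (U : Type*) [NormedAddCommGroup U] [NormedSpace ℂ U] [FiniteDimensional ℂ U]
    (A : U →L[ℂ] U) (ρ : ℝ) (w : U)
    (hw : w ∈ ⨆ μ ∈ {μ : ℂ | μ ∈ spectrum ℂ A ∧ μ.re = ρ},
      LinearMap.ker (((A - μ • (1 : U →L[ℂ] U)) ^ (Module.finrank ℂ U) : U →L[ℂ] U) : U →ₗ[ℂ] U))
    (hlim : Tendsto
      (fun t : ℝ => (Real.exp (-ρ * t) : ℂ) • (NormedSpace.exp ((t : ℂ) • A)) w)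
      atTop (nhds 0)) :
    w = 0 := by
  classical
  set n := Module.finrank ℂ U with hn
  rcases Nat.eq_zero_or_pos n with hn0 | hnpos
  · have : Subsingleton U := Module.finrank_zero_iff.mp hn0
    exact Subsingleton.elim w 0
  set S : Set ℂ := {μ : ℂ | μ ∈ spectrum ℂ A ∧ μ.re = ρ} with hS
  set G : ℂ → Submodule ℂ U := fun μ => LinearMap.ker (((A - μ • (1 : U →L[ℂ] U)) ^ n : U →L[ℂ] U) : U →ₗ[ℂ] U) with hGdef
  obtain ⟨c, hc, hcw⟩ :=
    (Submodule.mem_iSup_iff_exists_finsupp (fun μ => ⨆ _ : μ ∈ S, G μ) w).mp hw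
  have hcmem : ∀ μ ∈ c.support, μ ∈ S ∧ c μ ∈ G μ := by
    intro μ hμ
    by_cases hμS : μ ∈ S
    · refine ⟨hμS, ?_⟩
      have := hc μ; rwa [iSup_pos hμS] at this
    · exfalso
      have := hc μ; rw [iSup_neg hμS] at this
      exact Finsupp.mem_support_iff.mp hμ ((Submodule.mem_bot ℂ).mp this)
  have hG : ∀ μ : ℂ, G μ = Module.End.genEigenspace (A : U →ₗ[ℂ] U) μ (n : ℕ∞) := by
    intro μ
    ext x
    have h1 : ((A - μ • (1 : U →L[ℂ] U)) ^ n) x = (((A : U →ₗ[ℂ] U) - μ • 1) ^ n) x := by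
      have hfun : ⇑(A - μ • (1 : U →L[ℂ] U)) = ⇑((A : U →ₗ[ℂ] U) - μ • 1) := by
        ext y; simp
      rw [show ((A - μ • (1 : U →L[ℂ] U)) ^ n) x = (⇑(A - μ • (1 : U →L[ℂ] U)))^[n] x from
          congrFun (FunLike.coe_pow_eq_iterate _ n) x,
        Module.End.pow_apply, hfun]
    rw [Module.End.mem_genEigenspace_nat, LinearMap.mem_ker, ContinuousLinearMap.coe_coe, h1]
    exact Iff.symm LinearMap.mem_ker
  have hdisj : ∀ ν : ℂ, Disjoint (G ν) (⨆ μ, ⨆ _ : μ ≠ ν, G μ) := by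
    intro ν
    have hind := Module.End.independent_genEigenspace (A : U →ₗ[ℂ] U) (n : ℕ∞) ν
    simp_rw [hG]
    exact hind
  have hkey : ∀ ν ∈ c.support, c ν = 0 := by
    intro ν hν
    obtain ⟨hνS, hνG⟩ := hcmem ν hν
    obtain ⟨π, hπ1, hπ2⟩ := exists_proj_of_disjoint (G ν) (⨆ μ, ⨆ _ : μ ≠ ν, G μ) (hdisj ν)
    set π' : U →L[ℂ] U := LinearMap.toContinuousLinearMap π with hπ'
    have hπ'app : ∀ x : U, π' x = π x := fun x => rfl
    have hpowmem : ∀ (μ : ℂ) (k : ℕ) (v : U), v ∈ G μ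
        → ((A - μ • (1 : U →L[ℂ] U)) ^ k) v ∈ G μ := by
      intro μ k v hv
      simp only [hGdef, LinearMap.mem_ker, ContinuousLinearMap.coe_coe] at hv ⊢
      rw [← ContinuousLinearMap.mul_apply, ← pow_add, add_comm, pow_add,
        ContinuousLinearMap.mul_apply, hv, map_zero]
    set P : ℂ → ℝ → U := fun μ t => ∑ k ∈ Finset.range n,
      (((k)! : ℂ)⁻¹ * (t : ℂ) ^ k) • ((A - μ • (1 : U →L[ℂ] U)) ^ k) (c μ) with hP
    have hPmem : ∀ μ ∈ c.support, ∀ t : ℝ, P μ t ∈ G μ := fun μ hμ t =>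
      Submodule.sum_mem _ fun k _ => Submodule.smul_mem _ _ (hpowmem μ k _ (hcmem μ hμ).2)
    have hwsum : w = ∑ μ ∈ c.support, c μ := by
      rw [← hcw]; rfl
    have hflow : ∀ t : ℝ, (Real.exp (-ρ * t) : ℂ) • (NormedSpace.exp ((t : ℂ) • A)) w
        = ∑ μ ∈ c.support, Complex.exp ((t : ℂ) * (μ - ρ)) • P μ t := by
      intro t
      rw [hwsum, map_sum, Finset.smul_sum]
      refine Finset.sum_congr rfl fun μ hμ => ?_
      have hker : ((A - μ • (1 : U →L[ℂ] U)) ^ n) (c μ) = 0 :=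
        LinearMap.mem_ker.mp (hcmem μ hμ).2
      rw [exp_smul_split A (t : ℂ) μ, ContinuousLinearMap.smul_apply,
        exp_apply_of_pow_eq_zero (A - μ • (1 : U →L[ℂ] U)) n (c μ) hker (t : ℂ),
        smul_smul]
      congr 1
      rw [Complex.ofReal_exp, ← Complex.exp_add]
      congr 1
      push_cast
      ring
    have hproj : ∀ t : ℝ, π' ((Real.exp (-ρ * t) : ℂ) • (NormedSpace.exp ((t : ℂ) • A)) w)
        = Complex.exp ((t : ℂ) * (ν - ρ)) • P ν t := by
      intro t
      rw [hflow t, map_sum, Finset.sum_eq_single_of_mem ν hν]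
      · rw [map_smul, hπ'app, hπ1 _ (hPmem ν hν t)]
      · intro μ hμ hμν
        have hle : G μ ≤ ⨆ μ', ⨆ _ : μ' ≠ ν, G μ' :=
          le_iSup_of_le μ (le_iSup_of_le hμν le_rfl)
        rw [map_smul, hπ'app, hπ2 _ (hle (hPmem μ hμ t)), smul_zero]
    have hlim2 : Tendsto (fun t : ℝ => Complex.exp ((t : ℂ) * (ν - ρ)) • P ν t)
        atTop (nhds 0) := by
      have h0 := (π'.continuous.tendsto 0).comp hlim
      rw [map_zero] at h0
      exact h0.congr fun t => hproj t
    have hnorm : ∀ t : ℝ, ‖Complex.exp ((t : ℂ) * (ν - ρ)) • P ν t‖ = ‖P ν t‖ := by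
      intro t
      rw [norm_smul]
      have h1 : ‖Complex.exp ((t : ℂ) * (ν - ρ))‖ = 1 := by
        rw [Complex.norm_exp]
        simp [Complex.mul_re, hνS.2]
      rw [h1, one_mul]
    have hlim3 : Tendsto (fun t : ℝ => P ν t) atTop (nhds 0) := by
      rw [tendsto_zero_iff_norm_tendsto_zero]
      exact (tendsto_zero_iff_norm_tendsto_zero.mp hlim2).congr fun t => hnorm t
    have hlim4 : Tendsto (fun t : ℝ => ∑ k ∈ Finset.range n,
        ((t : ℂ) ^ k) • ((((k)! : ℂ)⁻¹) • ((A - ν • (1 : U →L[ℂ] U)) ^ k) (c ν)))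
        atTop (nhds 0) := by
      refine hlim3.congr fun t => ?_
      refine Finset.sum_congr rfl fun k _ => ?_
      rw [smul_smul, mul_comm]
    have hcoeff := poly_coeff_eq_zero n _ hlim4 0 hnpos
    simpa using hcoeff
  rw [show w = ∑ μ ∈ c.support, c μ from by rw [← hcw]; rfl]
  exact Finset.sum_eq_zero hkey
end

section
/- Let U be a finite-dimensional complex normed vector space, d ≥ 1, and Γ : ℝ^d → End(U) an ℝ-linear map whose values pairwise commute. Let λ : ℝ^d → ℂ be ℝ-linear and let E ∈ End(U) be an idempotent that commutes with Γ(X) for every X ∈ ℝ^d and such that E ∘ (Γ(X) − λ(X)·Id) is nilpotent for every X ∈ ℝ^d. Then there exists c ≥ 0 such that ‖e^{−λ(X)} E e^{Γ(X)}‖ ≤ c (1 + ‖X‖)^{dim U} for all X ∈ ℝ^d. -/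
open NormedSpace in
/-- If `E` is idempotent and commutes with `B`, then `E * B^n = E * (E*B)^n`. -/
lemma aux_pow_eq {A : Type*} [Ring A] (E B : A) (hE : IsIdempotentElem E)
    (h : Commute E B) (n : ℕ) : E * B ^ n = E * (E * B) ^ n := by
  cases n with
  | zero => simp
  | succ n =>
    rw [h.mul_pow, hE.pow_succ_eq, ← mul_assoc, hE.eq]

open NormedSpace in
lemma aux_mul_exp {A : Type*} [NormedRing A] [NormedAlgebra ℂ A] [CompleteSpace A]
    (E B : A) (hE : IsIdempotentElem E) (h : Commute E B) :
    E * exp B = E * exp (E * B) := by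
  simp only [exp_eq_tsum ℂ]
  rw [← (expSeries_summable' (𝕂 := ℂ) B).tsum_mul_left E,
    ← (expSeries_summable' (𝕂 := ℂ) (E * B)).tsum_mul_left E]
  refine tsum_congr fun n => ?_
  rw [mul_smul_comm, mul_smul_comm, aux_pow_eq E B hE h n]

/-- A nilpotent continuous endomorphism of a finite-dimensional space vanishes at
the power `finrank`. -/
lemma aux_pow_finrank_eq_zero (U : Type*) [NormedAddCommGroup U] [NormedSpace ℂ U]
    [FiniteDimensional ℂ U] (N : U →L[ℂ] U) (hN : IsNilpotent N) :
    N ^ (Module.finrank ℂ U) = 0 := by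
  have hφ : IsNilpotent (ContinuousLinearMap.toLinearMapRingHom (R₁ := ℂ) (M₁ := U) N) :=
    hN.map _
  have h1 : (ContinuousLinearMap.toLinearMapRingHom (R₁ := ℂ) (M₁ := U) N) ^
      (Module.finrank ℂ U) = 0 := by
    have := hφ.charpoly_eq_X_pow_finrank (R := ℂ) (M := U)
    have h2 := LinearMap.aeval_self_charpoly
      (ContinuousLinearMap.toLinearMapRingHom (R₁ := ℂ) (M₁ := U) N)
    rw [this] at h2
    simpa using h2
  have : ContinuousLinearMap.toLinearMapRingHom (R₁ := ℂ) (M₁ := U) (N ^ (Module.finrank ℂ U))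
      = 0 := by rw [map_pow, h1]
  exact ContinuousLinearMap.coe_injective this

set_option maxHeartbeats 1000000 in
set_option synthInstance.maxHeartbeats 400000 in
/-- Polynomial bound for truncated exponentials (cf. Lemma on `E_λ(X)`).
Let `Γ : ℝ^d → End(U)` be `ℝ`-linear with pairwise commuting values, `λ : ℝ^d → ℂ` be
`ℝ`-linear, and `E` an idempotent commuting with every `Γ(X)` such that
`E ∘ (Γ(X) − λ(X) Id)` is nilpotent for every `X`.  Then there is `c ≥ 0` with
`‖e^{−λ(X)} E e^{Γ(X)}‖ ≤ c (1 + ‖X‖)^{dim U}` for all `X ∈ ℝ^d`. -/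
theorem truncated_exponential_polynomial_bound
    (U : Type*) [NormedAddCommGroup U] [NormedSpace ℂ U] [FiniteDimensional ℂ U]
    (d : ℕ) (hd : 1 ≤ d)
    (Γ : EuclideanSpace ℝ (Fin d) →ₗ[ℝ] (U →L[ℂ] U))
    (hcomm : ∀ X Y : EuclideanSpace ℝ (Fin d), Commute (Γ X) (Γ Y))
    (lam : EuclideanSpace ℝ (Fin d) →ₗ[ℝ] ℂ)
    (E : U →L[ℂ] U) (hE : IsIdempotentElem E)
    (hEcomm : ∀ X : EuclideanSpace ℝ (Fin d), Commute E (Γ X))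
    (hnil : ∀ X : EuclideanSpace ℝ (Fin d),
      IsNilpotent (E * (Γ X - lam X • (1 : U →L[ℂ] U)))) :
    ∃ c ≥ (0 : ℝ), ∀ X : EuclideanSpace ℝ (Fin d),
      ‖Complex.exp (-(lam X)) • (E * NormedSpace.exp (Γ X))‖
        ≤ c * (1 + ‖X‖) ^ (Module.finrank ℂ U) := by
  classical
  set m := Module.finrank ℂ U with hm
  -- the linear map `X ↦ E * (Γ X - lam X • 1)`
  let g : EuclideanSpace ℝ (Fin d) →ₗ[ℝ] (U →L[ℂ] U) :=
    { toFun := fun X => E * (Γ X - lam X • 1)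
      map_add' := fun X Y => by
        simp only [map_add, add_smul, mul_sub, mul_add]
        abel
      map_smul' := fun r X => by
        simp only [map_smul, RingHom.id_apply]
        rw [smul_assoc, ← smul_sub, mul_smul_comm] }
  let G := LinearMap.toContinuousLinearMap g
  set C := ‖G‖ with hC
  refine ⟨‖E‖ * (m * (C + 1) ^ m), by positivity, fun X => ?_⟩
  set N : U →L[ℂ] U := E * (Γ X - lam X • 1) with hN
  have hNg : N = g X := rfl
  -- key identity
  have hA : Γ X = lam X • 1 + (Γ X - lam X • 1) := by abel
  have hcAB : Commute ((lam X) • (1 : U →L[ℂ] U)) (Γ X - lam X • 1) :=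
    (Commute.one_left _).smul_left _
  have hexp1 : NormedSpace.exp ((lam X) • (1 : U →L[ℂ] U))
      = Complex.exp (lam X) • 1 := by
    rw [← Algebra.algebraMap_eq_smul_one, ← NormedSpace.algebraMap_exp_comm,
      Algebra.algebraMap_eq_smul_one, ← Complex.exp_eq_exp_ℂ]
  have hkey : Complex.exp (-(lam X)) • (E * NormedSpace.exp (Γ X))
      = E * NormedSpace.exp N := by
    let +nondep : NormedAlgebra ℚ (U →L[ℂ] U) := .restrictScalars ℚ ℂ (U →L[ℂ] U)
    rw [hA, NormedSpace.exp_add_of_commute hcAB, hexp1]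
    rw [smul_mul_assoc, one_mul, mul_smul_comm, smul_smul, ← Complex.exp_add,
      neg_add_cancel, Complex.exp_zero, one_smul, hN]
    exact aux_mul_exp E _ hE ((hEcomm X).sub_right ((Commute.one_right E).smul_right _))
  rw [hkey]
  -- nilpotency: `N ^ m = 0`
  have hNm : N ^ m = 0 := aux_pow_finrank_eq_zero U N (hnil X)
  -- finite sum for `exp N`
  have hsum : NormedSpace.exp N = ∑ k ∈ Finset.range m, ((k.factorial : ℂ))⁻¹ • N ^ k := by
    rw [NormedSpace.exp_eq_tsum ℂ]
    refine tsum_eq_sum fun k hk => ?_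
    rw [Finset.mem_range, not_lt] at hk
    rw [pow_eq_zero_of_le hk hNm, smul_zero]
  -- bound on `‖N‖`
  have hNle : ‖N‖ ≤ C * ‖X‖ := by rw [hNg]; exact G.le_opNorm X
  have hX1 : (1 : ℝ) ≤ 1 + ‖X‖ := by linarith [norm_nonneg X]
  have hbase : (1 : ℝ) ≤ (C + 1) * (1 + ‖X‖) := by
    have hC0 : 0 ≤ C := norm_nonneg G
    nlinarith [norm_nonneg X]
  have hterm : ∀ k < m, ‖((k.factorial : ℂ))⁻¹ • N ^ k‖ ≤ (C + 1) ^ m * (1 + ‖X‖) ^ m := by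
    intro k hk
    have h1 : ‖((k.factorial : ℂ))⁻¹ • N ^ k‖ ≤ ‖N‖ ^ k := by
      have : ‖((k.factorial : ℂ))⁻¹‖ ≤ 1 := by
        rw [norm_inv, Complex.norm_natCast]
        have : (1 : ℝ) ≤ (k.factorial : ℝ) := by
          exact_mod_cast Nat.one_le_iff_ne_zero.2 (Nat.factorial_ne_zero k)
        rw [inv_le_one_iff₀]; right; exact this
      calc ‖((k.factorial : ℂ))⁻¹ • N ^ k‖
          ≤ ‖((k.factorial : ℂ))⁻¹‖ * ‖N ^ k‖ := norm_smul_le ((k.factorial : ℂ))⁻¹ (N ^ k)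
        _ ≤ 1 * ‖N ^ k‖ := by
            exact mul_le_mul_of_nonneg_right this (norm_nonneg _)
        _ = ‖N ^ k‖ := one_mul _
        _ ≤ ‖N‖ ^ k := by
            rcases Nat.eq_zero_or_pos k with h | h
            · subst h; simp only [pow_zero]; exact ContinuousLinearMap.norm_id_le (𝕜 := ℂ) (E := U)
            · exact norm_pow_le' N h
    have h2 : ‖N‖ ^ k ≤ ((C + 1) * (1 + ‖X‖)) ^ k := by
      apply pow_le_pow_left₀ (norm_nonneg N)
      have hC0 : 0 ≤ C := norm_nonneg G
      nlinarith [norm_nonneg X, hNle]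
    have h3 : ((C + 1) * (1 + ‖X‖)) ^ k ≤ ((C + 1) * (1 + ‖X‖)) ^ m :=
      pow_le_pow_right₀ hbase hk.le
    calc ‖((k.factorial : ℂ))⁻¹ • N ^ k‖ ≤ ((C + 1) * (1 + ‖X‖)) ^ m :=
          h1.trans (h2.trans h3)
      _ = (C + 1) ^ m * (1 + ‖X‖) ^ m := mul_pow _ _ _
  have hexpN : ‖NormedSpace.exp N‖ ≤ m * ((C + 1) ^ m * (1 + ‖X‖) ^ m) := by
    rw [hsum]
    calc ‖∑ k ∈ Finset.range m, ((k.factorial : ℂ))⁻¹ • N ^ k‖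
        ≤ ∑ k ∈ Finset.range m, ‖((k.factorial : ℂ))⁻¹ • N ^ k‖ := norm_sum_le _ _
      _ ≤ ∑ k ∈ Finset.range m, (C + 1) ^ m * (1 + ‖X‖) ^ m := by
          refine Finset.sum_le_sum fun k hk => hterm k (Finset.mem_range.1 hk)
      _ = m * ((C + 1) ^ m * (1 + ‖X‖) ^ m) := by
          rw [Finset.sum_const, Finset.card_range, nsmul_eq_mul]
  calc ‖E * NormedSpace.exp N‖ ≤ ‖E‖ * ‖NormedSpace.exp N‖ := norm_mul_le _ _
    _ ≤ ‖E‖ * (m * ((C + 1) ^ m * (1 + ‖X‖) ^ m)) :=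
        mul_le_mul_of_nonneg_left hexpN (norm_nonneg E)
    _ = ‖E‖ * (m * (C + 1) ^ m) * (1 + ‖X‖) ^ m := by ring
end

section
/- Let U be a finite-dimensional complex normed vector space, A ∈ End(U), ρ ∈ ℝ, β < 0, N ∈ ℕ and C ≥ 0. Let E be the spectral projection of A associated to the set of eigenvalues μ of A with Re μ > ρ + β. Let Φ : [0,∞) → U be differentiable and ψ : [0,∞) → U continuous with Φ'(t) = A Φ(t) + ψ(t) and ‖ψ(t)‖ ≤ C (1+t)^N e^{(ρ+β)t} for all t ≥ 0. Then the integral ∫₀^∞ E e^{−sA} ψ(s) ds converges absolutely, the limit lim_{t→+∞} e^{−tA} E Φ(t) exists, and this limit equals E Φ(0) + ∫₀^∞ E e^{−sA} ψ(s) ds. -/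
set_option maxHeartbeats 1000000
set_option linter.unusedSectionVars false
set_option linter.unusedVariables false

open Filter MeasureTheory

section Helpers
variable {U : Type*} [NormedAddCommGroup U] [NormedSpace ℂ U] [FiniteDimensional ℂ U]


lemma gen_eig_exp_bound {U : Type*} [NormedAddCommGroup U] [NormedSpace ℂ U]
    [FiniteDimensional ℂ U] (A : U →L[ℂ] U) (μ : ℂ) (n : ℕ) :
    ∃ c : ℝ, 0 ≤ c ∧ ∀ w ∈ LinearMap.ker ((((A - μ • (1 : U →L[ℂ] U)) ^ n : U →L[ℂ] U) : U →ₗ[ℂ] U)), ∀ s : ℝ, 0 ≤ s →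
      ‖NormedSpace.exp (-((s : ℂ) • A)) w‖ ≤ c * (1 + s) ^ n * Real.exp (-μ.re * s) * ‖w‖ := by
  set B := A - μ • (1 : U →L[ℂ] U) with hB
  refine ⟨∑ k ∈ Finset.range n, ‖B‖ ^ k / k.factorial, by positivity, ?_⟩
  intro w hw s hs
  have hBw : (B ^ n) w = 0 := hw
  have hsplit : -((s:ℂ) • A) = (-(s:ℂ) * μ) • (1 : U →L[ℂ] U) + (-(s:ℂ)) • B := by
    rw [hB]; module
  have hcomm : Commute ((-(s:ℂ) * μ) • (1 : U →L[ℂ] U)) ((-(s:ℂ)) • B) :=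
    ((Commute.one_left B).smul_left _).smul_right _
  have hexp1 : NormedSpace.exp ((-(s:ℂ) * μ) • (1 : U →L[ℂ] U))
      = Complex.exp (-(s:ℂ) * μ) • (1 : U →L[ℂ] U) := by
    rw [← Algebra.algebraMap_eq_smul_one, ← NormedSpace.algebraMap_exp_comm,
      Algebra.algebraMap_eq_smul_one, Complex.exp_eq_exp_ℂ]
  have hser : HasSum (fun k : ℕ => ((k.factorial : ℂ))⁻¹ • ((-(s:ℂ)) • B) ^ k)
      (NormedSpace.exp ((-(s:ℂ)) • B)) := by
    rw [NormedSpace.exp_eq_tsum ℂ]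
    exact (NormedSpace.expSeries_summable' (𝕂 := ℂ) ((-(s:ℂ)) • B)).hasSum
  have hser2 : HasSum (fun k : ℕ => ((k.factorial : ℂ))⁻¹ • (((-(s:ℂ)) • B) ^ k) w)
      (NormedSpace.exp ((-(s:ℂ)) • B) w) := by
    simpa using hser.mapL (ContinuousLinearMap.apply ℂ U w)
  have hterm : ∀ k : ℕ, ((k.factorial : ℂ))⁻¹ • (((-(s:ℂ)) • B) ^ k) w
      = (((-(s:ℂ)) ^ k) * ((k.factorial : ℂ))⁻¹) • (B ^ k) w := by
    intro k
    rw [smul_pow]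
    simp [ContinuousLinearMap.smul_apply, smul_smul, mul_comm]
  have hzero : ∀ k ∉ Finset.range n,
      (((-(s:ℂ)) ^ k) * ((k.factorial : ℂ))⁻¹) • (B ^ k) w = 0 := by
    intro k hk
    have hkn : n ≤ k := by simpa using hk
    have : (B ^ k) w = 0 := by
      have h4 : B ^ k = B ^ (k - n) * B ^ n := by
        rw [← pow_add]; congr 1; omega
      rw [h4, ContinuousLinearMap.mul_apply, hBw, map_zero]
    rw [this, smul_zero]
  have hsum : NormedSpace.exp ((-(s:ℂ)) • B) w
      = ∑ k ∈ Finset.range n, (((-(s:ℂ)) ^ k) * ((k.factorial : ℂ))⁻¹) • (B ^ k) w := by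
    rw [← (hser2.congr_fun (fun k => (hterm k).symm)).tsum_eq]
    exact tsum_eq_sum hzero
  have happly : NormedSpace.exp (-((s:ℂ) • A)) w
      = Complex.exp (-(s:ℂ) * μ) • (NormedSpace.exp ((-(s:ℂ)) • B) w) := by
    rw [hsplit, NormedSpace.exp_add_of_commute_of_mem_ball (𝕂 := ℂ) hcomm
      ((NormedSpace.expSeries_radius_eq_top ℂ (U →L[ℂ] U)).symm ▸ edist_lt_top _ _)
      ((NormedSpace.expSeries_radius_eq_top ℂ (U →L[ℂ] U)).symm ▸ edist_lt_top _ _), hexp1]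
    simp [ContinuousLinearMap.mul_apply]
  rw [happly, norm_smul]
  have habs : ‖Complex.exp (-(s:ℂ) * μ)‖ = Real.exp (-μ.re * s) := by
    rw [Complex.norm_exp]
    congr 1
    simp [Complex.mul_re]
    ring
  rw [habs, hsum]
  have key : ‖∑ k ∈ Finset.range n, (((-(s:ℂ)) ^ k) * ((k.factorial : ℂ))⁻¹) • (B ^ k) w‖
      ≤ ∑ k ∈ Finset.range n, (‖B‖ ^ k / k.factorial) * (s ^ k * ‖w‖) := by
    refine (norm_sum_le _ _).trans (Finset.sum_le_sum ?_)
    intro k _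
    have h1 : ‖((-(s:ℂ)) ^ k) * ((k.factorial : ℂ))⁻¹‖ = s ^ k / k.factorial := by
      rw [norm_mul, norm_pow, norm_inv, norm_neg]
      simp [abs_of_nonneg hs, div_eq_mul_inv]
    have h2 : ‖(B ^ k) w‖ ≤ ‖B‖ ^ k * ‖w‖ := by
      rcases Nat.eq_zero_or_pos k with hk0 | hk0
      · subst hk0; simp
      · exact le_trans ((B ^ k).le_opNorm w)
          (mul_le_mul_of_nonneg_right (norm_pow_le' _ hk0) (norm_nonneg _))
    rw [norm_smul, h1]
    calc s ^ k / k.factorial * ‖(B ^ k) w‖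
        ≤ s ^ k / k.factorial * (‖B‖ ^ k * ‖w‖) := by gcongr
      _ = ‖B‖ ^ k / k.factorial * (s ^ k * ‖w‖) := by ring
  have key2 : ∑ k ∈ Finset.range n, (‖B‖ ^ k / k.factorial) * (s ^ k * ‖w‖)
      ≤ (∑ k ∈ Finset.range n, ‖B‖ ^ k / k.factorial) * ((1 + s) ^ n * ‖w‖) := by
    rw [Finset.sum_mul]
    refine Finset.sum_le_sum ?_
    intro k hk
    have h3 : s ^ k ≤ (1 + s) ^ n :=
      le_trans (pow_le_pow_left₀ hs (by linarith) k)
        (pow_le_pow_right₀ (by linarith) (le_of_lt (Finset.mem_range.mp hk)))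
    have : 0 ≤ ‖B‖ ^ k / k.factorial := by positivity
    have hw0 : (0:ℝ) ≤ ‖w‖ := norm_nonneg _
    calc ‖B‖ ^ k / k.factorial * (s ^ k * ‖w‖)
        ≤ ‖B‖ ^ k / k.factorial * ((1 + s) ^ n * ‖w‖) := by gcongr
      _ = ‖B‖ ^ k / ↑k.factorial * ((1 + s) ^ n * ‖w‖) := rfl
  calc Real.exp (-μ.re * s) * ‖∑ k ∈ Finset.range n, (((-(s:ℂ)) ^ k) * ((k.factorial : ℂ))⁻¹) • (B ^ k) w‖
      ≤ Real.exp (-μ.re * s) * ((∑ k ∈ Finset.range n, ‖B‖ ^ k / k.factorial) * ((1 + s) ^ n * ‖w‖)) :=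
        mul_le_mul_of_nonneg_left (key.trans key2) (Real.exp_pos _).le
    _ = (∑ k ∈ Finset.range n, ‖B‖ ^ k / k.factorial) * (1 + s) ^ n * Real.exp (-μ.re * s) * ‖w‖ := by
        ring


variable {U : Type*} [NormedAddCommGroup U] [NormedSpace ℂ U] [FiniteDimensional ℂ U]

lemma ker_pow_eq_bot_of_not_spectrum (A : U →L[ℂ] U) {μ : ℂ} (h : μ ∉ spectrum ℂ A) (n : ℕ) :
    LinearMap.ker ((((A - μ • (1 : U →L[ℂ] U)) ^ n : U →L[ℂ] U) : U →ₗ[ℂ] U)) = ⊥ := by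
  have h1 : IsUnit (algebraMap ℂ (U →L[ℂ] U) μ - A) := spectrum.notMem_iff.mp h
  have h2 : IsUnit ((A - μ • (1 : U →L[ℂ] U)) ^ n) := by
    refine IsUnit.pow n ?_
    have h3 : A - μ • (1 : U →L[ℂ] U) = -(algebraMap ℂ (U →L[ℂ] U) μ - A) := by
      rw [Algebra.algebraMap_eq_smul_one, neg_sub]
    rw [h3]; exact h1.neg
  obtain ⟨u, hu⟩ := h2
  ext x
  simp only [LinearMap.mem_ker, Submodule.mem_bot]
  constructor
  · intro hx
    have h5 : ((u⁻¹ : (U →L[ℂ] U)ˣ) : U →L[ℂ] U) (((u : U →L[ℂ] U)) x) = x := by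
      rw [← ContinuousLinearMap.mul_apply, u.inv_mul, ContinuousLinearMap.one_apply]
    rw [← h5, hu, show ((A - μ • (1 : U →L[ℂ] U)) ^ n) x = 0 from hx, map_zero]
  · intro hx; simp [hx]

lemma ker_pow_finrank_eq_maxGen (A : U →L[ℂ] U) (μ : ℂ) :
    LinearMap.ker ((((A - μ • (1 : U →L[ℂ] U)) ^ (Module.finrank ℂ U) : U →L[ℂ] U) : U →ₗ[ℂ] U))
      = Module.End.maxGenEigenspace (A : U →ₗ[ℂ] U) μ := by
  rw [Module.End.maxGenEigenspace_eq_genEigenspace_finrank, Module.End.genEigenspace_nat]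
  have e1 : ((A - μ • (1 : U →L[ℂ] U) : U →L[ℂ] U) : U →ₗ[ℂ] U)
      = (A : U →ₗ[ℂ] U) - μ • (1 : U →ₗ[ℂ] U) := by
    ext y; simp
  have happ : ∀ (k : ℕ) (x : U),
      (((A - μ • (1 : U →L[ℂ] U) : U →L[ℂ] U) : U →ₗ[ℂ] U) ^ k) x
        = ((A - μ • (1 : U →L[ℂ] U)) ^ k) x := by
    intro k
    induction k with
    | zero => intro x; simp
    | succ k ih =>
      intro x
      rw [pow_succ, pow_succ, Module.End.mul_apply, ContinuousLinearMap.mul_apply, ih]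
      rfl
  ext x
  rw [LinearMap.mem_ker, LinearMap.mem_ker, ← e1, happ]; rfl

lemma sup_decomp (A : U →L[ℂ] U) (P : ℂ → Prop) :
    (⨆ μ ∈ {μ : ℂ | μ ∈ spectrum ℂ A ∧ P μ},
        LinearMap.ker ((((A - μ • (1 : U →L[ℂ] U)) ^ (Module.finrank ℂ U) : U →L[ℂ] U) : U →ₗ[ℂ] U))) ⊔
    (⨆ μ ∈ {μ : ℂ | μ ∈ spectrum ℂ A ∧ ¬ P μ},
        LinearMap.ker ((((A - μ • (1 : U →L[ℂ] U)) ^ (Module.finrank ℂ U) : U →L[ℂ] U) : U →ₗ[ℂ] U))) = ⊤ := by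
  refine top_unique ?_
  rw [← Module.End.iSup_maxGenEigenspace_eq_top (A : U →ₗ[ℂ] U)]
  refine iSup_le fun μ => ?_
  rw [← ker_pow_finrank_eq_maxGen]
  by_cases hs : μ ∈ spectrum ℂ A
  · by_cases hP : P μ
    · intro x hx
      exact Submodule.mem_sup_left
        (Submodule.mem_iSup_of_mem μ (Submodule.mem_iSup_of_mem ⟨hs, hP⟩ hx))
    · intro x hx
      exact Submodule.mem_sup_right
        (Submodule.mem_iSup_of_mem μ (Submodule.mem_iSup_of_mem ⟨hs, hP⟩ hx))
  · rw [ker_pow_eq_bot_of_not_spectrum A hs]; exact bot_le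

lemma mapsTo_part (A : U →L[ℂ] U) (P : ℂ → Prop) {v : U}
    (hv : v ∈ ⨆ μ ∈ {μ : ℂ | μ ∈ spectrum ℂ A ∧ P μ},
        LinearMap.ker ((((A - μ • (1 : U →L[ℂ] U)) ^ (Module.finrank ℂ U) : U →L[ℂ] U) : U →ₗ[ℂ] U))) :
    A v ∈ ⨆ μ ∈ {μ : ℂ | μ ∈ spectrum ℂ A ∧ P μ},
        LinearMap.ker ((((A - μ • (1 : U →L[ℂ] U)) ^ (Module.finrank ℂ U) : U →L[ℂ] U) : U →ₗ[ℂ] U)) := by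
  refine Submodule.iSup_induction
    (fun μ : ℂ => ⨆ (_ : μ ∈ {μ : ℂ | μ ∈ spectrum ℂ A ∧ P μ}),
      LinearMap.ker ((((A - μ • (1 : U →L[ℂ] U)) ^ (Module.finrank ℂ U) : U →L[ℂ] U) : U →ₗ[ℂ] U)))
    (motive := fun x => A x ∈ ⨆ μ ∈ {μ : ℂ | μ ∈ spectrum ℂ A ∧ P μ},
      LinearMap.ker ((((A - μ • (1 : U →L[ℂ] U)) ^ (Module.finrank ℂ U) : U →L[ℂ] U) : U →ₗ[ℂ] U))) hv ?_ ?_ ?_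
  · intro μ x hx
    by_cases h : μ ∈ {μ : ℂ | μ ∈ spectrum ℂ A ∧ P μ}
    · beta_reduce at hx
      rw [iSup_pos h] at hx
      have hcomm : Commute ((A - μ • (1 : U →L[ℂ] U)) ^ (Module.finrank ℂ U)) A := by
        refine Commute.pow_left ?_ _
        exact (Commute.refl A).sub_left ((Commute.one_left A).smul_left μ)
      have hker : A x ∈ LinearMap.ker ((((A - μ • (1 : U →L[ℂ] U)) ^ (Module.finrank ℂ U) : U →L[ℂ] U) : U →ₗ[ℂ] U)) := by
        have hx0 : ((A - μ • (1 : U →L[ℂ] U)) ^ (Module.finrank ℂ U)) x = 0 := hx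
        simp only [LinearMap.mem_ker]
        calc ((A - μ • (1 : U →L[ℂ] U)) ^ (Module.finrank ℂ U)) (A x)
            = A (((A - μ • (1 : U →L[ℂ] U)) ^ (Module.finrank ℂ U)) x) := by
              rw [← ContinuousLinearMap.mul_apply, ← ContinuousLinearMap.mul_apply, hcomm.eq]
          _ = 0 := by rw [hx0, map_zero]
      exact Submodule.mem_iSup_of_mem μ (by rw [iSup_pos h]; exact hker)
    · beta_reduce at hx
      rw [iSup_neg h] at hx
      have : x = 0 := by simpa using hx
      subst this
      simp
  · simp
  · intro x y hx hy
    rw [map_add]; exact Submodule.add_mem _ hx hy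



lemma mem_S1_of_proj (A E : U →L[ℂ] U) (P : ℂ → Prop)
    (hE1 : ∀ v ∈ ⨆ μ ∈ {μ : ℂ | μ ∈ spectrum ℂ A ∧ P μ},
        LinearMap.ker ((((A - μ • (1 : U →L[ℂ] U)) ^ (Module.finrank ℂ U) : U →L[ℂ] U) : U →ₗ[ℂ] U)), E v = v)
    (hE0 : ∀ v ∈ ⨆ μ ∈ {μ : ℂ | μ ∈ spectrum ℂ A ∧ ¬ P μ},
        LinearMap.ker ((((A - μ • (1 : U →L[ℂ] U)) ^ (Module.finrank ℂ U) : U →L[ℂ] U) : U →ₗ[ℂ] U)), E v = 0)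
    (w : U) :
    E w ∈ ⨆ μ ∈ {μ : ℂ | μ ∈ spectrum ℂ A ∧ P μ},
        LinearMap.ker ((((A - μ • (1 : U →L[ℂ] U)) ^ (Module.finrank ℂ U) : U →L[ℂ] U) : U →ₗ[ℂ] U)) := by
  have hw : w ∈ (⨆ μ ∈ {μ : ℂ | μ ∈ spectrum ℂ A ∧ P μ},
        LinearMap.ker ((((A - μ • (1 : U →L[ℂ] U)) ^ (Module.finrank ℂ U) : U →L[ℂ] U) : U →ₗ[ℂ] U))) ⊔
      (⨆ μ ∈ {μ : ℂ | μ ∈ spectrum ℂ A ∧ ¬ P μ},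
        LinearMap.ker ((((A - μ • (1 : U →L[ℂ] U)) ^ (Module.finrank ℂ U) : U →L[ℂ] U) : U →ₗ[ℂ] U))) := by
    rw [sup_decomp A P]; trivial
  obtain ⟨a, ha, b, hb, rfl⟩ := Submodule.mem_sup.mp hw
  rw [map_add, hE1 a ha, hE0 b hb, add_zero]
  exact ha

lemma proj_exp_bound (A E : U →L[ℂ] U) (r : ℝ)
    (hE1 : ∀ v ∈ ⨆ μ ∈ {μ : ℂ | μ ∈ spectrum ℂ A ∧ r < μ.re},
        LinearMap.ker ((((A - μ • (1 : U →L[ℂ] U)) ^ (Module.finrank ℂ U) : U →L[ℂ] U) : U →ₗ[ℂ] U)), E v = v)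
    (hE0 : ∀ v ∈ ⨆ μ ∈ {μ : ℂ | μ ∈ spectrum ℂ A ∧ ¬ r < μ.re},
        LinearMap.ker ((((A - μ • (1 : U →L[ℂ] U)) ^ (Module.finrank ℂ U) : U →L[ℂ] U) : U →ₗ[ℂ] U)), E v = 0) :
    ∃ m K : ℝ, r < m ∧ 0 ≤ K ∧ ∀ w : U, ∀ s : ℝ, 0 ≤ s →
      ‖NormedSpace.exp (-((s:ℂ) • A)) (E w)‖
        ≤ K * (1 + s) ^ (Module.finrank ℂ U) * Real.exp (-m * s) * ‖w‖ := by
  classical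
  set n := Module.finrank ℂ U with hn
  set S1 := ⨆ μ ∈ {μ : ℂ | μ ∈ spectrum ℂ A ∧ r < μ.re},
      LinearMap.ker ((((A - μ • (1 : U →L[ℂ] U)) ^ n : U →L[ℂ] U) : U →ₗ[ℂ] U)) with hS1
  have hrange : ∀ w : U, E w ∈ S1 := mem_S1_of_proj A E _ hE1 hE0
  set b := Module.finBasis ℂ ↥S1 with hb
  have hmem : ∀ i, ((b i : U)) ∈ ⨆ μ : ℂ,
      ⨆ (_ : μ ∈ {μ : ℂ | μ ∈ spectrum ℂ A ∧ r < μ.re}),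
        LinearMap.ker ((((A - μ • (1 : U →L[ℂ] U)) ^ n : U →L[ℂ] U) : U →ₗ[ℂ] U)) := fun i => (b i).2
  have hdec := fun i => (Submodule.mem_iSup_iff_exists_finsupp _ _).mp (hmem i)
  choose f hf1 hf2 using hdec
  choose c hc0 hc using fun μ : ℂ => gen_eig_exp_bound A μ n
  have hgood : ∀ i μ, f i μ ≠ 0 → (μ ∈ spectrum ℂ A ∧ r < μ.re) ∧
      f i μ ∈ LinearMap.ker ((((A - μ • (1 : U →L[ℂ] U)) ^ n : U →L[ℂ] U) : U →ₗ[ℂ] U)) := by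
    intro i μ hne
    have h := hf1 i μ
    by_cases hμ : μ ∈ {μ : ℂ | μ ∈ spectrum ℂ A ∧ r < μ.re}
    · rw [iSup_pos hμ] at h; exact ⟨hμ, h⟩
    · rw [iSup_neg hμ] at h
      exact absurd (by simpa using h) hne
  set T : Finset ℂ := Finset.univ.biUnion (fun i => (f i).support) with hT
  set m : ℝ := if hT' : T.Nonempty then T.inf' hT' (fun μ => μ.re) else r + 1 with hm'
  have hTre : ∀ μ ∈ T, r < μ.re := by
    intro μ hμ
    obtain ⟨i, _, hi⟩ := Finset.mem_biUnion.mp hμ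
    exact ((hgood i μ (Finsupp.mem_support_iff.mp hi)).1).2
  have hm : r < m := by
    rw [hm']
    split_ifs with hT'
    · exact (Finset.lt_inf'_iff hT').mpr hTre
    · linarith
  have hmle : ∀ i μ, f i μ ≠ 0 → m ≤ μ.re := by
    intro i μ hne
    have hμT : μ ∈ T :=
      Finset.mem_biUnion.mpr ⟨i, Finset.mem_univ i, Finsupp.mem_support_iff.mpr hne⟩
    have hT' : T.Nonempty := ⟨μ, hμT⟩
    rw [hm', dif_pos hT']
    exact Finset.inf'_le _ hμT
  set φ : Fin (Module.finrank ℂ ↥S1) → ↥S1 →L[ℂ] ℂ :=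
    fun i => LinearMap.toContinuousLinearMap (b.coord i) with hφ
  set D : Fin (Module.finrank ℂ ↥S1) → ℝ :=
    fun i => ∑ μ ∈ (f i).support, c μ * ‖f i μ‖ with hD
  have hD0 : ∀ i, 0 ≤ D i := by
    intro i
    exact Finset.sum_nonneg fun μ _ => mul_nonneg (hc0 μ) (norm_nonneg _)
  refine ⟨m, ‖E‖ * ∑ i, ‖φ i‖ * D i, hm, ?_, ?_⟩
  · exact mul_nonneg (norm_nonneg _)
      (Finset.sum_nonneg fun i _ => mul_nonneg (ContinuousLinearMap.opNorm_nonneg _) (hD0 i))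
  intro w s hs
  set v : ↥S1 := ⟨E w, hrange w⟩ with hv
  have hvrepr : E w = ∑ i, b.repr v i • (b i : U) := by
    have h1 := b.sum_repr v
    have h2 : ((∑ i, b.repr v i • b i : ↥S1) : U) = ∑ i, b.repr v i • (b i : U) := by
      push_cast
      rfl
    have h3 : (v : U) = ∑ i, b.repr v i • (b i : U) := by rw [← h2, h1]
    exact h3
  have step : ∀ i, ‖NormedSpace.exp (-((s:ℂ) • A)) ((b i : U))‖
      ≤ D i * ((1 + s) ^ n * Real.exp (-m * s)) := by
    intro i
    have hbi : (b i : U) = ∑ μ ∈ (f i).support, f i μ := (hf2 i).symm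
    rw [hbi, map_sum]
    refine (norm_sum_le _ _).trans ?_
    rw [hD, Finset.sum_mul]
    refine Finset.sum_le_sum ?_
    intro μ hμ
    have hne : f i μ ≠ 0 := Finsupp.mem_support_iff.mp hμ
    have hker := (hgood i μ hne).2
    calc ‖NormedSpace.exp (-((s:ℂ) • A)) (f i μ)‖
        ≤ c μ * (1 + s) ^ n * Real.exp (-μ.re * s) * ‖f i μ‖ := hc μ (f i μ) hker s hs
      _ ≤ c μ * (1 + s) ^ n * Real.exp (-m * s) * ‖f i μ‖ := by
          have : Real.exp (-μ.re * s) ≤ Real.exp (-m * s) := by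
            apply Real.exp_le_exp.mpr
            have := hmle i μ hne
            nlinarith
          have h1 : 0 ≤ c μ * (1 + s) ^ n := mul_nonneg (hc0 μ) (by positivity)
          nlinarith [norm_nonneg (f i μ), mul_nonneg h1 (Real.exp_pos (-m*s)).le,
            mul_le_mul_of_nonneg_left this h1]
      _ = c μ * ‖f i μ‖ * ((1 + s) ^ n * Real.exp (-m * s)) := by ring
  have hrep : ∀ i, ‖b.repr v i‖ ≤ ‖φ i‖ * (‖E‖ * ‖w‖) := by
    intro i
    have h1 : b.repr v i = φ i v := by
      rw [hφ]
      simp [Module.Basis.coord_apply]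
    rw [h1]
    calc ‖φ i v‖ ≤ ‖φ i‖ * ‖v‖ := (φ i).le_opNorm v
      _ = ‖φ i‖ * ‖E w‖ := rfl
      _ ≤ ‖φ i‖ * (‖E‖ * ‖w‖) :=
          mul_le_mul_of_nonneg_left (E.le_opNorm w) (ContinuousLinearMap.opNorm_nonneg _)
  calc ‖NormedSpace.exp (-((s:ℂ) • A)) (E w)‖
      = ‖∑ i, b.repr v i • NormedSpace.exp (-((s:ℂ) • A)) ((b i : U))‖ := by
        rw [hvrepr, map_sum]
        congr 1
        exact Finset.sum_congr rfl fun i _ => (map_smul _ _ _)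
    _ ≤ ∑ i, ‖b.repr v i‖ * ‖NormedSpace.exp (-((s:ℂ) • A)) ((b i : U))‖ := by
        refine (norm_sum_le _ _).trans (Finset.sum_le_sum ?_)
        intro i _
        rw [norm_smul]
    _ ≤ ∑ i, (‖φ i‖ * (‖E‖ * ‖w‖)) * (D i * ((1 + s) ^ n * Real.exp (-m * s))) := by
        refine Finset.sum_le_sum ?_
        intro i _
        exact mul_le_mul (hrep i) (step i) (norm_nonneg _)
          (mul_nonneg (ContinuousLinearMap.opNorm_nonneg _)
            (mul_nonneg (ContinuousLinearMap.opNorm_nonneg _) (norm_nonneg _)))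
    _ = (∑ i, ‖φ i‖ * D i) * (‖E‖ * ‖w‖ * ((1 + s) ^ n * Real.exp (-m * s))) := by
        rw [Finset.sum_mul]
        exact Finset.sum_congr rfl fun i _ => by ring
    _ = (‖E‖ * ∑ i, ‖φ i‖ * D i) * (1 + s) ^ n * Real.exp (-m * s) * ‖w‖ := by ring



lemma proj_comm (A E : U →L[ℂ] U) (P : ℂ → Prop)
    (hE1 : ∀ v ∈ ⨆ μ ∈ {μ : ℂ | μ ∈ spectrum ℂ A ∧ P μ},
        LinearMap.ker ((((A - μ • (1 : U →L[ℂ] U)) ^ (Module.finrank ℂ U) : U →L[ℂ] U) : U →ₗ[ℂ] U)), E v = v)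
    (hE0 : ∀ v ∈ ⨆ μ ∈ {μ : ℂ | μ ∈ spectrum ℂ A ∧ ¬ P μ},
        LinearMap.ker ((((A - μ • (1 : U →L[ℂ] U)) ^ (Module.finrank ℂ U) : U →L[ℂ] U) : U →ₗ[ℂ] U)), E v = 0)
    (w : U) : E (A w) = A (E w) := by
  have hw : w ∈ (⨆ μ ∈ {μ : ℂ | μ ∈ spectrum ℂ A ∧ P μ},
        LinearMap.ker ((((A - μ • (1 : U →L[ℂ] U)) ^ (Module.finrank ℂ U) : U →L[ℂ] U) : U →ₗ[ℂ] U))) ⊔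
      (⨆ μ ∈ {μ : ℂ | μ ∈ spectrum ℂ A ∧ ¬ P μ},
        LinearMap.ker ((((A - μ • (1 : U →L[ℂ] U)) ^ (Module.finrank ℂ U) : U →L[ℂ] U) : U →ₗ[ℂ] U))) := by
    rw [sup_decomp A P]; trivial
  obtain ⟨a, ha, b, hb, rfl⟩ := Submodule.mem_sup.mp hw
  have hEw : E (a + b) = a := by rw [map_add, hE1 a ha, hE0 b hb, add_zero]
  rw [map_add, map_add, hE1 _ (mapsTo_part A P ha),
    hE0 _ (mapsTo_part A (fun μ => ¬ P μ) hb), add_zero, hEw]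

lemma poly_exp_bound (M : ℕ) {ε : ℝ} (hε : 0 < ε) :
    ∃ c : ℝ, 0 ≤ c ∧ ∀ s : ℝ, 0 ≤ s → (1 + s) ^ M ≤ c * Real.exp (ε * s) := by
  refine ⟨M.factorial / ε ^ M * Real.exp ε, by positivity, ?_⟩
  intro s hs
  have hx : (0:ℝ) ≤ ε * (1 + s) := by positivity
  have h1 : (ε * (1 + s)) ^ M / M.factorial ≤ Real.exp (ε * (1 + s)) := by
    calc (ε * (1 + s)) ^ M / M.factorial
        ≤ ∑ i ∈ Finset.range (M + 1), (ε * (1 + s)) ^ i / i.factorial :=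
          Finset.single_le_sum (f := fun i => (ε * (1 + s)) ^ i / i.factorial)
            (fun i _ => by positivity) (Finset.self_mem_range_succ M)
      _ ≤ Real.exp (ε * (1 + s)) := Real.sum_le_exp_of_nonneg hx _
  have h2 : (1 + s) ^ M = (ε * (1 + s)) ^ M / ε ^ M := by
    rw [mul_pow]
    field_simp
  rw [h2]
  calc (ε * (1 + s)) ^ M / ε ^ M
      = ((ε * (1 + s)) ^ M / M.factorial) * (M.factorial / ε ^ M) := by
        have : (M.factorial : ℝ) ≠ 0 := Nat.cast_ne_zero.mpr M.factorial_ne_zero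
        field_simp
    _ ≤ Real.exp (ε * (1 + s)) * (M.factorial / ε ^ M) :=
        mul_le_mul_of_nonneg_right h1 (by positivity)
    _ = M.factorial / ε ^ M * Real.exp ε * Real.exp (ε * s) := by
        rw [show ε * (1 + s) = ε + ε * s by ring, Real.exp_add]
        ring

end Helpers



/-- Let `A ∈ End(U)`, `ρ ∈ ℝ`, `β < 0`, and let `E` be the spectral projection of `A`
associated to the eigenvalues `μ` with `Re μ > ρ + β`.  If `Φ' = AΦ + ψ` on `[0,∞)` with
`‖ψ(t)‖ ≤ C (1+t)^N e^{(ρ+β)t}`, then `∫₀^∞ E e^{−sA} ψ(s) ds` converges absolutely and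
`lim_{t→∞} e^{−tA} E Φ(t)` exists and equals `E Φ(0) + ∫₀^∞ E e^{−sA} ψ(s) ds`. -/
theorem limit_of_projected_solution_exists
    (U : Type*) [NormedAddCommGroup U] [NormedSpace ℂ U] [FiniteDimensional ℂ U]
    (A : U →L[ℂ] U) (ρ β : ℝ) (hβ : β < 0) (N : ℕ) (C : ℝ) (hC : 0 ≤ C)
    (E : U →L[ℂ] U)
    (hE1 : ∀ v ∈ ⨆ μ ∈ {μ : ℂ | μ ∈ spectrum ℂ A ∧ ρ + β < μ.re},
        LinearMap.ker ((((A - μ • (1 : U →L[ℂ] U)) ^ (Module.finrank ℂ U) : U →L[ℂ] U) : U →ₗ[ℂ] U)), E v = v)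
    (hE0 : ∀ v ∈ ⨆ μ ∈ {μ : ℂ | μ ∈ spectrum ℂ A ∧ ¬ ρ + β < μ.re},
        LinearMap.ker ((((A - μ • (1 : U →L[ℂ] U)) ^ (Module.finrank ℂ U) : U →L[ℂ] U) : U →ₗ[ℂ] U)), E v = 0)
    (Φ ψ : ℝ → U)
    (hΦ : ∀ t ≥ (0:ℝ), HasDerivAt Φ (A (Φ t) + ψ t) t)
    (hψc : ContinuousOn ψ (Set.Ici 0))
    (hψ : ∀ t ≥ (0:ℝ), ‖ψ t‖ ≤ C * (1 + t) ^ N * Real.exp ((ρ + β) * t)) :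
    IntegrableOn (fun s : ℝ => E ((NormedSpace.exp (-((s : ℂ) • A))) (ψ s))) (Set.Ici 0) ∧
    Tendsto (fun t : ℝ => (NormedSpace.exp (-((t : ℂ) • A))) (E (Φ t))) atTop
      (nhds (E (Φ 0) + ∫ s in Set.Ici (0:ℝ),
        E ((NormedSpace.exp (-((s : ℂ) • A))) (ψ s)))) := by
  classical
  set n := Module.finrank ℂ U with hn
  obtain ⟨m, K, hm, hK0, hbound⟩ := proj_exp_bound A E (ρ + β) hE1 hE0
  have hAE : ∀ w, E (A w) = A (E w) :=
    proj_comm A E (fun μ => ρ + β < μ.re) hE1 hE0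
  -- commutation of E with the exponential
  have hcEA : Commute E A := by
    refine ContinuousLinearMap.ext fun w => ?_
    simpa only [ContinuousLinearMap.mul_apply] using hAE w
  have hEexp : ∀ (s : ℝ) (x : U),
      E (NormedSpace.exp (-((s:ℂ) • A)) x) = NormedSpace.exp (-((s:ℂ) • A)) (E x) := by
    intro s x
    have hc : Commute E (-((s:ℂ) • A)) := ((hcEA.smul_right (s:ℂ)).neg_right)
    have h2 := hc.exp_right
    calc E (NormedSpace.exp (-((s:ℂ) • A)) x)
        = (E * NormedSpace.exp (-((s:ℂ) • A))) x := rfl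
      _ = (NormedSpace.exp (-((s:ℂ) • A)) * E) x := by rw [h2.eq]
      _ = NormedSpace.exp (-((s:ℂ) • A)) (E x) := rfl
  -- derivative of the exponential
  have hFder : ∀ t : ℝ, HasDerivAt (fun t : ℝ => NormedSpace.exp (-((t:ℂ) • A)))
      (NormedSpace.exp (-((t:ℂ) • A)) * (-A)) t := by
    intro t
    have h1 : HasDerivAt (fun z : ℂ => NormedSpace.exp (z • (-A)))
        (NormedSpace.exp (((t:ℂ)) • (-A)) * (-A)) ((t:ℂ)) :=
      hasDerivAt_exp_smul_const (-A) (t:ℂ)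
    have h2 : HasDerivAt (fun t : ℝ => (t:ℂ)) 1 t := by
      simpa using (hasDerivAt_id t).ofReal_comp
    have h3 := h1.scomp t h2
    simp only [Function.comp, one_smul, smul_neg] at h3
    exact h3
  have hFcont : Continuous (fun t : ℝ => NormedSpace.exp (-((t:ℂ) • A))) := by
    rw [continuous_iff_continuousAt]
    exact fun t => (hFder t).continuousAt
  -- the two forms of the integrand
  set h : ℝ → U := fun s => E (NormedSpace.exp (-((s:ℂ) • A)) (ψ s)) with hh
  have hform : ∀ s, h s = NormedSpace.exp (-((s:ℂ) • A)) (E (ψ s)) := fun s => hEexp s (ψ s)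
  have hcont : ContinuousOn h (Set.Ici 0) :=
    E.continuous.comp_continuousOn (hFcont.continuousOn.clm_apply hψc)
  -- decay bound for the integrand
  set a : ℝ := m - (ρ + β) with ha
  have ha0 : 0 < a := by simp [ha]; linarith
  obtain ⟨c2, hc20, hc2⟩ := poly_exp_bound (n + N) (show 0 < a / 2 by linarith)
  have hkey : ∀ s : ℝ, 0 ≤ s → ‖h s‖ ≤ K * C * c2 * Real.exp (-(a / 2) * s) := by
    intro s hs
    rw [hform s]
    calc ‖NormedSpace.exp (-((s:ℂ) • A)) (E (ψ s))‖
        ≤ K * (1 + s) ^ n * Real.exp (-m * s) * ‖ψ s‖ := hbound (ψ s) s hs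
      _ ≤ K * (1 + s) ^ n * Real.exp (-m * s) * (C * (1 + s) ^ N * Real.exp ((ρ + β) * s)) := by
          have h0 : (0:ℝ) ≤ K * (1 + s) ^ n * Real.exp (-m * s) := by positivity
          exact mul_le_mul_of_nonneg_left (hψ s hs) h0
      _ = (K * C) * ((1 + s) ^ (n + N) * Real.exp ((ρ + β - m) * s)) := by
          rw [pow_add, show (ρ + β - m) * s = -m * s + (ρ + β) * s by ring, Real.exp_add]
          ring
      _ ≤ (K * C) * ((c2 * Real.exp (a / 2 * s)) * Real.exp ((ρ + β - m) * s)) := by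
          have := hc2 s hs
          have hKC : (0:ℝ) ≤ K * C := mul_nonneg hK0 hC
          have hE0' : (0:ℝ) < Real.exp ((ρ + β - m) * s) := Real.exp_pos _
          nlinarith [mul_le_mul_of_nonneg_right this hE0'.le]
      _ = K * C * c2 * Real.exp (-(a / 2) * s) := by
          rw [mul_assoc c2, ← Real.exp_add, show a / 2 * s + (ρ + β - m) * s = -(a / 2) * s by
            rw [ha]; ring]
          ring
  -- integrability
  have hint : IntegrableOn h (Set.Ici 0) := by
    rw [integrableOn_Ici_iff_integrableOn_Ioi]
    refine Integrable.mono'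
      ((exp_neg_integrableOn_Ioi 0 (show 0 < a / 2 by linarith)).const_mul (K * C * c2))
      ((hcont.mono Set.Ioi_subset_Ici_self).aestronglyMeasurable measurableSet_Ioi) ?_
    rw [ae_restrict_iff' measurableSet_Ioi]
    exact Filter.Eventually.of_forall fun s hs => hkey s (le_of_lt hs)
  refine ⟨hint, ?_⟩
  -- derivative of the projected solution
  have hg : ∀ t ∈ Set.Ici (0:ℝ),
      HasDerivAt (fun τ : ℝ => NormedSpace.exp (-((τ:ℂ) • A)) (E (Φ τ))) (h t) t := by
    intro t ht
    have hEΦ : HasDerivAt (fun τ => E (Φ τ)) (E (A (Φ t) + ψ t)) t := by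
      have := ((E.restrictScalars ℝ).hasFDerivAt (x := Φ t)).comp_hasDerivAt t (hΦ t ht)
      simpa [Function.comp_def] using this
    have hFderR : HasDerivAt
        (fun t : ℝ => ContinuousLinearMap.restrictScalarsL ℂ U U ℝ ℝ
          (NormedSpace.exp (-((t:ℂ) • A))))
        (ContinuousLinearMap.restrictScalarsL ℂ U U ℝ ℝ
          (NormedSpace.exp (-((t:ℂ) • A)) * (-A))) t := by
      have := ((ContinuousLinearMap.restrictScalarsL ℂ U U ℝ ℝ).hasFDerivAt
        (x := NormedSpace.exp (-((t:ℂ) • A)))).comp_hasDerivAt t (hFder t)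
      simpa [Function.comp_def] using this
    have h4 := hFderR.clm_apply hEΦ
    have h5 : (NormedSpace.exp (-((t:ℂ) • A)) * (-A)) (E (Φ t))
        + NormedSpace.exp (-((t:ℂ) • A)) (E (A (Φ t) + ψ t)) = h t := by
      rw [ContinuousLinearMap.mul_apply, hform t]
      simp only [ContinuousLinearMap.neg_apply, map_neg, map_add]
      rw [hAE]
      abel
    rw [← h5]
    exact h4
  -- fundamental theorem of calculus
  have hftc : ∀ t : ℝ, 0 ≤ t →
      E (Φ 0) + ∫ s in (0:ℝ)..t, h s = NormedSpace.exp (-((t:ℂ) • A)) (E (Φ t)) := by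
    intro t ht
    have hsub : Set.uIcc (0:ℝ) t ⊆ Set.Ici 0 := by
      rw [Set.uIcc_of_le ht]
      exact fun x hx => hx.1
    have h6 : (∫ s in (0:ℝ)..t, h s)
        = NormedSpace.exp (-((t:ℂ) • A)) (E (Φ t))
          - NormedSpace.exp (-(((0:ℝ):ℂ) • A)) (E (Φ 0)) := by
      refine intervalIntegral.integral_eq_sub_of_hasDerivAt (fun x hx => hg x (hsub hx)) ?_
      exact (hcont.mono hsub).intervalIntegrable
    have h7 : NormedSpace.exp (-(((0:ℝ):ℂ) • A)) (E (Φ 0)) = E (Φ 0) := by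
      norm_num [NormedSpace.exp_zero]
    rw [h6, h7]
    abel
  -- pass to the limit
  have hIoi : IntegrableOn h (Set.Ioi 0) :=
    hint.mono_set Set.Ioi_subset_Ici_self
  have htend : Tendsto (fun t : ℝ => E (Φ 0) + ∫ s in (0:ℝ)..t, h s) atTop
      (nhds (E (Φ 0) + ∫ s in Set.Ioi (0:ℝ), h s)) :=
    tendsto_const_nhds.add (intervalIntegral_tendsto_integral_Ioi 0 hIoi tendsto_id)
  have hIci : (∫ s in Set.Ici (0:ℝ), h s) = ∫ s in Set.Ioi (0:ℝ), h s :=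
    integral_Ici_eq_integral_Ioi
  rw [hIci]
  refine htend.congr' ?_
  filter_upwards [eventually_ge_atTop (0:ℝ)] with t ht
  exact hftc t ht
end

section
/- Let U be a finite-dimensional complex normed vector space, A ∈ End(U), ρ, ρ' ∈ ℝ with ρ' < ρ, β < 0, N ∈ ℕ and C ≥ 0. Let E be the spectral projection of A associated to the set of eigenvalues μ of A with Re μ ≤ ρ'. Let Φ : [0,∞) → U be differentiable and ψ : [0,∞) → U continuous with Φ'(t) = A Φ(t) + ψ(t) and ‖ψ(t)‖ ≤ C (1+t)^N e^{(ρ+β)t} for all t ≥ 0. Then there exists C' > 0 such that ‖E Φ(t)‖ ≤ C' (1+t)^{N + dim U + 1} e^{max(ρ', ρ+β) t} for all t ≥ 0. -/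
open Filter MeasureTheory

open NormedSpace in
private lemma exp_ker_bound
    {U : Type*} [NormedAddCommGroup U] [NormedSpace ℂ U] [FiniteDimensional ℂ U]
    (A : U →L[ℂ] U) (μ : ℂ) (d : ℕ) {x : U}
    (hx : x ∈ LinearMap.ker (((A - μ • (1 : U →L[ℂ] U)) ^ d : U →L[ℂ] U) : U →ₗ[ℂ] U)) {t : ℝ} (ht : 0 ≤ t) :
    ‖exp ((t : ℂ) • A) x‖ ≤
      (∑ k ∈ Finset.range d, ‖(A - μ • (1 : U →L[ℂ] U)) ^ k‖) * (1 + t) ^ d *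
        Real.exp (μ.re * t) * ‖x‖ := by
  haveI : CompleteSpace U := FiniteDimensional.complete ℂ U
  letI : NormedAlgebra ℚ (U →L[ℂ] U) := .restrictScalars ℚ ℂ (U →L[ℂ] U)
  set B := A - μ • (1 : U →L[ℂ] U) with hB
  have hxd : (B ^ d) x = 0 := hx
  have hBn : ∀ n, d ≤ n → (B ^ n) x = 0 := by
    intro n hn
    have h1 : B ^ n = B ^ (n - d) * B ^ d := by rw [← pow_add]; congr 1; omega
    rw [h1, ContinuousLinearMap.mul_apply, hxd, map_zero]
  -- split exponential
  have hsplit : (t : ℂ) • A = ((t : ℂ) * μ) • (1 : U →L[ℂ] U) + (t : ℂ) • B := by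
    rw [hB, smul_sub, ← smul_smul]; abel
  have hcomm : Commute (((t : ℂ) * μ) • (1 : U →L[ℂ] U)) ((t : ℂ) • B) :=
    ((Commute.one_left _).smul_left _).smul_right _
  have hexp1 : exp (((t : ℂ) * μ) • (1 : U →L[ℂ] U)) =
      Complex.exp ((t : ℂ) * μ) • (1 : U →L[ℂ] U) := by
    rw [← Algebra.algebraMap_eq_smul_one, ← algebraMap_exp_comm, ← Algebra.algebraMap_eq_smul_one,
      Complex.exp_eq_exp_ℂ]
  have hmul : exp ((t : ℂ) • A) x = Complex.exp ((t : ℂ) * μ) • (exp ((t : ℂ) • B) x) := by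
    rw [hsplit, exp_add_of_commute hcomm, hexp1, smul_mul_assoc, one_mul,
      ContinuousLinearMap.smul_apply]
  -- series for exp B x
  have hser : exp ((t : ℂ) • B) x = ∑' n : ℕ, (n.factorial⁻¹ : ℂ) • (((t : ℂ) • B) ^ n) x := by
    rw [exp_eq_tsum (𝕂 := ℂ)]
    have := (ContinuousLinearMap.apply ℂ U x).map_tsum (expSeries_summable' (𝕂 := ℂ) ((t : ℂ) • B))
    simpa using this
  have hfin : exp ((t : ℂ) • B) x
      = ∑ k ∈ Finset.range d, (((t : ℂ) ^ k) * ((k.factorial : ℂ)⁻¹)) • ((B ^ k) x) := by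
    rw [hser, tsum_eq_sum (s := Finset.range d)]
    · refine Finset.sum_congr rfl fun k _ => ?_
      rw [smul_pow, ContinuousLinearMap.smul_apply, smul_smul, mul_comm]
    · intro n hn
      have hdn : d ≤ n := by
        by_contra h
        exact hn (Finset.mem_range.mpr (by omega))
      rw [smul_pow, ContinuousLinearMap.smul_apply, hBn n hdn, smul_zero, smul_zero]
  have hsum : ‖exp ((t : ℂ) • B) x‖
      ≤ (∑ k ∈ Finset.range d, ‖B ^ k‖) * (1 + t) ^ d * ‖x‖ := by
    rw [hfin]
    refine (norm_sum_le _ _).trans ?_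
    rw [Finset.sum_mul, Finset.sum_mul]
    refine Finset.sum_le_sum fun k hk => ?_
    have h1 : ‖((t : ℂ) ^ k) * ((k.factorial : ℂ)⁻¹)‖ ≤ (1 + t) ^ d := by
      rw [norm_mul, norm_pow, norm_inv, Complex.norm_real, Real.norm_eq_abs, abs_of_nonneg ht,
        Complex.norm_natCast]
      have hf1 : ((k.factorial : ℝ))⁻¹ ≤ 1 := by
        rw [inv_le_one_iff₀]; right; exact_mod_cast k.factorial_pos
      have htk : t ^ k ≤ (1 + t) ^ d := by
        calc t ^ k ≤ (1 + t) ^ k := pow_le_pow_left₀ ht (by linarith) k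
        _ ≤ (1 + t) ^ d := pow_le_pow_right₀ (by linarith) (Finset.mem_range.mp hk).le
      calc t ^ k * ((k.factorial : ℝ))⁻¹ ≤ t ^ k * 1 := by
            refine mul_le_mul_of_nonneg_left hf1 (by positivity)
      _ = t ^ k := mul_one _
      _ ≤ (1 + t) ^ d := htk
    have h2 : ‖(B ^ k) x‖ ≤ ‖B ^ k‖ * ‖x‖ := (B ^ k).le_opNorm x
    calc ‖(((t : ℂ) ^ k) * ((k.factorial : ℂ)⁻¹)) • ((B ^ k) x)‖
        = ‖((t : ℂ) ^ k) * ((k.factorial : ℂ)⁻¹)‖ * ‖(B ^ k) x‖ := norm_smul _ _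
    _ ≤ (1 + t) ^ d * (‖B ^ k‖ * ‖x‖) :=
        mul_le_mul h1 h2 (norm_nonneg _) (by positivity)
    _ = ‖B ^ k‖ * (1 + t) ^ d * ‖x‖ := by ring
  have hnorme : ‖Complex.exp ((t : ℂ) * μ)‖ = Real.exp (μ.re * t) := by
    rw [Complex.norm_exp]
    congr 1
    simp [Complex.mul_re, mul_comm]
  calc ‖exp ((t : ℂ) • A) x‖ = Real.exp (μ.re * t) * ‖exp ((t : ℂ) • B) x‖ := by
        rw [hmul, norm_smul, hnorme]
  _ ≤ Real.exp (μ.re * t) * ((∑ k ∈ Finset.range d, ‖B ^ k‖) * (1 + t) ^ d * ‖x‖) :=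
      mul_le_mul_of_nonneg_left hsum (Real.exp_nonneg _)
  _ = (∑ k ∈ Finset.range d, ‖B ^ k‖) * (1 + t) ^ d * Real.exp (μ.re * t) * ‖x‖ := by ring

open NormedSpace in
private lemma exp_proj_bound
    {U : Type*} [NormedAddCommGroup U] [NormedSpace ℂ U] [FiniteDimensional ℂ U] [Nontrivial U]
    (A : U →L[ℂ] U) (ρ' : ℝ) :
    ∃ K > 0, ∀ t : ℝ, 0 ≤ t → ∀ w ∈ ⨆ μ ∈ {μ : ℂ | μ ∈ spectrum ℂ A ∧ μ.re ≤ ρ'},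
        LinearMap.ker (((A - μ • (1 : U →L[ℂ] U)) ^ (Module.finrank ℂ U) : U →L[ℂ] U) : U →ₗ[ℂ] U),
      ‖exp ((t : ℂ) • A) w‖ ≤
        K * (1 + t) ^ (Module.finrank ℂ U) * Real.exp (ρ' * t) * ‖w‖ := by
  classical
  haveI : CompleteSpace U := FiniteDimensional.complete ℂ U
  set d := Module.finrank ℂ U with hd
  have hd1 : 1 ≤ d := Module.finrank_pos
  set gs : ℂ → Submodule ℂ U :=
    fun μ => LinearMap.ker (((A - μ • (1 : U →L[ℂ] U)) ^ d : U →L[ℂ] U) : U →ₗ[ℂ] U) with hgsdef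
  have hcoe : ∀ (μ : ℂ) (k : ℕ),
      (((A - μ • (1 : U →L[ℂ] U)) ^ k : U →L[ℂ] U) : U →ₗ[ℂ] U)
        = (((A : U →ₗ[ℂ] U) - μ • (1 : Module.End ℂ U)) ^ k) := by
    intro μ k
    induction k with
    | zero => rfl
    | succ n ih => rw [pow_succ, pow_succ, ← ih]; rfl
  have hgs : gs = fun μ => Module.End.maxGenEigenspace (A : U →ₗ[ℂ] U) μ := by
    funext μ
    rw [Module.End.maxGenEigenspace_eq_genEigenspace_finrank, Module.End.genEigenspace_nat]
    ext x
    simp only [hgsdef, LinearMap.mem_ker, ← hd]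
    rw [hcoe]
  have hindep : iSupIndep gs := by
    rw [hgs]; exact Module.End.independent_maxGenEigenspace _
  have htop : ⨆ μ, gs μ = ⊤ := by
    rw [hgs]; exact Module.End.iSup_maxGenEigenspace_eq_top _
  have hcompl : ∀ μ : ℂ, IsCompl (gs μ) (⨆ ν ≠ μ, gs ν) := by
    intro μ
    refine ⟨hindep μ, codisjoint_iff.mpr ?_⟩
    rw [← top_le_iff, ← htop]
    refine iSup_le fun ν => ?_
    by_cases hνμ : ν = μ
    · subst hνμ; exact le_sup_left
    · exact le_trans (le_biSup gs hνμ) le_sup_right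
  set P : ℂ → U →L[ℂ] U := fun μ => LinearMap.toContinuousLinearMap
    ((gs μ).subtype ∘ₗ (gs μ).linearProjOfIsCompl _ (hcompl μ)) with hPdef
  have hPapp : ∀ (μ : ℂ) (v : U),
      P μ v = ((gs μ).linearProjOfIsCompl _ (hcompl μ) v : U) := fun μ v => rfl
  have hPmem : ∀ (μ : ℂ) (v : U), P μ v ∈ gs μ := by
    intro μ v; rw [hPapp]; exact Submodule.coe_mem _
  have hPid : ∀ (μ : ℂ) (x : U), x ∈ gs μ → P μ x = x := by
    intro μ x hx
    rw [hPapp]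
    have := Submodule.linearProjOfIsCompl_apply_left (hcompl μ) ⟨x, hx⟩
    rw [show (((gs μ).linearProjOfIsCompl _ (hcompl μ)) x)
      = (((gs μ).linearProjOfIsCompl _ (hcompl μ)) (⟨x, hx⟩ : gs μ)) from rfl]; exact congrArg Subtype.val this
  have hPzero : ∀ (μ ν : ℂ), ν ≠ μ → ∀ x ∈ gs ν, P μ x = 0 := by
    intro μ ν hνμ x hx
    rw [hPapp]
    have hxmem : x ∈ ⨆ ν' ≠ μ, gs ν' := le_biSup gs hνμ hx
    rw [show ((gs μ).linearProjOfIsCompl _ (hcompl μ)) x = 0 from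
      Submodule.linearProjOfIsCompl_apply_right' (hcompl μ) hxmem]
    rfl
  have hnebot : ∀ μ : ℂ, μ ∈ spectrum ℂ A → gs μ ≠ ⊥ := by
    intro μ hμ hbot
    rw [spectrum.mem_iff] at hμ
    apply hμ
    have hker : LinearMap.ker ((A - μ • (1 : U →L[ℂ] U)) : U →ₗ[ℂ] U) = ⊥ := by
      rw [Submodule.eq_bot_iff] at hbot ⊢
      intro x hx
      refine hbot x ?_
      have hxk : (A - μ • (1 : U →L[ℂ] U)) x = 0 := hx
      show ((A - μ • (1 : U →L[ℂ] U)) ^ d) x = 0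
      have : (A - μ • (1 : U →L[ℂ] U)) ^ d
          = (A - μ • (1 : U →L[ℂ] U)) ^ (d - 1) * (A - μ • (1 : U →L[ℂ] U)) := by
        rw [← pow_succ]; congr 1; omega
      rw [this, ContinuousLinearMap.mul_apply, hxk, map_zero]
    have hinj : Function.Injective ⇑(A - μ • (1 : U →L[ℂ] U)) := by
      intro a b hab
      have h0 : (A - μ • (1 : U →L[ℂ] U)) (a - b) = 0 := by rw [map_sub, hab, sub_self]
      have := (Submodule.eq_bot_iff _).mp hker (a - b) h0
      exact sub_eq_zero.mp this
    have hsurj : Function.Surjective ⇑(A - μ • (1 : U →L[ℂ] U)) :=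
      LinearMap.injective_iff_surjective
        (f := ((A - μ • (1 : U →L[ℂ] U)) : U →ₗ[ℂ] U)) |>.mp hinj
    have hunit : IsUnit (A - μ • (1 : U →L[ℂ] U)) :=
      ContinuousLinearMap.isUnit_iff_bijective.mpr ⟨hinj, hsurj⟩
    have : algebraMap ℂ (U →L[ℂ] U) μ - A = -(A - μ • (1 : U →L[ℂ] U)) := by
      rw [Algebra.algebraMap_eq_smul_one]; abel
    rw [this]
    exact hunit.neg
  -- finiteness of the relevant eigenvalue set
  set S : Set ℂ := {μ : ℂ | μ ∈ spectrum ℂ A ∧ μ.re ≤ ρ'} with hSdef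
  have hSfin : S.Finite := by
    have h1 : S ⊆ {μ : ℂ | Module.End.maxGenEigenspace (A : U →ₗ[ℂ] U) μ ≠ ⊥} := by
      intro μ hμ
      have := hnebot μ hμ.1
      rwa [hgs] at this
    refine Set.Finite.subset ?_ h1
    have h2 := Module.End.independent_maxGenEigenspace (A : U →ₗ[ℂ] U)
    exact WellFoundedGT.finite_ne_bot_of_iSupIndep h2
  set TF : Finset ℂ := hSfin.toFinset with hTFdef
  -- decomposition of elements of V₁
  have hdecomp : ∀ w ∈ ⨆ μ ∈ S, gs μ, ∑ μ ∈ TF, P μ w = w := by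
    intro w hw
    rw [iSup_subtype'] at hw
    refine Submodule.iSup_induction (p := fun μ : S => gs μ.val) hw
      (motive := fun w => ∑ μ ∈ TF, P μ w = w) ?_ ?_ ?_
    · rintro ⟨ν, hν⟩ x hx
      rw [Finset.sum_eq_single_of_mem ν (hSfin.mem_toFinset.mpr hν)
        (fun b _ hb => hPzero b ν (fun h => hb h.symm) x hx)]
      exact hPid ν x hx
    · simp
    · intro x y hx hy
      simp only [map_add, Finset.sum_add_distrib, hx, hy]
  refine ⟨(∑ μ ∈ TF, (∑ k ∈ Finset.range d, ‖(A - μ • (1 : U →L[ℂ] U)) ^ k‖) * ‖P μ‖) + 1,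
    by positivity, ?_⟩
  intro t ht w hw
  set K0 : ℝ := ∑ μ ∈ TF, (∑ k ∈ Finset.range d, ‖(A - μ • (1 : U →L[ℂ] U)) ^ k‖) * ‖P μ‖
    with hK0
  have hK0nonneg : 0 ≤ K0 := Finset.sum_nonneg fun μ _ => by positivity
  calc ‖exp ((t : ℂ) • A) w‖
      = ‖exp ((t : ℂ) • A) (∑ μ ∈ TF, P μ w)‖ := by rw [hdecomp w hw]
    _ = ‖∑ μ ∈ TF, exp ((t : ℂ) • A) (P μ w)‖ := by rw [map_sum]
    _ ≤ ∑ μ ∈ TF, ‖exp ((t : ℂ) • A) (P μ w)‖ := norm_sum_le _ _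
    _ ≤ ∑ μ ∈ TF, ((∑ k ∈ Finset.range d, ‖(A - μ • (1 : U →L[ℂ] U)) ^ k‖) * ‖P μ‖)
          * ((1 + t) ^ d * Real.exp (ρ' * t) * ‖w‖) := by
        refine Finset.sum_le_sum fun μ hμ => ?_
        have hμS : μ ∈ S := hSfin.mem_toFinset.mp hμ
        have hre : μ.re * t ≤ ρ' * t := mul_le_mul_of_nonneg_right hμS.2 ht
        calc ‖exp ((t : ℂ) • A) (P μ w)‖
            ≤ (∑ k ∈ Finset.range d, ‖(A - μ • (1 : U →L[ℂ] U)) ^ k‖) * (1 + t) ^ d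
              * Real.exp (μ.re * t) * ‖P μ w‖ := exp_ker_bound A μ d (hPmem μ w) ht
          _ ≤ (∑ k ∈ Finset.range d, ‖(A - μ • (1 : U →L[ℂ] U)) ^ k‖) * (1 + t) ^ d
              * Real.exp (ρ' * t) * (‖P μ‖ * ‖w‖) := by
              refine mul_le_mul (mul_le_mul_of_nonneg_left (Real.exp_le_exp.mpr hre)
                (by positivity)) ((P μ).le_opNorm w) (norm_nonneg _) (by positivity)
          _ = (∑ k ∈ Finset.range d, ‖(A - μ • (1 : U →L[ℂ] U)) ^ k‖) * ‖P μ‖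
              * ((1 + t) ^ d * Real.exp (ρ' * t) * ‖w‖) := by ring
    _ = K0 * ((1 + t) ^ d * Real.exp (ρ' * t) * ‖w‖) := by rw [← Finset.sum_mul]
    _ ≤ (K0 + 1) * ((1 + t) ^ d * Real.exp (ρ' * t) * ‖w‖) := by
        refine mul_le_mul_of_nonneg_right (by linarith) (by positivity)
    _ = (K0 + 1) * (1 + t) ^ d * Real.exp (ρ' * t) * ‖w‖ := by ring


set_option maxHeartbeats 2000000 in
/-- Bound on the part of a solution below the critical line.  Let `ρ' < ρ`, `β < 0`, and let
`E` be the spectral projection of `A` associated to the eigenvalues `μ` with `Re μ ≤ ρ'`.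
If `Φ' = AΦ + ψ` on `[0,∞)` with `‖ψ(t)‖ ≤ C (1+t)^N e^{(ρ+β)t}`, then
`‖E Φ(t)‖ ≤ C' (1+t)^{N + dim U + 1} e^{max(ρ', ρ+β) t}` for all `t ≥ 0`. -/
theorem projected_solution_below_bound
    (U : Type*) [NormedAddCommGroup U] [NormedSpace ℂ U] [FiniteDimensional ℂ U]
    (A : U →L[ℂ] U) (ρ ρ' β : ℝ) (hρ' : ρ' < ρ) (hβ : β < 0) (N : ℕ) (C : ℝ) (hC : 0 ≤ C)
    (E : U →L[ℂ] U)
    (hE1 : ∀ v ∈ ⨆ μ ∈ {μ : ℂ | μ ∈ spectrum ℂ A ∧ μ.re ≤ ρ'},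
        LinearMap.ker (((A - μ • (1 : U →L[ℂ] U)) ^ (Module.finrank ℂ U) : U →L[ℂ] U) : U →ₗ[ℂ] U), E v = v)
    (hE0 : ∀ v ∈ ⨆ μ ∈ {μ : ℂ | μ ∈ spectrum ℂ A ∧ ¬ μ.re ≤ ρ'},
        LinearMap.ker (((A - μ • (1 : U →L[ℂ] U)) ^ (Module.finrank ℂ U) : U →L[ℂ] U) : U →ₗ[ℂ] U), E v = 0)
    (Φ ψ : ℝ → U)
    (hΦ : ∀ t ≥ (0:ℝ), HasDerivAt Φ (A (Φ t) + ψ t) t)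
    (hψc : ContinuousOn ψ (Set.Ici 0))
    (hψbound : ∀ t ≥ (0:ℝ), ‖ψ t‖ ≤ C * (1 + t) ^ N * Real.exp ((ρ + β) * t)) :
    ∃ C' > (0:ℝ), ∀ t ≥ (0:ℝ),
      ‖E (Φ t)‖ ≤ C' * (1 + t) ^ (N + Module.finrank ℂ U + 1)
        * Real.exp (max ρ' (ρ + β) * t) := by
  classical
  rcases subsingleton_or_nontrivial U with hU | hU
  · refine ⟨1, one_pos, fun t ht => ?_⟩
    have h0 : E (Φ t) = 0 := Subsingleton.elim _ _
    rw [h0, norm_zero]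
    positivity
  haveI : CompleteSpace U := FiniteDimensional.complete ℂ U
  letI : NormedAlgebra ℚ (U →L[ℂ] U) := .restrictScalars ℚ ℂ (U →L[ℂ] U)
  set d := Module.finrank ℂ U with hd
  set m := max ρ' (ρ + β) with hm
  have hρ'm : ρ' ≤ m := le_max_left _ _
  have hρβm : ρ + β ≤ m := le_max_right _ _
  set gs : ℂ → Submodule ℂ U :=
    fun μ => LinearMap.ker (((A - μ • (1 : U →L[ℂ] U)) ^ d : U →L[ℂ] U) : U →ₗ[ℂ] U) with hgsdef
  set V₁ : Submodule ℂ U := ⨆ μ ∈ {μ : ℂ | μ ∈ spectrum ℂ A ∧ μ.re ≤ ρ'}, gs μ with hV₁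
  set V₂ : Submodule ℂ U := ⨆ μ ∈ {μ : ℂ | μ ∈ spectrum ℂ A ∧ ¬ μ.re ≤ ρ'}, gs μ with hV₂
  -- the ⨆ of all generalized eigenspaces is everything
  have hcoe : ∀ (μ : ℂ) (k : ℕ),
      (((A - μ • (1 : U →L[ℂ] U)) ^ k : U →L[ℂ] U) : U →ₗ[ℂ] U)
        = (((A : U →ₗ[ℂ] U) - μ • (1 : Module.End ℂ U)) ^ k) := by
    intro μ k
    induction k with
    | zero => rfl
    | succ n ih => rw [pow_succ, pow_succ, ← ih]; rfl
  have hgs : gs = fun μ => Module.End.maxGenEigenspace (A : U →ₗ[ℂ] U) μ := by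
    funext μ
    rw [Module.End.maxGenEigenspace_eq_genEigenspace_finrank, Module.End.genEigenspace_nat]
    ext x
    simp only [hgsdef, LinearMap.mem_ker, ← hd]
    rw [hcoe]
  have hgstop : ⨆ μ, gs μ = ⊤ := by
    rw [hgs]; exact Module.End.iSup_maxGenEigenspace_eq_top _
  have hbot : ∀ μ : ℂ, μ ∉ spectrum ℂ A → gs μ = ⊥ := by
    intro μ hμ
    have hu : IsUnit (algebraMap ℂ (U →L[ℂ] U) μ - A) := spectrum.notMem_iff.mp hμ
    have hu' : IsUnit (A - μ • (1 : U →L[ℂ] U)) := by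
      have h1 : A - μ • (1 : U →L[ℂ] U) = -(algebraMap ℂ (U →L[ℂ] U) μ - A) := by
        rw [Algebra.algebraMap_eq_smul_one]; abel
      rw [h1]; exact hu.neg
    have hud : IsUnit ((A - μ • (1 : U →L[ℂ] U)) ^ d) := hu'.pow d
    have hinj : Function.Injective ⇑((A - μ • (1 : U →L[ℂ] U)) ^ d) := by
      obtain ⟨u, hu_spec⟩ := hud
      have h3 : ((u⁻¹ : (U →L[ℂ] U)ˣ) : U →L[ℂ] U)
          * ((A - μ • (1 : U →L[ℂ] U)) ^ d) = 1 := by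
        rw [← hu_spec]; exact u.inv_mul
      intro a b hab
      calc a = (((u⁻¹ : (U →L[ℂ] U)ˣ) : U →L[ℂ] U)
            * ((A - μ • (1 : U →L[ℂ] U)) ^ d)) a := by
            rw [h3, ContinuousLinearMap.one_apply]
        _ = ((u⁻¹ : (U →L[ℂ] U)ˣ) : U →L[ℂ] U)
            (((A - μ • (1 : U →L[ℂ] U)) ^ d) a) := rfl
        _ = ((u⁻¹ : (U →L[ℂ] U)ˣ) : U →L[ℂ] U)
            (((A - μ • (1 : U →L[ℂ] U)) ^ d) b) := by rw [hab]
        _ = (((u⁻¹ : (U →L[ℂ] U)ˣ) : U →L[ℂ] U)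
            * ((A - μ • (1 : U →L[ℂ] U)) ^ d)) b := rfl
        _ = b := by rw [h3, ContinuousLinearMap.one_apply]
    rw [hgsdef, Submodule.eq_bot_iff]
    intro x hx
    exact hinj (by rw [map_zero]; exact hx)
  have hV12 : V₁ ⊔ V₂ = ⊤ := by
    refine le_antisymm le_top ?_
    rw [← hgstop]
    refine iSup_le fun μ => ?_
    by_cases hsp : μ ∈ spectrum ℂ A
    · by_cases hre : μ.re ≤ ρ'
      · exact le_trans (le_biSup gs (show μ ∈ {μ : ℂ | μ ∈ spectrum ℂ A ∧ μ.re ≤ ρ'}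
          from ⟨hsp, hre⟩)) le_sup_left
      · exact le_trans (le_biSup gs (show μ ∈ {μ : ℂ | μ ∈ spectrum ℂ A ∧ ¬ μ.re ≤ ρ'}
          from ⟨hsp, hre⟩)) le_sup_right
    · rw [hbot μ hsp]; exact bot_le
  -- E is the projection onto V₁
  have hEdec : ∀ v : U, ∃ a ∈ V₁, ∃ b ∈ V₂, a + b = v := by
    intro v
    have : v ∈ V₁ ⊔ V₂ := by rw [hV12]; trivial
    exact Submodule.mem_sup.mp this
  have hEV₁ : ∀ v : U, E v ∈ V₁ := by
    intro v
    obtain ⟨a, ha, b, hb, rfl⟩ := hEdec v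
    rw [map_add, hE1 a ha, hE0 b hb, add_zero]
    exact ha
  -- A-invariance and commutation with E
  have hAgs : ∀ (μ : ℂ), ∀ x ∈ gs μ, A x ∈ gs μ := by
    intro μ x hx
    have hcm : Commute ((A - μ • (1 : U →L[ℂ] U)) ^ d) A :=
      (((Commute.refl A).sub_left ((Commute.one_left A).smul_left μ))).pow_left d
    show ((A - μ • (1 : U →L[ℂ] U)) ^ d) (A x) = 0
    have hx0 : ((A - μ • (1 : U →L[ℂ] U)) ^ d) x = 0 := hx
    calc ((A - μ • (1 : U →L[ℂ] U)) ^ d) (A x)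
        = (((A - μ • (1 : U →L[ℂ] U)) ^ d) * A) x := rfl
      _ = (A * ((A - μ • (1 : U →L[ℂ] U)) ^ d)) x := by rw [hcm.eq]
      _ = A (((A - μ • (1 : U →L[ℂ] U)) ^ d) x) := rfl
      _ = 0 := by rw [hx0, map_zero]
  have hAinv : ∀ (Sc : Set ℂ), ∀ x ∈ ⨆ μ ∈ Sc, gs μ, A x ∈ ⨆ μ ∈ Sc, gs μ := by
    intro Sc x hx
    rw [iSup_subtype'] at hx ⊢
    refine Submodule.iSup_induction (p := fun μ : Sc => gs μ.val) hx
      (motive := fun x => A x ∈ ⨆ μ : Sc, gs μ.val) ?_ ?_ ?_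
    · intro ν y hy
      exact Submodule.mem_iSup_of_mem ν (hAgs ν.val y hy)
    · show A 0 ∈ ⨆ μ : Sc, gs μ.val
      rw [map_zero]; exact Submodule.zero_mem _
    · intro y z hy hz
      show A (y + z) ∈ ⨆ μ : Sc, gs μ.val
      rw [map_add]; exact Submodule.add_mem _ hy hz
  have hEA : ∀ v : U, E (A v) = A (E v) := by
    intro v
    obtain ⟨a, ha, b, hb, rfl⟩ := hEdec v
    rw [show A (a + b) = A a + A b from map_add _ a b, map_add,
      hE1 (A a) (hAinv _ a ha), hE0 (A b) (hAinv _ b hb), add_zero,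
      show E (a + b) = a from by rw [map_add, hE1 a ha, hE0 b hb, add_zero]]
  -- the exponential bound on V₁
  obtain ⟨K, hKpos, hK⟩ := exp_proj_bound A ρ'
  -- the flow
  set T : ℝ → U →L[ℂ] U := fun s => NormedSpace.exp ((s : ℂ) • A) with hT
  have hTadd : ∀ a b : ℝ, T (a + b) = T a * T b := by
    intro a b
    rw [hT]
    simp only
    rw [show (((a + b : ℝ)) : ℂ) • A = (a : ℂ) • A + (b : ℂ) • A by push_cast; rw [add_smul]]
    exact NormedSpace.exp_add_of_commute (((Commute.refl A).smul_left _).smul_right _)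
  have hT0 : T 0 = 1 := by
    rw [hT]; simp only [Complex.ofReal_zero, zero_smul]; exact NormedSpace.exp_zero
  have hTapp : ∀ (a b : ℝ) (v : U), T a (T b v) = T (a + b) v := by
    intro a b v; rw [hTadd a b, ContinuousLinearMap.mul_apply]
  have hTcont : Continuous T := by
    exact NormedSpace.exp_continuous.comp (Complex.continuous_ofReal.smul continuous_const)
  have hTderiv : ∀ s : ℝ, HasDerivAt T (T s * A) s := by
    intro s
    have h1 := ((hasDerivAt_exp_smul_const (𝕂 := ℂ) A (s : ℂ)).hasFDerivAt).restrictScalars ℝ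
    have h2 := h1.comp_hasDerivAt s Complex.ofRealCLM.hasDerivAt
    simpa [Function.comp_def, hT] using h2
  set L : (U →L[ℂ] U) →L[ℝ] (U →L[ℝ] U) :=
    ContinuousLinearMap.restrictScalarsL ℂ U U ℝ ℝ with hL
  have hyderiv : ∀ s : ℝ, 0 ≤ s →
      HasDerivAt (fun u : ℝ => T (-u) (E (Φ u))) (T (-s) (E (ψ s))) s := by
    intro s hs
    have h1 : HasDerivAt (fun u : ℝ => T (-u)) (-(T (-s) * A)) s := by
      have h1a := (hTderiv (-s)).scomp s (hasDerivAt_neg s)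
      simpa [Function.comp_def] using h1a
    have h2 : HasDerivAt (fun u : ℝ => L (T (-u))) (L (-(T (-s) * A))) s :=
      (L.hasFDerivAt).comp_hasDerivAt s h1
    have h3 : HasDerivAt (fun u : ℝ => E (Φ u)) (E (A (Φ s) + ψ s)) s := by
      have := ((E.hasFDerivAt (x := Φ s)).restrictScalars ℝ).comp_hasDerivAt s (hΦ s hs)
      simpa [Function.comp_def] using this
    have h4 := h2.clm_apply h3
    have h5 : (L (-(T (-s) * A))) (E (Φ s)) + (L (T (-s))) (E (A (Φ s) + ψ s))
        = T (-s) (E (ψ s)) := by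
      simp only [hL, ContinuousLinearMap.coe_restrict_scalarsL',
        ContinuousLinearMap.coe_restrictScalars', ContinuousLinearMap.neg_apply,
        ContinuousLinearMap.mul_apply, map_add, hEA (Φ s)]
      abel
    rw [← h5]
    exact h4
  refine ⟨K * ‖E (Φ 0)‖ + K * ‖E‖ * C + 1, ?_, ?_⟩
  · have h1 : 0 ≤ K * ‖E (Φ 0)‖ := mul_nonneg hKpos.le (norm_nonneg _)
    have h2 : 0 ≤ K * ‖E‖ * C := mul_nonneg (mul_nonneg hKpos.le (norm_nonneg _)) hC
    linarith
  intro t ht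
  have hTneg : Continuous fun s : ℝ => T (-s) := hTcont.comp continuous_neg
  have hcont : ContinuousOn (fun s => T (-s) (E (ψ s))) (Set.uIcc 0 t) := by
    rw [Set.uIcc_of_le ht]
    exact (hTneg.continuousOn).clm_apply
      (E.continuous.comp_continuousOn (hψc.mono Set.Icc_subset_Ici_self))
  have hint : IntervalIntegrable (fun s => T (-s) (E (ψ s))) volume 0 t :=
    hcont.intervalIntegrable
  have hFTC := intervalIntegral.integral_eq_sub_of_hasDerivAt
    (f := fun u : ℝ => T (-u) (E (Φ u))) (f' := fun s => T (-s) (E (ψ s)))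
    (fun s hs => hyderiv s (by rw [Set.uIcc_of_le ht] at hs; exact hs.1)) hint
  have hTinv : ∀ v : U, T t (T (-t) v) = v := by
    intro v; rw [hTapp, add_neg_cancel, hT0, ContinuousLinearMap.one_apply]
  have h6 : T (-t) (E (Φ t)) = E (Φ 0) + ∫ s in (0:ℝ)..t, T (-s) (E (ψ s)) := by
    have h6a : T (-(0:ℝ)) (E (Φ 0)) = E (Φ 0) := by
      rw [neg_zero, hT0, ContinuousLinearMap.one_apply]
    calc T (-t) (E (Φ t))
        = T (-(0:ℝ)) (E (Φ 0)) + (T (-t) (E (Φ t)) - T (-(0:ℝ)) (E (Φ 0))) := by abel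
      _ = E (Φ 0) + ∫ s in (0:ℝ)..t, T (-s) (E (ψ s)) := by
          have hFTC' : (∫ s in (0:ℝ)..t, T (-s) (E (ψ s)))
              = T (-t) (E (Φ t)) - T (-(0:ℝ)) (E (Φ 0)) := hFTC
          rw [← hFTC', h6a]
  have h7 := congrArg (T t) h6
  rw [hTinv] at h7
  have h8 : T t (∫ s in (0:ℝ)..t, T (-s) (E (ψ s)))
      = ∫ s in (0:ℝ)..t, T (t - s) (E (ψ s)) := by
    rw [← (T t).intervalIntegral_comp_comm hint]
    refine intervalIntegral.integral_congr fun s hs => ?_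
    show T t (T (-s) (E (ψ s))) = T (t - s) (E (ψ s))
    rw [hTapp, sub_eq_add_neg]
  have hrepr : E (Φ t) = T t (E (Φ 0)) + ∫ s in (0:ℝ)..t, T (t - s) (E (ψ s)) := by
    rw [h7, map_add, h8]
  have hb1 : ‖T t (E (Φ 0))‖
      ≤ K * ‖E (Φ 0)‖ * ((1 + t) ^ (N + d + 1) * Real.exp (m * t)) := by
    refine (hK t ht _ (hEV₁ (Φ 0))).trans ?_
    calc K * (1 + t) ^ d * Real.exp (ρ' * t) * ‖E (Φ 0)‖
        ≤ K * (1 + t) ^ (N + d + 1) * Real.exp (m * t) * ‖E (Φ 0)‖ := by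
          refine mul_le_mul_of_nonneg_right (mul_le_mul
            (mul_le_mul_of_nonneg_left (pow_le_pow_right₀ (by linarith) (by omega)) hKpos.le)
            (Real.exp_le_exp.mpr (mul_le_mul_of_nonneg_right hρ'm ht))
            (Real.exp_nonneg _)
            (mul_nonneg hKpos.le (by positivity))) (norm_nonneg _)
      _ = K * ‖E (Φ 0)‖ * ((1 + t) ^ (N + d + 1) * Real.exp (m * t)) := by ring
  have hb2 : ‖∫ s in (0:ℝ)..t, T (t - s) (E (ψ s))‖
      ≤ K * ‖E‖ * C * ((1 + t) ^ (d + N) * Real.exp (m * t)) * t := by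
    have hb2a : ∀ s ∈ Set.uIoc (0:ℝ) t, ‖T (t - s) (E (ψ s))‖
        ≤ K * ‖E‖ * C * ((1 + t) ^ (d + N) * Real.exp (m * t)) := by
      intro s hs
      rw [Set.uIoc_of_le ht] at hs
      have hs0 : 0 ≤ s := hs.1.le
      have hst : s ≤ t := hs.2
      have hts : 0 ≤ t - s := by linarith
      calc ‖T (t - s) (E (ψ s))‖
          ≤ K * (1 + (t - s)) ^ d * Real.exp (ρ' * (t - s)) * ‖E (ψ s)‖ :=
            hK (t - s) hts _ (hEV₁ (ψ s))
        _ ≤ K * (1 + t) ^ d * Real.exp (m * (t - s))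
            * (‖E‖ * (C * (1 + s) ^ N * Real.exp ((ρ + β) * s))) := by
            refine mul_le_mul (mul_le_mul
              (mul_le_mul_of_nonneg_left (pow_le_pow_left₀ (by linarith) (by linarith) d)
                hKpos.le)
              (Real.exp_le_exp.mpr (mul_le_mul_of_nonneg_right hρ'm hts))
              (Real.exp_nonneg _) (mul_nonneg hKpos.le (by positivity)))
              (le_trans (E.le_opNorm _)
                (mul_le_mul_of_nonneg_left (hψbound s hs0) (norm_nonneg E)))
              (norm_nonneg _)
              (mul_nonneg (mul_nonneg hKpos.le (by positivity)) (Real.exp_nonneg _))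
        _ ≤ K * (1 + t) ^ d * Real.exp (m * (t - s))
            * (‖E‖ * (C * (1 + t) ^ N * Real.exp (m * s))) := by
            refine mul_le_mul_of_nonneg_left (mul_le_mul_of_nonneg_left (mul_le_mul
              (mul_le_mul_of_nonneg_left (pow_le_pow_left₀ (by linarith) (by linarith) N) hC)
              (Real.exp_le_exp.mpr (mul_le_mul_of_nonneg_right hρβm hs0))
              (Real.exp_nonneg _) (by positivity)) (norm_nonneg _))
              (mul_nonneg (mul_nonneg hKpos.le (by positivity)) (Real.exp_nonneg _))
        _ = K * ‖E‖ * C * ((1 + t) ^ (d + N) * (Real.exp (m * (t - s)) * Real.exp (m * s))) := by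
            rw [pow_add]; ring
        _ = K * ‖E‖ * C * ((1 + t) ^ (d + N) * Real.exp (m * t)) := by
            rw [← Real.exp_add, show m * (t - s) + m * s = m * t by ring]
    have := intervalIntegral.norm_integral_le_of_norm_le_const hb2a
    rwa [sub_zero, abs_of_nonneg ht] at this
  have h9 : (1 + t) ^ (d + N) * Real.exp (m * t) * t
      ≤ (1 + t) ^ (N + d + 1) * Real.exp (m * t) := by
    have h9a : (1 + t) ^ (d + N) * t ≤ (1 + t) ^ (N + d + 1) := by
      calc (1 + t) ^ (d + N) * t ≤ (1 + t) ^ (d + N) * (1 + t) :=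
            mul_le_mul_of_nonneg_left (by linarith) (by positivity)
        _ = (1 + t) ^ (d + N + 1) := by rw [pow_succ]
        _ = (1 + t) ^ (N + d + 1) := by rw [Nat.add_comm d N]
    calc (1 + t) ^ (d + N) * Real.exp (m * t) * t
        = ((1 + t) ^ (d + N) * t) * Real.exp (m * t) := by ring
      _ ≤ (1 + t) ^ (N + d + 1) * Real.exp (m * t) :=
          mul_le_mul_of_nonneg_right h9a (Real.exp_nonneg _)
  have hKEC : 0 ≤ K * ‖E‖ * C := mul_nonneg (mul_nonneg hKpos.le (norm_nonneg _)) hC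
  calc ‖E (Φ t)‖ = ‖T t (E (Φ 0)) + ∫ s in (0:ℝ)..t, T (t - s) (E (ψ s))‖ := by rw [hrepr]
    _ ≤ ‖T t (E (Φ 0))‖ + ‖∫ s in (0:ℝ)..t, T (t - s) (E (ψ s))‖ := norm_add_le _ _
    _ ≤ K * ‖E (Φ 0)‖ * ((1 + t) ^ (N + d + 1) * Real.exp (m * t))
        + K * ‖E‖ * C * ((1 + t) ^ (d + N) * Real.exp (m * t)) * t := add_le_add hb1 hb2
    _ ≤ K * ‖E (Φ 0)‖ * ((1 + t) ^ (N + d + 1) * Real.exp (m * t))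
        + K * ‖E‖ * C * ((1 + t) ^ (N + d + 1) * Real.exp (m * t)) := by
        refine add_le_add le_rfl ?_
        calc K * ‖E‖ * C * ((1 + t) ^ (d + N) * Real.exp (m * t)) * t
            = K * ‖E‖ * C * ((1 + t) ^ (d + N) * Real.exp (m * t) * t) := by ring
          _ ≤ K * ‖E‖ * C * ((1 + t) ^ (N + d + 1) * Real.exp (m * t)) :=
              mul_le_mul_of_nonneg_left h9 hKEC
    _ = (K * ‖E (Φ 0)‖ + K * ‖E‖ * C) * ((1 + t) ^ (N + d + 1) * Real.exp (m * t)) := by ring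
    _ ≤ (K * ‖E (Φ 0)‖ + K * ‖E‖ * C + 1) * ((1 + t) ^ (N + d + 1) * Real.exp (m * t)) :=
        mul_le_mul_of_nonneg_right (by linarith) (by positivity)
    _ = (K * ‖E (Φ 0)‖ + K * ‖E‖ * C + 1) * (1 + t) ^ (N + d + 1) * Real.exp (m * t) := by ring
end

section
/- Let U be a finite-dimensional complex normed vector space, A ∈ End(U), ρ ∈ ℝ, β < 0, N ∈ ℕ and C ≥ 0. Let E be the spectral projection of A associated to the set of eigenvalues μ of A with Re μ > ρ. Let Φ : [0,∞) → U be differentiable and ψ : [0,∞) → U continuous with Φ'(t) = A Φ(t) + ψ(t), ‖Φ(t)‖ ≤ C (1+t)^N e^{ρ t} and ‖ψ(t)‖ ≤ C (1+t)^N e^{(ρ+β)t} for all t ≥ 0. Then there exists C' > 0 such that ‖E Φ(t)‖ ≤ C' (1+t)^{N + dim U + 1} e^{(ρ+β)t} for all t ≥ 0. -/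
open Filter MeasureTheory

lemma aux_poly_exp (M : ℕ) {ε : ℝ} (hε : 0 < ε) :
    ∃ c > (0:ℝ), ∀ u ≥ (0:ℝ), (1 + u) ^ M ≤ c * Real.exp (ε * u) := by
  refine ⟨M.factorial * ε⁻¹ ^ M * Real.exp ε, by positivity, fun u hu => ?_⟩
  have h1 : (ε * (1 + u)) ^ M / M.factorial ≤ Real.exp (ε * (1 + u)) :=
    Real.pow_div_factorial_le_exp (x := ε * (1 + u)) (by positivity) M
  have h2 : Real.exp (ε * (1 + u)) = Real.exp ε * Real.exp (ε * u) := by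
    rw [← Real.exp_add]; ring_nf
  have hM : (0:ℝ) < M.factorial := by positivity
  rw [mul_pow, div_le_iff₀ hM] at h1
  have h3 : (1 + u) ^ M = ε⁻¹ ^ M * (ε ^ M * (1 + u) ^ M) := by
    rw [← mul_assoc, ← mul_pow, inv_mul_cancel₀ hε.ne', one_pow, one_mul]
  rw [h3]
  calc ε⁻¹ ^ M * (ε ^ M * (1 + u) ^ M)
      ≤ ε⁻¹ ^ M * (Real.exp (ε * (1 + u)) * M.factorial) := by
        apply mul_le_mul_of_nonneg_left h1 (by positivity)
    _ = M.factorial * ε⁻¹ ^ M * Real.exp ε * Real.exp (ε * u) := by rw [h2]; ring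

lemma aux_int_exp {a t T : ℝ} (ha : 0 < a) (htT : t ≤ T) :
    ∫ s in t..T, Real.exp (-(a * (s - t))) ≤ 1 / a := by
  have h : ∀ s ∈ Set.uIcc t T, HasDerivAt (fun s => -(1/a) * Real.exp (-(a * (s - t))))
      (Real.exp (-(a * (s - t)))) s := by
    intro s _
    have h1 : HasDerivAt (fun s : ℝ => -(a * (s - t))) (-a) s := by
      have h0 := (((hasDerivAt_id s).sub_const t).const_mul a).neg
      simp only [mul_one] at h0
      exact h0
    have h2 := (Real.hasDerivAt_exp _).comp s h1
    have := h2.const_mul (-(1/a))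
    refine this.congr_deriv ?_
    field_simp
  have hcont : IntervalIntegrable (fun s => Real.exp (-(a * (s - t)))) volume t T := by
    apply Continuous.intervalIntegrable
    continuity
  rw [intervalIntegral.integral_eq_sub_of_hasDerivAt h hcont]
  have h5 : Real.exp (-(a * (t - t))) = 1 := by simp
  rw [h5, div_eq_mul_inv]
  have h6 := Real.exp_pos (-(a * (T - t)))
  have hainv : 0 < a⁻¹ := inv_pos.mpr ha
  nlinarith [mul_pos hainv h6]

set_option maxHeartbeats 2000000

/-- Bound on the part of a tempered solution above the critical line.  Let `E` be the spectral
projection of `A` associated to the eigenvalues `μ` with `Re μ > ρ`.  If `Φ' = AΦ + ψ` on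
`[0,∞)` with `‖Φ(t)‖ ≤ C (1+t)^N e^{ρt}` and `‖ψ(t)‖ ≤ C (1+t)^N e^{(ρ+β)t}` (`β < 0`), then
`‖E Φ(t)‖ ≤ C' (1+t)^{N + dim U + 1} e^{(ρ+β)t}` for all `t ≥ 0`. -/
theorem projected_solution_above_bound
    (U : Type*) [NormedAddCommGroup U] [NormedSpace ℂ U] [FiniteDimensional ℂ U]
    (A : U →L[ℂ] U) (ρ β : ℝ) (hβ : β < 0) (N : ℕ) (C : ℝ) (hC : 0 ≤ C)
    (E : U →L[ℂ] U)
    (hE1 : ∀ v ∈ ⨆ μ ∈ {μ : ℂ | μ ∈ spectrum ℂ A ∧ ρ < μ.re},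
        LinearMap.ker ((((A - μ • (1 : U →L[ℂ] U)) ^ (Module.finrank ℂ U) : U →L[ℂ] U) : U →ₗ[ℂ] U)), E v = v)
    (hE0 : ∀ v ∈ ⨆ μ ∈ {μ : ℂ | μ ∈ spectrum ℂ A ∧ ¬ ρ < μ.re},
        LinearMap.ker ((((A - μ • (1 : U →L[ℂ] U)) ^ (Module.finrank ℂ U) : U →L[ℂ] U) : U →ₗ[ℂ] U)), E v = 0)
    (Φ ψ : ℝ → U)
    (hΦ : ∀ t ≥ (0:ℝ), HasDerivAt Φ (A (Φ t) + ψ t) t)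
    (hψc : ContinuousOn ψ (Set.Ici 0))
    (hΦbound : ∀ t ≥ (0:ℝ), ‖Φ t‖ ≤ C * (1 + t) ^ N * Real.exp (ρ * t))
    (hψbound : ∀ t ≥ (0:ℝ), ‖ψ t‖ ≤ C * (1 + t) ^ N * Real.exp ((ρ + β) * t)) :
    ∃ C' > (0:ℝ), ∀ t ≥ (0:ℝ),
      ‖E (Φ t)‖ ≤ C' * (1 + t) ^ (N + Module.finrank ℂ U + 1)
        * Real.exp ((ρ + β) * t) := by
  classical
  letI : NormedAlgebra ℚ (U →L[ℂ] U) := NormedAlgebra.restrictScalars ℚ ℂ (U →L[ℂ] U)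
  set n := Module.finrank ℂ U with hn
  set K : ℂ → Submodule ℂ U :=
    fun μ => LinearMap.ker ((((A - μ • (1 : U →L[ℂ] U)) ^ n : U →L[ℂ] U) : U →ₗ[ℂ] U)) with hKdef
  set f : Module.End ℂ U := (A : U →ₗ[ℂ] U) with hfdef
  -- kernels agree with maximal generalized eigenspaces
  have hcoe : ∀ (μ : ℂ) (x : U), ((A - μ • (1 : U →L[ℂ] U)) ^ n) x = ((f - μ • 1) ^ n) x := by
    intro μ x
    have h : (((A - μ • (1 : U →L[ℂ] U)) ^ n : U →L[ℂ] U) : U →ₗ[ℂ] U) = (f - μ • 1) ^ n := by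
      rw [hfdef]
      induction n with
      | zero => rfl
      | succ k ih => rw [pow_succ, pow_succ, ← ih]; rfl
    calc ((A - μ • (1 : U →L[ℂ] U)) ^ n) x
        = (((A - μ • (1 : U →L[ℂ] U)) ^ n : U →L[ℂ] U) : U →ₗ[ℂ] U) x := rfl
      _ = ((f - μ • 1) ^ n) x := by rw [h]
  have hK : ∀ μ, K μ = f.maxGenEigenspace μ := by
    intro μ
    rw [Module.End.maxGenEigenspace_eq_genEigenspace_finrank, Module.End.genEigenspace_nat]
    ext x
    simp only [hKdef, LinearMap.mem_ker, ContinuousLinearMap.coe_coe, hcoe μ x, ← hn]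
  have hKtop : ⨆ μ, K μ = ⊤ := by
    simp_rw [hK]
    exact Module.End.iSup_maxGenEigenspace_eq_top f
  -- A-invariance of each K μ
  have hKinv : ∀ (μ : ℂ), ∀ x ∈ K μ, A x ∈ K μ := by
    intro μ x hx
    have hx0 : ((A - μ • (1 : U →L[ℂ] U)) ^ n) x = 0 := LinearMap.mem_ker.mp hx
    have hcm : Commute A ((A - μ • (1 : U →L[ℂ] U)) ^ n) := by
      refine Commute.pow_right ?_ n
      exact (Commute.refl A).sub_right ((Commute.one_right A).smul_right μ)
    have : ((A - μ • (1 : U →L[ℂ] U)) ^ n) (A x) = 0 := by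
      calc ((A - μ • (1 : U →L[ℂ] U)) ^ n) (A x)
          = (((A - μ • (1 : U →L[ℂ] U)) ^ n) * A) x := rfl
        _ = (A * ((A - μ • (1 : U →L[ℂ] U)) ^ n)) x := by rw [hcm.eq]
        _ = A (((A - μ • (1 : U →L[ℂ] U)) ^ n) x) := rfl
        _ = 0 := by rw [hx0, map_zero]
    exact LinearMap.mem_ker.mpr this
  -- spectra agree; S finite
  have hspec : spectrum ℂ A ⊆ spectrum ℂ f := by
    intro μ hμ
    rw [spectrum.mem_iff] at hμ ⊢
    intro hUf
    apply hμ
    have hbij : Function.Bijective ⇑(algebraMap ℂ (Module.End ℂ U) μ - f) :=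
      (Module.End.isUnit_iff _).mp hUf
    have hfun : ⇑(algebraMap ℂ (U →L[ℂ] U) μ - A) = ⇑(algebraMap ℂ (Module.End ℂ U) μ - f) := by
      ext x
      simp [Algebra.algebraMap_eq_smul_one, hfdef]
    exact ContinuousLinearMap.isUnit_iff_bijective.mpr (hfun ▸ hbij)
  have hKbot : ∀ μ : ℂ, μ ∉ spectrum ℂ A → K μ = ⊥ := by
    intro μ hμ
    have hU : IsUnit (algebraMap ℂ (U →L[ℂ] U) μ - A) := spectrum.notMem_iff.mp hμ
    have hU2 : IsUnit (A - μ • (1 : U →L[ℂ] U)) := by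
      rw [Algebra.algebraMap_eq_smul_one] at hU
      simpa using hU.neg
    have hinj : Function.Injective ⇑((A - μ • (1 : U →L[ℂ] U)) ^ n) :=
      (ContinuousLinearMap.isUnit_iff_bijective.mp (hU2.pow n)).injective
    rw [hKdef]
    exact LinearMap.ker_eq_bot.mpr hinj
  set V₁ : Submodule ℂ U := ⨆ μ ∈ {μ : ℂ | μ ∈ spectrum ℂ A ∧ ρ < μ.re}, K μ with hV₁
  set V₀ : Submodule ℂ U := ⨆ μ ∈ {μ : ℂ | μ ∈ spectrum ℂ A ∧ ¬ ρ < μ.re}, K μ with hV₀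
  have hE1' : ∀ v ∈ V₁, E v = v := hE1
  have hE0' : ∀ v ∈ V₀, E v = 0 := hE0
  have hcodisj : V₁ ⊔ V₀ = ⊤ := by
    refine le_antisymm le_top ?_
    rw [← hKtop]
    refine iSup_le fun μ => ?_
    by_cases hμ : μ ∈ spectrum ℂ A
    · by_cases hρ : ρ < μ.re
      · exact le_sup_of_le_left (le_biSup K (show μ ∈ {μ : ℂ | μ ∈ spectrum ℂ A ∧ ρ < μ.re} from ⟨hμ, hρ⟩))
      · exact le_sup_of_le_right (le_biSup K (show μ ∈ {μ : ℂ | μ ∈ spectrum ℂ A ∧ ¬ ρ < μ.re} from ⟨hμ, hρ⟩))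
    · rw [hKbot μ hμ]
      exact bot_le
  have hmapinv : ∀ W : Set ℂ, Submodule.map (A : U →ₗ[ℂ] U) (⨆ μ ∈ W, K μ) ≤ ⨆ μ ∈ W, K μ := by
    intro W
    rw [Submodule.map_iSup]
    refine iSup_mono fun μ => ?_
    rw [Submodule.map_iSup]
    refine iSup_mono fun hμ => ?_
    rintro _ ⟨x, hx, rfl⟩
    exact hKinv μ x hx
  have hV1inv : ∀ w ∈ V₁, A w ∈ V₁ := fun w hw =>
    hmapinv _ (Submodule.mem_map_of_mem hw)
  have hV0inv : ∀ w ∈ V₀, A w ∈ V₀ := fun w hw =>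
    hmapinv _ (Submodule.mem_map_of_mem hw)
  -- E v ∈ V₁ and commutation
  have hdec : ∀ v : U, ∃ v₁ ∈ V₁, ∃ v₀ ∈ V₀, v = v₁ + v₀ := by
    intro v
    have hv : v ∈ V₁ ⊔ V₀ := hcodisj ▸ Submodule.mem_top
    obtain ⟨v₁, h₁, v₀, h₀, h⟩ := Submodule.mem_sup.mp hv
    exact ⟨v₁, h₁, v₀, h₀, h.symm⟩
  have hEmem : ∀ v : U, E v ∈ V₁ := by
    intro v
    obtain ⟨v₁, h₁, v₀, h₀, rfl⟩ := hdec v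
    rw [map_add, hE1' v₁ h₁, hE0' v₀ h₀, add_zero]
    exact h₁
  have hcomm : ∀ v : U, E (A v) = A (E v) := by
    intro v
    obtain ⟨v₁, h₁, v₀, h₀, rfl⟩ := hdec v
    rw [map_add E v₁ v₀, hE1' v₁ h₁, hE0' v₀ h₀, add_zero, map_add, map_add,
      hE1' _ (hV1inv v₁ h₁), hE0' _ (hV0inv v₀ h₀), add_zero]
  -- finite set of relevant eigenvalues
  have hfin : {μ : ℂ | μ ∈ spectrum ℂ A ∧ ρ < μ.re}.Finite := by
    refine Set.Finite.subset (Set.Finite.subset (Module.End.finite_spectrum f) hspec) ?_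
    exact fun μ h => h.1
  set S' : Finset ℂ := hfin.toFinset with hS'
  obtain ⟨ρ₀, hρρ₀, hρ₀le⟩ : ∃ ρ₀, ρ < ρ₀ ∧ ∀ μ ∈ S', ρ₀ ≤ μ.re := by
    by_cases hS : S'.Nonempty
    · refine ⟨(S'.image Complex.re).min' (hS.image _), ?_, ?_⟩
      · obtain ⟨x, hx, hmin⟩ := Finset.mem_image.mp ((S'.image Complex.re).min'_mem (hS.image _))
        have hx' := (hfin.mem_toFinset.mp hx).2
        rw [← hmin]
        exact hx'
      · intro μ hμ
        exact Finset.min'_le _ _ (Finset.mem_image_of_mem _ hμ)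
    · exact ⟨ρ + 1, by linarith, fun μ hμ => absurd ⟨μ, hμ⟩ hS⟩
  -- projections
  have hcompl : ∀ μ : ℂ, IsCompl (K μ) (⨆ ν, ⨆ _ : ν ≠ μ, K ν) := by
    intro μ
    constructor
    · have h := f.independent_maxGenEigenspace μ
      simp_rw [← hK] at h
      exact h
    · rw [codisjoint_iff]
      refine le_antisymm le_top ?_
      rw [← hKtop]
      refine iSup_le fun ν => ?_
      by_cases hν : ν = μ
      · subst hν; exact le_sup_left
      · exact le_sup_of_le_right (le_iSup_of_le ν (le_iSup (fun _ : ν ≠ μ => K ν) hν))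
  set Q : ℂ → (U →L[ℂ] U) := fun μ =>
    LinearMap.toContinuousLinearMap ((K μ).subtype ∘ₗ (K μ).linearProjOfIsCompl _ (hcompl μ))
    with hQdef
  have hQmem : ∀ μ x, Q μ x ∈ K μ := by
    intro μ x
    show ((K μ).subtype ((K μ).linearProjOfIsCompl _ (hcompl μ) x)) ∈ K μ
    exact Submodule.coe_mem _
  have hQid : ∀ μ, ∀ x ∈ K μ, Q μ x = x := by
    intro μ x hx
    show ((K μ).subtype ((K μ).linearProjOfIsCompl _ (hcompl μ) x)) = x
    have h : (K μ).linearProjOfIsCompl _ (hcompl μ) x = ⟨x, hx⟩ := by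
      have h2 := Submodule.linearProjOfIsCompl_apply_left (hcompl μ) ⟨x, hx⟩
      exact h2
    rw [h]
    rfl
  have hQ0 : ∀ μ ν : ℂ, ν ≠ μ → ∀ x ∈ K ν, Q μ x = 0 := by
    intro μ ν hνμ x hx
    have hmem : x ∈ (⨆ ν', ⨆ _ : ν' ≠ μ, K ν') :=
      (le_iSup_of_le ν (le_iSup (fun _ : ν ≠ μ => K ν) hνμ) : K ν ≤ _) hx
    show ((K μ).subtype ((K μ).linearProjOfIsCompl _ (hcompl μ) x)) = 0
    have h : (K μ).linearProjOfIsCompl _ (hcompl μ) x = 0 := by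
      have h2 := Submodule.projectionOnto_apply_right (hcompl μ) ⟨x, hmem⟩
      exact h2
    rw [h]
    rfl
  have hdecomp : ∀ w ∈ V₁, w = ∑ μ ∈ S', Q μ w := by
    intro w hw
    have hker : V₁ ≤ LinearMap.ker ((((1 : U →L[ℂ] U) - ∑ μ ∈ S', Q μ : U →L[ℂ] U) : U →ₗ[ℂ] U)) := by
      rw [hV₁]
      refine iSup_le fun ν => iSup_le fun hν => fun x hx => ?_
      have hνS : ν ∈ S' := hfin.mem_toFinset.mpr hν
      rw [LinearMap.mem_ker]
      simp only [ContinuousLinearMap.coe_coe, ContinuousLinearMap.sub_apply, ContinuousLinearMap.one_apply,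
        ContinuousLinearMap.sum_apply]
      rw [Finset.sum_eq_single_of_mem ν hνS fun μ _ hμν => hQ0 μ ν hμν.symm x hx,
        hQid ν x hx, sub_self]
    have h0 := hker hw
    rw [LinearMap.mem_ker] at h0
    simp only [ContinuousLinearMap.coe_coe, ContinuousLinearMap.sub_apply, ContinuousLinearMap.one_apply,
      ContinuousLinearMap.sum_apply] at h0
    exact (sub_eq_zero.mp h0)
  -- exponential on eigenspaces
  have hexpK : ∀ (μ : ℂ) (u : ℝ) (w : U), w ∈ K μ →
      NormedSpace.exp ((-u) • A) w = Complex.exp (((-u : ℝ) : ℂ) * μ) •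
        ∑ k ∈ Finset.range n, (((k.factorial : ℝ)⁻¹ * (-u) ^ k)) • (((A - μ • 1) ^ k) w) := by
    intro μ u w hw
    simp only [hKdef] at hw
    set B := A - μ • (1 : U →L[ℂ] U) with hB
    have hBw : ∀ k, n ≤ k → (B ^ k) w = 0 := by
      intro k hk
      have hw0 : (B ^ n) w = 0 := LinearMap.mem_ker.mp hw
      have hpow : B ^ k = B ^ (k - n) * B ^ n := by rw [← pow_add]; congr 1; omega
      rw [hpow, ContinuousLinearMap.mul_apply, hw0, map_zero]
    have hAsplit : (-u) • A = (-u : ℝ) • (μ • (1 : U →L[ℂ] U)) + (-u) • B := by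
      rw [hB, ← smul_add]
      congr 1
      abel
    have hcommute : Commute ((-u : ℝ) • (μ • (1 : U →L[ℂ] U))) ((-u) • B) :=
      (((Commute.one_left B).smul_left μ).smul_left (-u)).smul_right (-u)
    have hscal : NormedSpace.exp ((-u : ℝ) • (μ • (1 : U →L[ℂ] U)))
        = Complex.exp (((-u : ℝ) : ℂ) * μ) • (1 : U →L[ℂ] U) := by
      have h1 : ((-u : ℝ) • (μ • (1 : U →L[ℂ] U))) = algebraMap ℂ (U →L[ℂ] U) (((-u : ℝ) : ℂ) * μ) := by
        rw [Algebra.algebraMap_eq_smul_one, ← smul_smul, ← algebraMap_smul ℂ (-u) (μ • (1 : U →L[ℂ] U))]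
        norm_num
      rw [h1, ← NormedSpace.map_exp (algebraMap ℂ (U →L[ℂ] U)) (continuous_algebraMap _ _),
        ← Complex.exp_eq_exp_ℂ, Algebra.algebraMap_eq_smul_one]
    have hseries : NormedSpace.exp ((-u) • B) w
        = ∑ k ∈ Finset.range n, (((k.factorial : ℝ)⁻¹ * (-u) ^ k)) • ((B ^ k) w) := by
      have hsum : Summable (fun k : ℕ => ((k.factorial : ℝ)⁻¹) • ((-u) • B) ^ k) :=
        NormedSpace.expSeries_summable' ((-u) • B)
      have happly : NormedSpace.exp ((-u) • B) w
          = ∑' k : ℕ, ((((k.factorial : ℝ)⁻¹) • ((-u) • B) ^ k) w) := by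
        rw [NormedSpace.exp_eq_tsum ℝ]
        exact ((ContinuousLinearMap.apply ℂ U w).map_tsum hsum)
      rw [happly]
      have hterm : ∀ k : ℕ, ((((k.factorial : ℝ)⁻¹) • ((-u) • B) ^ k) w)
          = (((k.factorial : ℝ)⁻¹ * (-u) ^ k)) • ((B ^ k) w) := by
        intro k
        rw [smul_pow]
        simp [smul_smul]
      simp_rw [hterm]
      exact tsum_eq_sum (fun k hk => by
        rw [hBw k (le_of_not_gt (fun hlt => hk (Finset.mem_range.mpr hlt))), smul_zero])
    calc NormedSpace.exp ((-u) • A) w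
        = (NormedSpace.exp ((-u : ℝ) • (μ • (1 : U →L[ℂ] U))) * NormedSpace.exp ((-u) • B)) w := by
          rw [← NormedSpace.exp_add_of_commute hcommute, ← hAsplit]
      _ = Complex.exp (((-u : ℝ) : ℂ) * μ) • (NormedSpace.exp ((-u) • B) w) := by
          rw [hscal, smul_mul_assoc, one_mul, ContinuousLinearMap.smul_apply]
      _ = _ := by rw [hseries]
  obtain ⟨c, hc, hexpbound⟩ : ∃ c > (0:ℝ), ∀ u ≥ (0:ℝ), ∀ v : U,
      ‖NormedSpace.exp ((-u) • A) (E v)‖ ≤ c * (1 + u) ^ n * Real.exp (-(ρ₀ * u)) * ‖v‖ := by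
    refine ⟨1 + ∑ μ ∈ S', ∑ k ∈ Finset.range n,
      ‖((A - μ • (1 : U →L[ℂ] U)) ^ k).comp ((Q μ).comp E)‖, ?_, ?_⟩
    · have : (0:ℝ) ≤ ∑ μ ∈ S', ∑ k ∈ Finset.range n,
          ‖((A - μ • (1 : U →L[ℂ] U)) ^ k).comp ((Q μ).comp E)‖ :=
        Finset.sum_nonneg fun _ _ => Finset.sum_nonneg fun _ _ => norm_nonneg _
      linarith
    · intro u hu v
      have hEv : E v = ∑ μ ∈ S', Q μ (E v) := hdecomp (E v) (hEmem v)
      have hone : (1:ℝ) ≤ 1 + u := by linarith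
      have hterm : ∀ μ ∈ S', ‖NormedSpace.exp ((-u) • A) (Q μ (E v))‖ ≤
          (∑ k ∈ Finset.range n, ‖((A - μ • (1 : U →L[ℂ] U)) ^ k).comp ((Q μ).comp E)‖)
            * (1 + u) ^ n * Real.exp (-(ρ₀ * u)) * ‖v‖ := by
        intro μ hμ
        rw [hexpK μ u _ (hQmem μ (E v))]
        rw [norm_smul]
        have hnexp : ‖Complex.exp (((-u : ℝ) : ℂ) * μ)‖ ≤ Real.exp (-(ρ₀ * u)) := by
          rw [Complex.norm_exp]
          apply Real.exp_le_exp.mpr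
          have h1 : ((((-u : ℝ)) : ℂ) * μ).re = -u * μ.re := by
            simp [Complex.mul_re]
          rw [h1]
          have := hρ₀le μ hμ
          nlinarith
        have hnsum : ‖∑ k ∈ Finset.range n, (((k.factorial : ℝ)⁻¹ * (-u) ^ k)) •
            (((A - μ • 1) ^ k) (Q μ (E v)))‖ ≤
            (∑ k ∈ Finset.range n, ‖((A - μ • (1 : U →L[ℂ] U)) ^ k).comp ((Q μ).comp E)‖)
              * (1 + u) ^ n * ‖v‖ := by
          refine le_trans (norm_sum_le _ _) ?_
          rw [Finset.sum_mul, Finset.sum_mul]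
          refine Finset.sum_le_sum fun k hk => ?_
          rw [norm_smul]
          have habs : |(k.factorial : ℝ)⁻¹ * (-u) ^ k| ≤ (1 + u) ^ n := by
            rw [abs_mul, abs_pow, abs_neg, abs_of_nonneg hu,
              abs_of_nonneg (by positivity : (0:ℝ) ≤ ((k.factorial : ℝ))⁻¹)]
            have h2 : ((k.factorial : ℝ))⁻¹ ≤ 1 := by
              rw [inv_le_one_iff₀]
              right
              exact_mod_cast Nat.one_le_iff_ne_zero.mpr k.factorial_ne_zero
            have h3 : u ^ k ≤ (1 + u) ^ k := pow_le_pow_left₀ hu (by linarith) k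
            have h4 : (1 + u) ^ k ≤ (1 + u) ^ n :=
              pow_le_pow_right₀ hone (le_of_lt (Finset.mem_range.mp hk))
            nlinarith [pow_nonneg hu k, pow_nonneg (le_trans zero_le_one hone) k]
          have hcompn : ‖((A - μ • 1) ^ k) (Q μ (E v))‖ ≤
              ‖((A - μ • (1 : U →L[ℂ] U)) ^ k).comp ((Q μ).comp E)‖ * ‖v‖ := by
            have : ((A - μ • 1) ^ k) (Q μ (E v)) =
                (((A - μ • (1 : U →L[ℂ] U)) ^ k).comp ((Q μ).comp E)) v := rfl
            rw [this]
            exact ContinuousLinearMap.le_opNorm _ v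
          calc ‖(k.factorial : ℝ)⁻¹ * (-u) ^ k‖ * ‖((A - μ • 1) ^ k) (Q μ (E v))‖
              ≤ (1 + u) ^ n * (‖((A - μ • (1 : U →L[ℂ] U)) ^ k).comp ((Q μ).comp E)‖ * ‖v‖) := by
                apply mul_le_mul habs hcompn (norm_nonneg _) (by positivity)
            _ = ‖((A - μ • (1 : U →L[ℂ] U)) ^ k).comp ((Q μ).comp E)‖ * (1 + u) ^ n * ‖v‖ := by ring
        calc ‖Complex.exp (((-u : ℝ) : ℂ) * μ)‖ * ‖∑ k ∈ Finset.range n,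
            (((k.factorial : ℝ)⁻¹ * (-u) ^ k)) • (((A - μ • 1) ^ k) (Q μ (E v)))‖
            ≤ Real.exp (-(ρ₀ * u)) * ((∑ k ∈ Finset.range n,
              ‖((A - μ • (1 : U →L[ℂ] U)) ^ k).comp ((Q μ).comp E)‖) * (1 + u) ^ n * ‖v‖) :=
              mul_le_mul hnexp hnsum (norm_nonneg _) (Real.exp_pos _).le
          _ = (∑ k ∈ Finset.range n, ‖((A - μ • (1 : U →L[ℂ] U)) ^ k).comp ((Q μ).comp E)‖)
              * (1 + u) ^ n * Real.exp (-(ρ₀ * u)) * ‖v‖ := by ring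
      calc ‖NormedSpace.exp ((-u) • A) (E v)‖
          = ‖∑ μ ∈ S', NormedSpace.exp ((-u) • A) (Q μ (E v))‖ := by
            rw [← map_sum, ← hEv]
        _ ≤ ∑ μ ∈ S', ‖NormedSpace.exp ((-u) • A) (Q μ (E v))‖ := norm_sum_le _ _
        _ ≤ ∑ μ ∈ S', (∑ k ∈ Finset.range n,
            ‖((A - μ • (1 : U →L[ℂ] U)) ^ k).comp ((Q μ).comp E)‖)
              * (1 + u) ^ n * Real.exp (-(ρ₀ * u)) * ‖v‖ := Finset.sum_le_sum hterm
        _ = (∑ μ ∈ S', ∑ k ∈ Finset.range n,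
            ‖((A - μ • (1 : U →L[ℂ] U)) ^ k).comp ((Q μ).comp E)‖)
              * (1 + u) ^ n * Real.exp (-(ρ₀ * u)) * ‖v‖ := by
            rw [← Finset.sum_mul, ← Finset.sum_mul, ← Finset.sum_mul]
        _ ≤ (1 + ∑ μ ∈ S', ∑ k ∈ Finset.range n,
            ‖((A - μ • (1 : U →L[ℂ] U)) ^ k).comp ((Q μ).comp E)‖)
              * (1 + u) ^ n * Real.exp (-(ρ₀ * u)) * ‖v‖ := by
            have h1 : (0:ℝ) ≤ (1 + u) ^ n * Real.exp (-(ρ₀ * u)) * ‖v‖ := by positivity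
            nlinarith
  -- the function G and its derivative
  set G : ℝ → U := fun s => NormedSpace.exp ((-s) • A) (E (Φ s)) with hGdef
  have hG' : ∀ s ≥ (0:ℝ), HasDerivAt G (NormedSpace.exp ((-s) • A) (E (ψ s))) s := by
    intro s hs
    have h0 := hasDerivAt_exp_smul_const (𝕂 := ℝ) A (-s)
    have hneg : HasDerivAt (fun s : ℝ => -s) (-1) s := (hasDerivAt_id s).neg
    have h1 : HasDerivAt (fun s : ℝ => NormedSpace.exp ((-s) • A))
        (-(NormedSpace.exp ((-s) • A) * A)) s := by
      have h2 := h0.scomp s hneg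
      simpa [Function.comp_def] using h2
    have h1' : HasDerivAt (fun s : ℝ => (NormedSpace.exp ((-s) • A)).restrictScalars ℝ)
        ((-(NormedSpace.exp ((-s) • A) * A)).restrictScalars ℝ) s := by
      have h2 := ((ContinuousLinearMap.restrictScalarsL ℂ U U ℝ ℝ).hasFDerivAt).comp_hasDerivAt s h1
      simpa [Function.comp_def] using h2
    have h3 : HasDerivAt (fun s => E (Φ s)) (E (A (Φ s) + ψ s)) s := by
      have h5 := ((E.hasFDerivAt (x := Φ s)).restrictScalars ℝ).comp_hasDerivAt s (hΦ s hs)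
      simpa [Function.comp_def] using h5
    have h4 := h1'.clm_apply h3
    refine h4.congr_deriv ?_
    simp only [ContinuousLinearMap.coe_restrictScalars', ContinuousLinearMap.neg_apply,
      ContinuousLinearMap.mul_apply, map_add, hcomm (Φ s)]
    abel
  -- main identity
  have hmain : ∀ t ≥ (0:ℝ), ∀ T, t ≤ T →
      E (Φ t) = NormedSpace.exp ((-(T - t)) • A) (E (Φ T))
        - ∫ s in t..T, NormedSpace.exp ((-(s - t)) • A) (E (ψ s)) := by
    intro t ht T hT
    have hcomb : ∀ (s : ℝ) (x : U), NormedSpace.exp (t • A) (NormedSpace.exp ((-s) • A) x)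
        = NormedSpace.exp ((-(s - t)) • A) x := by
      intro s x
      rw [← ContinuousLinearMap.mul_apply,
        ← NormedSpace.exp_add_of_commute (((Commute.refl A).smul_left t).smul_right (-s))]
      congr 2
      rw [← add_smul]
      congr 1
      ring
    have hcont : ContinuousOn (fun s => NormedSpace.exp ((-s) • A) (E (ψ s)))
        (Set.uIcc t T) := by
      have hc1 : Continuous fun s : ℝ => NormedSpace.exp ((-s) • A) :=
        NormedSpace.exp_continuous.comp ((continuous_id.neg).smul continuous_const)
      have hc2 : ContinuousOn (fun s => E (ψ s)) (Set.uIcc t T) :=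
        E.continuous.comp_continuousOn (hψc.mono (by
          rw [Set.uIcc_of_le hT]
          intro s hs
          exact le_trans ht hs.1))
      exact hc1.continuousOn.clm_apply hc2
    have hFTC : ∫ s in t..T, NormedSpace.exp ((-s) • A) (E (ψ s)) = G T - G t := by
      apply intervalIntegral.integral_eq_sub_of_hasDerivAt
      · intro s hs
        rw [Set.uIcc_of_le hT] at hs
        exact hG' s (le_trans ht hs.1)
      · exact hcont.intervalIntegrable
    have hGt : NormedSpace.exp (t • A) (G t) = E (Φ t) := by
      have hunit : NormedSpace.exp (t • A) * NormedSpace.exp ((-t) • A) = 1 := by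
        rw [← NormedSpace.exp_add_of_commute (((Commute.refl A).smul_left t).smul_right (-t))]
        have : t • A + (-t) • A = (0:ℝ) • A := by rw [← add_smul]; norm_num
        rw [this, zero_smul, NormedSpace.exp_zero]
      calc NormedSpace.exp (t • A) (G t)
          = (NormedSpace.exp (t • A) * NormedSpace.exp ((-t) • A)) (E (Φ t)) := rfl
        _ = E (Φ t) := by rw [hunit, ContinuousLinearMap.one_apply]
    have hGt' : G t = G T - ∫ s in t..T, NormedSpace.exp ((-s) • A) (E (ψ s)) := by
      rw [hFTC]; abel
    calc E (Φ t) = NormedSpace.exp (t • A) (G t) := hGt.symm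
      _ = NormedSpace.exp (t • A) (G T)
          - NormedSpace.exp (t • A) (∫ s in t..T, NormedSpace.exp ((-s) • A) (E (ψ s))) := by
          rw [hGt', map_sub]
      _ = NormedSpace.exp ((-(T - t)) • A) (E (Φ T))
          - ∫ s in t..T, NormedSpace.exp ((-(s - t)) • A) (E (ψ s)) := by
          rw [hcomb T (E (Φ T))]
          congr 1
          rw [← (NormedSpace.exp (t • A)).intervalIntegral_comp_comm
            hcont.intervalIntegrable]
          exact intervalIntegral.integral_congr fun s _ => hcomb s (E (ψ s))
  -- constants
  set δ := ρ₀ - (ρ + β) with hδdef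
  have hδ : 0 < δ := by simp only [hδdef]; linarith
  obtain ⟨c₂, hc₂, hpoly⟩ := aux_poly_exp (n + N) (half_pos hδ)
  -- final bound per t
  have hfinal : ∀ t ≥ (0:ℝ),
      ‖E (Φ t)‖ ≤ (c * C * c₂ * (2 / δ)) * (1 + t) ^ N * Real.exp ((ρ + β) * t) := by
    intro t ht
    have hδ2 : 0 < δ / 2 := by linarith
    have hptw : ∀ s, t ≤ s → ‖NormedSpace.exp ((-(s - t)) • A) (E (ψ s))‖ ≤
        (c * C * c₂ * (1 + t) ^ N * Real.exp ((ρ + β) * t)) * Real.exp (-(δ / 2 * (s - t))) := by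
      intro s hs
      have hu : (0:ℝ) ≤ s - t := by linarith
      have h1 := hexpbound (s - t) hu (ψ s)
      have h2 := hψbound s (le_trans ht hs)
      have hexps : Real.exp (δ / 2 * (s - t)) * (Real.exp (-(ρ₀ * (s - t))) * Real.exp ((ρ + β) * s))
          = Real.exp ((ρ + β) * t) * Real.exp (-(δ / 2 * (s - t))) := by
        rw [← Real.exp_add, ← Real.exp_add, ← Real.exp_add]
        congr 1
        simp only [hδdef]
        ring
      calc ‖NormedSpace.exp ((-(s - t)) • A) (E (ψ s))‖
          ≤ c * (1 + (s - t)) ^ n * Real.exp (-(ρ₀ * (s - t))) * ‖ψ s‖ := h1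
        _ ≤ c * (1 + (s - t)) ^ n * Real.exp (-(ρ₀ * (s - t)))
            * (C * (1 + s) ^ N * Real.exp ((ρ + β) * s)) := by
            exact mul_le_mul_of_nonneg_left h2 (by positivity)
        _ ≤ c * (1 + (s - t)) ^ n * Real.exp (-(ρ₀ * (s - t)))
            * (C * ((1 + t) ^ N * (1 + (s - t)) ^ N) * Real.exp ((ρ + β) * s)) := by
            have hA1 : (1 + s) ^ N ≤ (1 + t) ^ N * (1 + (s - t)) ^ N := by
              rw [← mul_pow]
              apply pow_le_pow_left₀ (by linarith)
              nlinarith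
            gcongr
        _ = c * C * (1 + t) ^ N * ((1 + (s - t)) ^ (n + N))
            * (Real.exp (-(ρ₀ * (s - t))) * Real.exp ((ρ + β) * s)) := by
            rw [pow_add]; ring
        _ ≤ c * C * (1 + t) ^ N * (c₂ * Real.exp (δ / 2 * (s - t)))
            * (Real.exp (-(ρ₀ * (s - t))) * Real.exp ((ρ + β) * s)) := by
            have hA3 := hpoly (s - t) hu
            gcongr
        _ = (c * C * c₂ * (1 + t) ^ N * Real.exp ((ρ + β) * t)) * Real.exp (-(δ / 2 * (s - t))) := by
            rw [show c * C * (1 + t) ^ N * (c₂ * Real.exp (δ / 2 * (s - t)))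
                * (Real.exp (-(ρ₀ * (s - t))) * Real.exp ((ρ + β) * s))
                = c * C * c₂ * (1 + t) ^ N * (Real.exp (δ / 2 * (s - t))
                  * (Real.exp (-(ρ₀ * (s - t))) * Real.exp ((ρ + β) * s))) from by ring, hexps]
            ring
    have hTb : ∀ T, t ≤ T → ‖E (Φ t)‖ ≤ ‖NormedSpace.exp ((-(T - t)) • A) (E (Φ T))‖
        + (c * C * c₂ * (1 + t) ^ N * Real.exp ((ρ + β) * t)) * (2 / δ) := by
      intro T hT
      rw [hmain t ht T hT]
      refine le_trans (norm_sub_le _ _) (add_le_add_right ?_ _)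
      have hgint : IntervalIntegrable (fun s => (c * C * c₂ * (1 + t) ^ N
          * Real.exp ((ρ + β) * t)) * Real.exp (-(δ / 2 * (s - t)))) volume t T := by
        apply Continuous.intervalIntegrable
        exact continuous_const.mul (Real.continuous_exp.comp
          ((continuous_const.mul (continuous_id.sub continuous_const)).neg))
      have hae : ∀ᵐ s ∂(MeasureTheory.volume.restrict (Set.uIoc t T)),
          ‖NormedSpace.exp ((-(s - t)) • A) (E (ψ s))‖ ≤ (c * C * c₂ * (1 + t) ^ N
            * Real.exp ((ρ + β) * t)) * Real.exp (-(δ / 2 * (s - t))) := by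
        refine MeasureTheory.ae_restrict_of_forall_mem measurableSet_uIoc fun s hs => ?_
        rw [Set.uIoc_of_le hT] at hs
        exact hptw s (le_of_lt hs.1)
      refine le_trans (le_trans (intervalIntegral.norm_integral_le_of_norm_le hT
        (by rw [← ae_restrict_iff' measurableSet_Ioc, ← Set.uIoc_of_le hT]; exact hae) hgint)
        (le_abs_self _)) ?_
      have hint0 : (0:ℝ) ≤ ∫ s in t..T, (c * C * c₂ * (1 + t) ^ N
          * Real.exp ((ρ + β) * t)) * Real.exp (-(δ / 2 * (s - t))) := by
        apply intervalIntegral.integral_nonneg hT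
        intro s _
        positivity
      rw [abs_of_nonneg hint0, intervalIntegral.integral_const_mul]
      have hintle := aux_int_exp hδ2 hT
      have hKt : (0:ℝ) ≤ c * C * c₂ * (1 + t) ^ N * Real.exp ((ρ + β) * t) := by positivity
      calc (c * C * c₂ * (1 + t) ^ N * Real.exp ((ρ + β) * t))
            * ∫ s in t..T, Real.exp (-(δ / 2 * (s - t)))
          ≤ (c * C * c₂ * (1 + t) ^ N * Real.exp ((ρ + β) * t)) * (1 / (δ / 2)) :=
            mul_le_mul_of_nonneg_left hintle hKt
        _ = (c * C * c₂ * (1 + t) ^ N * Real.exp ((ρ + β) * t)) * (2 / δ) := by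
            rw [one_div_div]
    obtain ⟨c₃, hc₃, hpoly₃⟩ := aux_poly_exp (n + N) (show (0:ℝ) < (ρ₀ - ρ) / 2 by linarith)
    have hβ0 : Tendsto (fun T => ‖NormedSpace.exp ((-(T - t)) • A) (E (Φ T))‖) atTop (nhds 0) := by
      have hbnd : ∀ T, t ≤ T → ‖NormedSpace.exp ((-(T - t)) • A) (E (Φ T))‖ ≤
          (c * C * c₃ * Real.exp (ρ₀ * t)) * Real.exp (-((ρ₀ - ρ) / 2 * T)) := by
        intro T hT
        have hu : (0:ℝ) ≤ T - t := by linarith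
        have hT0 : (0:ℝ) ≤ T := le_trans ht hT
        have h1 := hexpbound (T - t) hu (Φ T)
        have h2 := hΦbound T hT0
        have hexps2 : Real.exp ((ρ₀ - ρ) / 2 * T) * (Real.exp (-(ρ₀ * (T - t))) * Real.exp (ρ * T))
            = Real.exp (ρ₀ * t) * Real.exp (-((ρ₀ - ρ) / 2 * T)) := by
          rw [← Real.exp_add, ← Real.exp_add, ← Real.exp_add]
          congr 1
          ring
        calc ‖NormedSpace.exp ((-(T - t)) • A) (E (Φ T))‖
            ≤ c * (1 + (T - t)) ^ n * Real.exp (-(ρ₀ * (T - t))) * ‖Φ T‖ := h1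
          _ ≤ c * (1 + (T - t)) ^ n * Real.exp (-(ρ₀ * (T - t)))
              * (C * (1 + T) ^ N * Real.exp (ρ * T)) := by
              exact mul_le_mul_of_nonneg_left h2 (by positivity)
          _ ≤ c * (1 + T) ^ n * Real.exp (-(ρ₀ * (T - t)))
              * (C * (1 + T) ^ N * Real.exp (ρ * T)) := by
              have : (1 + (T - t)) ^ n ≤ (1 + T) ^ n := by
                apply pow_le_pow_left₀ (by linarith)
                linarith
              gcongr
          _ = c * C * ((1 + T) ^ (n + N)) * (Real.exp (-(ρ₀ * (T - t))) * Real.exp (ρ * T)) := by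
              rw [pow_add]; ring
          _ ≤ c * C * (c₃ * Real.exp ((ρ₀ - ρ) / 2 * T))
              * (Real.exp (-(ρ₀ * (T - t))) * Real.exp (ρ * T)) := by
              have := hpoly₃ T hT0
              gcongr
          _ = (c * C * c₃ * Real.exp (ρ₀ * t)) * Real.exp (-((ρ₀ - ρ) / 2 * T)) := by
              rw [show c * C * (c₃ * Real.exp ((ρ₀ - ρ) / 2 * T))
                  * (Real.exp (-(ρ₀ * (T - t))) * Real.exp (ρ * T))
                  = c * C * c₃ * (Real.exp ((ρ₀ - ρ) / 2 * T)
                    * (Real.exp (-(ρ₀ * (T - t))) * Real.exp (ρ * T))) from by ring, hexps2]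
              ring
      have hlim : Tendsto (fun T : ℝ => (c * C * c₃ * Real.exp (ρ₀ * t))
          * Real.exp (-((ρ₀ - ρ) / 2 * T))) atTop (nhds 0) := by
        have h6 : Tendsto (fun T : ℝ => (ρ₀ - ρ) / 2 * T) atTop atTop :=
          Tendsto.const_mul_atTop (by linarith) tendsto_id
        have h7 := Real.tendsto_exp_neg_atTop_nhds_zero.comp h6
        have h8 := h7.const_mul (c * C * c₃ * Real.exp (ρ₀ * t))
        simpa [Function.comp_def] using h8
      exact squeeze_zero' (Filter.eventually_atTop.mpr ⟨t, fun T _ => norm_nonneg _⟩)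
        (Filter.eventually_atTop.mpr ⟨t, fun T hT => hbnd T hT⟩) hlim
    have hle : ‖E (Φ t)‖ - (c * C * c₂ * (1 + t) ^ N * Real.exp ((ρ + β) * t)) * (2 / δ) ≤ 0 := by
      apply ge_of_tendsto hβ0
      refine Filter.eventually_atTop.mpr ⟨t, fun T hT => ?_⟩
      have := hTb T hT
      linarith
    have h9 : (c * C * c₂ * (1 + t) ^ N * Real.exp ((ρ + β) * t)) * (2 / δ)
        = (c * C * c₂ * (2 / δ)) * (1 + t) ^ N * Real.exp ((ρ + β) * t) := by ring
    linarith
  refine ⟨max 1 (c * C * c₂ * (2 / δ)), lt_of_lt_of_le one_pos (le_max_left _ _), fun t ht => ?_⟩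
  have h1 := hfinal t ht
  have h2 : (1 + t) ^ N ≤ (1 + t) ^ (N + n + 1) :=
    pow_le_pow_right₀ (by linarith) (by omega)
  have hcoef : c * C * c₂ * (2 / δ) ≤ max 1 (c * C * c₂ * (2 / δ)) := le_max_right _ _
  have hmaxnn : (0:ℝ) ≤ max 1 (c * C * c₂ * (2 / δ)) := le_trans zero_le_one (le_max_left _ _)
  calc ‖E (Φ t)‖ ≤ (c * C * c₂ * (2 / δ)) * (1 + t) ^ N * Real.exp ((ρ + β) * t) := h1
    _ ≤ max 1 (c * C * c₂ * (2 / δ)) * (1 + t) ^ (N + n + 1) * Real.exp ((ρ + β) * t) := by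
        apply mul_le_mul_of_nonneg_right _ (Real.exp_pos _).le
        exact mul_le_mul hcoef h2 (by positivity) hmaxnn
end
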